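/- arXiv:0802.2438 — 9 statements merged into one kernel-verified Lean document; each statement's English description precedes it below -/
import Mathlib

section
/- Let n ≥ 2, let a₀,…,aₙ be nonzero complex numbers, bⱼ ∈ ℂ with bⱼ² = aⱼ, let z₀ := 1 and z₁,…,z_{n-1} ∈ ℂ. Let U₁,…,Uₙ ⊆ ℂ be open sets and let fₖ, gₖ : Uₖ → ℂ (k = 1,…,n−1) and h : Uₙ → ℂ be differentiable functions satisfying, for all t in their domains: fₖ(t)² = (z_{k-1} − zₖ)a₀ + (aₖ − z_{k-1}a₀)sin²(t); fₖ′(t)² + fₖ(t)²gₖ′(t)² = aₖ − (aₖ − z_{k-1}a₀)sin²(t); h′(t)² = aₙ − (aₙ − z_{n-1}a₀)sin²(t). Then the maps X and Y have the same first fundamental form: for every u ∈ U₁×⋯×Uₙ and all v, w ∈ ℂⁿ, ⟨DX(u)v, DX(u)w⟩ = ⟨DY(u)v, DY(u)w⟩, where DX(u), DY(u) denote the (ℂ-linear) Fréchet derivatives. -/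
noncomputable section

open Complex Finset

/-- Complex bilinear (non-Hermitian) dot product on ℂᵐ. -/
def cdot {m : ℕ} (x y : Fin m → ℂ) : ℂ := ∑ i, x i * y i

/-- `Cprod n k u = ∏_{j=k+1}^{n} cos(uʲ)` (zero-based: product of `cos (u j)` over `j ≥ k`). -/
def Cprod (n k : ℕ) (u : Fin n → ℂ) : ℂ :=
  ∏ j ∈ Finset.univ.filter (fun j : Fin n => k ≤ (j : ℕ)), Complex.cos (u j)

/-- Spherical-coordinate parametrization of the quadric `∑ xⱼ²/aⱼ = 1` (with `bⱼ² = aⱼ`). -/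
def sphX (n : ℕ) (b : Fin (n+1) → ℂ) (u : Fin n → ℂ) : Fin (n+1) → ℂ :=
  Fin.cons (b 0 * Cprod n 0 u)
    (fun k : Fin n => b k.succ * Cprod n (k.val + 1) u * Complex.sin (u k))

/-- With `n = m+1`, the map `Y : ℂⁿ → ℂ²ⁿ⁻¹`,
`Y(u) = ∑_{k=1}^{n-1} Cₖ(u) fₖ(uᵏ)(cos(gₖ(uᵏ)) e_{2k-2} + sin(gₖ(uᵏ)) e_{2k-1}) + h(uⁿ) e_{2n-2}`,
written in coordinates (zero-based indices: the k-th summand hits coordinates `2k`, `2k+1`). -/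
def petY (m : ℕ) (f g : Fin m → ℂ → ℂ) (h : ℂ → ℂ) (u : Fin (m+1) → ℂ) :
    Fin (2*m+1) → ℂ :=
  fun i =>
    (∑ k : Fin m,
      Cprod (m+1) (k.val + 1) u * f k (u k.castSucc) *
        ((if (i : ℕ) = 2*k.val then 1 else 0) * Complex.cos (g k (u k.castSucc)) +
         (if (i : ℕ) = 2*k.val + 1 then 1 else 0) * Complex.sin (g k (u k.castSucc))))
    + (if (i : ℕ) = 2*m then 1 else 0) * h (u (Fin.last m))

-- Auxiliary definitions and lemmas

def Sk (m k : ℕ) : Finset (Fin (m+1)) := Finset.univ.filter (fun j : Fin (m+1) => k ≤ (j : ℕ))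

def dC (m k : ℕ) (u v : Fin (m+1) → ℂ) : ℂ :=
  ∑ j ∈ Sk m k, (∏ j' ∈ (Sk m k).erase j, Complex.cos (u j')) * (-Complex.sin (u j) * v j)

def LC (m k : ℕ) (u : Fin (m+1) → ℂ) : (Fin (m+1) → ℂ) →L[ℂ] ℂ :=
  ∑ j ∈ Sk m k, (∏ j' ∈ (Sk m k).erase j, Complex.cos (u j')) •
    ((-Complex.sin (u j)) • ContinuousLinearMap.proj j)

lemma Cprod_eq (m k : ℕ) (u : Fin (m+1) → ℂ) :
    Cprod (m+1) k u = ∏ j ∈ Sk m k, Complex.cos (u j) := rfl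

lemma LC_apply (m k : ℕ) (u v : Fin (m+1) → ℂ) : (LC m k u) v = dC m k u v := by
  simp [LC, dC, ContinuousLinearMap.sum_apply, smul_eq_mul]

lemma hasFDerivAt_cos_eval (m : ℕ) (u : Fin (m+1) → ℂ) (j : Fin (m+1)) :
    HasFDerivAt (fun x : Fin (m+1) → ℂ => Complex.cos (x j))
      ((-Complex.sin (u j)) • (ContinuousLinearMap.proj j : (Fin (m+1) → ℂ) →L[ℂ] ℂ)) u :=
  (Complex.hasDerivAt_cos (u j)).comp_hasFDerivAt (f := fun x : Fin (m+1) → ℂ => x j) u (hasFDerivAt_apply j u)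

lemma hasFDerivAt_Cprod (m k : ℕ) (u : Fin (m+1) → ℂ) :
    HasFDerivAt (fun x => Cprod (m+1) k x) (LC m k u) u :=
  HasFDerivAt.finset_prod (u := Sk m k)
    (g := fun (j : Fin (m+1)) (x : Fin (m+1) → ℂ) => Complex.cos (x j))
    (g' := fun j => (-Complex.sin (u j)) • ContinuousLinearMap.proj j)
    (x := u) (fun j _ => hasFDerivAt_cos_eval m u j)

lemma Sk_insert (m k : ℕ) (hk : k < m + 1) :
    Sk m k = insert ⟨k, hk⟩ (Sk m (k+1)) := by
  ext j; simp [Sk, Fin.ext_iff]; omega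

lemma not_mem_Sk (m k : ℕ) (hk : k < m + 1) : (⟨k, hk⟩ : Fin (m+1)) ∉ Sk m (k+1) := by
  simp [Sk]

lemma Cprod_succ (m k : ℕ) (u : Fin (m+1) → ℂ) (hk : k < m + 1) :
    Cprod (m+1) k u = Complex.cos (u ⟨k, hk⟩) * Cprod (m+1) (k+1) u := by
  rw [Cprod_eq, Cprod_eq, Sk_insert m k hk, Finset.prod_insert (not_mem_Sk m k hk)]

lemma Sk_top (m : ℕ) : Sk m (m+1) = ∅ := by ext j; simp [Sk]; omega

lemma Cprod_top (m : ℕ) (u : Fin (m+1) → ℂ) : Cprod (m+1) (m+1) u = 1 := by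
  rw [Cprod_eq, Sk_top, Finset.prod_empty]

lemma dC_top (m : ℕ) (u v : Fin (m+1) → ℂ) : dC m (m+1) u v = 0 := by
  rw [dC, Sk_top, Finset.sum_empty]

lemma dC_rec (m k : ℕ) (u v : Fin (m+1) → ℂ) (hk : k < m + 1) :
    dC m k u v = Complex.cos (u ⟨k, hk⟩) * dC m (k+1) u v
      - Complex.sin (u ⟨k, hk⟩) * v ⟨k, hk⟩ * Cprod (m+1) (k+1) u := by
  rw [dC, Sk_insert m k hk, Finset.sum_insert (not_mem_Sk m k hk),
    Finset.erase_insert (not_mem_Sk m k hk), ← Cprod_eq]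
  have h2 : ∀ j ∈ Sk m (k+1),
      (∏ j' ∈ (insert (⟨k, hk⟩ : Fin (m+1)) (Sk m (k+1))).erase j, Complex.cos (u j')) *
        (-Complex.sin (u j) * v j)
      = Complex.cos (u ⟨k, hk⟩) *
        ((∏ j' ∈ (Sk m (k+1)).erase j, Complex.cos (u j')) * (-Complex.sin (u j) * v j)) := by
    intro j hj
    have hne : (⟨k, hk⟩ : Fin (m+1)) ≠ j := fun he => not_mem_Sk m k hk (he ▸ hj)
    rw [Finset.erase_insert_of_ne hne,
      Finset.prod_insert (fun hmem => not_mem_Sk m k hk (Finset.mem_of_mem_erase hmem)), mul_assoc]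
  rw [Finset.sum_congr rfl h2, ← Finset.mul_sum, ← dC]
  ring

section FDerivLemmas
variable {m : ℕ}

lemma hasFDerivAt_eval_comp (u : Fin (m+1) → ℂ) (p : Fin (m+1)) {φ : ℂ → ℂ} {φ' : ℂ}
    (hφ : HasDerivAt φ φ' (u p)) :
    HasFDerivAt (fun x : Fin (m+1) → ℂ => φ (x p))
      (φ' • (ContinuousLinearMap.proj p : (Fin (m+1) → ℂ) →L[ℂ] ℂ)) u :=
  hφ.comp_hasFDerivAt u (hasFDerivAt_apply p u)

lemma hasFDerivAt_CP (K : ℕ) (u : Fin (m+1) → ℂ) (p : Fin (m+1)) {φ : ℂ → ℂ} {φ' : ℂ}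
    (hφ : HasDerivAt φ φ' (u p)) :
    HasFDerivAt (fun x => Cprod (m+1) K x * φ (x p))
      (Cprod (m+1) K u • (φ' • (ContinuousLinearMap.proj p : (Fin (m+1) → ℂ) →L[ℂ] ℂ))
        + φ (u p) • LC m K u) u :=
  (hasFDerivAt_Cprod m K u).mul (hasFDerivAt_eval_comp u p hφ)

lemma fderiv_CP (K : ℕ) (u v : Fin (m+1) → ℂ) (p : Fin (m+1)) {φ : ℂ → ℂ} {φ' : ℂ}
    (hφ : HasDerivAt φ φ' (u p)) :
    fderiv ℂ (fun x => Cprod (m+1) K x * φ (x p)) u v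
      = Cprod (m+1) K u * (φ' * v p) + φ (u p) * dC m K u v := by
  rw [(hasFDerivAt_CP K u p hφ).fderiv]
  simp [LC_apply, smul_eq_mul]

lemma diffAt_CP (K : ℕ) (u : Fin (m+1) → ℂ) (p : Fin (m+1)) {φ : ℂ → ℂ} {φ' : ℂ}
    (hφ : HasDerivAt φ φ' (u p)) :
    DifferentiableAt ℂ (fun x => Cprod (m+1) K x * φ (x p)) u :=
  (hasFDerivAt_CP K u p hφ).differentiableAt

lemma hasDerivAt_FcosG {F G : ℂ → ℂ} {t : ℂ} (hF : DifferentiableAt ℂ F t)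
    (hG : DifferentiableAt ℂ G t) :
    HasDerivAt (fun s => F s * Complex.cos (G s))
      (deriv F t * Complex.cos (G t) + F t * (-Complex.sin (G t) * deriv G t)) t :=
  hF.hasDerivAt.mul (hG.hasDerivAt.ccos)

lemma hasDerivAt_FsinG {F G : ℂ → ℂ} {t : ℂ} (hF : DifferentiableAt ℂ F t)
    (hG : DifferentiableAt ℂ G t) :
    HasDerivAt (fun s => F s * Complex.sin (G s))
      (deriv F t * Complex.sin (G t) + F t * (Complex.cos (G t) * deriv G t)) t :=
  hF.hasDerivAt.mul (hG.hasDerivAt.csin)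

lemma fderiv_eval_comp (u v : Fin (m+1) → ℂ) (p : Fin (m+1)) {φ : ℂ → ℂ}
    (hφ : DifferentiableAt ℂ φ (u p)) :
    fderiv ℂ (fun x : Fin (m+1) → ℂ => φ (x p)) u v = deriv φ (u p) * v p := by
  rw [(hasFDerivAt_eval_comp u p hφ.hasDerivAt).fderiv]
  simp [smul_eq_mul]

lemma fderiv_bC0 (bc : ℂ) (u r : Fin (m+1) → ℂ) :
    fderiv ℂ (fun x => bc * Cprod (m+1) 0 x) u r = bc * dC m 0 u r := by
  rw [((hasFDerivAt_Cprod m 0 u).const_mul bc).fderiv]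
  simp [LC_apply, smul_eq_mul]

lemma fderiv_bCP (bc : ℂ) (K : ℕ) (u v : Fin (m+1) → ℂ) (p : Fin (m+1)) {φ : ℂ → ℂ} {φ' : ℂ}
    (hφ : HasDerivAt φ φ' (u p)) :
    fderiv ℂ (fun x => bc * Cprod (m+1) K x * φ (x p)) u v
      = bc * (Cprod (m+1) K u * (φ' * v p) + φ (u p) * dC m K u v) := by
  have h1 : HasFDerivAt (fun x => bc * Cprod (m+1) K x * φ (x p))
      (bc • (Cprod (m+1) K u • (φ' • (ContinuousLinearMap.proj p : (Fin (m+1) → ℂ) →L[ℂ] ℂ))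
        + φ (u p) • LC m K u)) u := by
    simpa [mul_assoc] using (hasFDerivAt_CP K u p hφ).const_mul bc
  rw [h1.fderiv]
  simp [LC_apply, smul_eq_mul]; ring

lemma diffAt_bCP (bc : ℂ) (K : ℕ) (u : Fin (m+1) → ℂ) (p : Fin (m+1)) {φ : ℂ → ℂ} {φ' : ℂ}
    (hφ : HasDerivAt φ φ' (u p)) :
    DifferentiableAt ℂ (fun x => bc * Cprod (m+1) K x * φ (x p)) u := by
  have := (diffAt_CP K u p hφ).const_mul bc
  simpa [mul_assoc] using this

end FDerivLemmas

/-- the coordinates of `petY`, as a function of a natural-number index. -/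
def petQ (m : ℕ) (f g : Fin m → ℂ → ℂ) (h : ℂ → ℂ) (i : ℕ) (u : Fin (m+1) → ℂ) : ℂ :=
  (∑ k : Fin m,
    Cprod (m+1) (k.val + 1) u * f k (u k.castSucc) *
      ((if i = 2*k.val then 1 else 0) * Complex.cos (g k (u k.castSucc)) +
       (if i = 2*k.val + 1 then 1 else 0) * Complex.sin (g k (u k.castSucc))))
  + (if i = 2*m then 1 else 0) * h (u (Fin.last m))

lemma petY_eq_petQ (m : ℕ) (f g : Fin m → ℂ → ℂ) (h : ℂ → ℂ) (i : Fin (2*m+1)) :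
    (fun x => petY m f g h x i) = petQ m f g h (i : ℕ) := rfl

lemma petQ_even (m : ℕ) (f g : Fin m → ℂ → ℂ) (h : ℂ → ℂ) (k : Fin m) :
    petQ m f g h (2*(k:ℕ))
      = fun x => Cprod (m+1) (k.val + 1) x *
          (f k (x k.castSucc) * Complex.cos (g k (x k.castSucc))) := by
  funext x
  simp only [petQ]
  rw [Finset.sum_eq_single k]
  · rw [if_pos rfl, if_neg (by omega), if_neg (by have := k.isLt; omega)]
    ring
  · intro k' _ hne
    have hvne : k'.val ≠ k.val := fun hh => hne (Fin.ext hh)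
    rw [if_neg (by omega), if_neg (by omega)]
    ring
  · intro hmem; exact absurd (Finset.mem_univ k) hmem

lemma petQ_odd (m : ℕ) (f g : Fin m → ℂ → ℂ) (h : ℂ → ℂ) (k : Fin m) :
    petQ m f g h (2*(k:ℕ)+1)
      = fun x => Cprod (m+1) (k.val + 1) x *
          (f k (x k.castSucc) * Complex.sin (g k (x k.castSucc))) := by
  funext x
  simp only [petQ]
  rw [Finset.sum_eq_single k]
  · rw [if_pos rfl, if_neg (by omega), if_neg (by have := k.isLt; omega)]
    ring
  · intro k' _ hne
    have hvne : k'.val ≠ k.val := fun hh => hne (Fin.ext hh)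
    rw [if_neg (by omega), if_neg (by omega)]
    ring
  · intro hmem; exact absurd (Finset.mem_univ k) hmem

lemma petQ_last (m : ℕ) (f g : Fin m → ℂ → ℂ) (h : ℂ → ℂ) :
    petQ m f g h (2*m) = fun x => h (x (Fin.last m)) := by
  funext x
  simp only [petQ]
  rw [Finset.sum_eq_zero]
  · simp
  · intro k _
    rw [if_neg (by have := k.isLt; omega), if_neg (by have := k.isLt; omega)]
    ring

lemma fin_tricho (m : ℕ) (i : Fin (2*m+1)) :
    (∃ k : Fin m, (i:ℕ) = 2*(k:ℕ)) ∨ (∃ k : Fin m, (i:ℕ) = 2*(k:ℕ)+1) ∨ (i:ℕ) = 2*m := by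
  have hi := i.isLt
  rcases Nat.even_or_odd (i:ℕ) with ⟨k, hk⟩ | ⟨k, hk⟩
  · by_cases hkm : k < m
    · exact Or.inl ⟨⟨k, hkm⟩, show (i:ℕ) = 2*k by omega⟩
    · exact Or.inr (Or.inr (by omega))
  · exact Or.inr (Or.inl ⟨⟨k, by omega⟩, show (i:ℕ) = 2*k+1 by omega⟩)

lemma sum_range_even_odd (M : ℕ) (F : ℕ → ℂ) :
    ∑ i ∈ Finset.range (2*M), F i = ∑ k ∈ Finset.range M, (F (2*k) + F (2*k+1)) := by
  induction M with
  | zero => simp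
  | succ M ih =>
    have h2 : 2*(M+1) = (2*M+1)+1 := by ring
    rw [h2, Finset.sum_range_succ, Finset.sum_range_succ, ih, Finset.sum_range_succ]
    ring

/-- the `k`-th term of the first fundamental form of `X` -/
def XT (m : ℕ) (b : Fin (m+2) → ℂ) (u r : Fin (m+1) → ℂ) (k : Fin (m+1)) : ℂ :=
  b k.succ * (Cprod (m+1) (k.val+1) u * (Complex.cos (u k) * r k)
    + Complex.sin (u k) * dC m (k.val+1) u r)

/-- the telescoping term -/
def Tel (m : ℕ) (Z : Fin (m+1) → ℂ) (a0 : ℂ) (u v w : Fin (m+1) → ℂ) (k : ℕ) : ℂ :=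
  (if hk : k < m+1 then Z ⟨k, hk⟩ else 0) * a0 * (dC m k u v * dC m k u w)

lemma keyalg (C dv dw vk wk F F' G' cg sg s ct A B zk zk' a0 : ℂ)
    (hF2 : F^2 = (zk - zk')*a0 + (A - zk*a0)*s^2)
    (hFF : F*F' = (A - zk*a0)*(s*ct))
    (hG : F'^2 + F^2*G'^2 = A - (A - zk*a0)*s^2)
    (hB : B^2 = A) (hsc : s^2 + ct^2 = 1) (hsg : sg^2 + cg^2 = 1) :
    (C*((F'*cg + F*(-sg*G'))*vk) + F*cg*dv) * (C*((F'*cg + F*(-sg*G'))*wk) + F*cg*dw)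
    + ((C*((F'*sg + F*(cg*G'))*vk) + F*sg*dv) * (C*((F'*sg + F*(cg*G'))*wk) + F*sg*dw))
    = (B*(C*(ct*vk) + s*dv)) * (B*(C*(ct*wk) + s*dw))
      + (zk*a0*((ct*dv - s*vk*C)*(ct*dw - s*wk*C)) - zk'*a0*(dv*dw)) := by
  linear_combination (dv*dw)*hF2 + C*(dv*wk + dw*vk)*hFF + C^2*(vk*wk)*hG
    + (F^2*(dv*dw) + C*(F*F')*(dv*wk + dw*vk) + C^2*(F'^2 + F^2*G'^2)*(vk*wk))*hsg
    + (-(zk*a0*(dv*dw) + A*C^2*(vk*wk)))*hsc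
    + (-((s*dv + C*ct*vk)*(s*dw + C*ct*wk)))*hB

lemma keyalg2 (h' vl wl B2 A2 zm a0 s ct : ℂ)
    (hh : h'^2 = A2 - (A2 - zm*a0)*s^2) (hB : B2^2 = A2) (hsc : s^2 + ct^2 = 1) :
    (h'*vl)*(h'*wl) = (B2*(ct*vl))*(B2*(ct*wl)) + (zm*a0*((s*vl)*(s*wl)) - 0) := by
  linear_combination (vl*wl)*hh + (-(A2*vl*wl))*hsc + (-(ct^2*vl*wl))*hB
/-- Peterson's `(n-1)`-parameter family of deformations of the
`n`-dimensional quadric (here `n = m+1 ≥ 2`): `X` and `Y = X_𝐳` have the same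
first fundamental form. `Z = (z₀, z₁, …, z_{n-1})` with `z₀ = 1`. -/
theorem stmt0 (m : ℕ) (hm : 1 ≤ m)
    (a b : Fin (m+2) → ℂ) (ha : ∀ j, a j ≠ 0) (hb : ∀ j, (b j)^2 = a j)
    (z : Fin m → ℂ)
    (U : Fin (m+1) → Set ℂ) (hU : ∀ k, IsOpen (U k))
    (f g : Fin m → ℂ → ℂ) (h : ℂ → ℂ)
    (hf : ∀ k : Fin m, DifferentiableOn ℂ (f k) (U k.castSucc))
    (hg : ∀ k : Fin m, DifferentiableOn ℂ (g k) (U k.castSucc))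
    (hh : DifferentiableOn ℂ h (U (Fin.last m)))
    (Z : Fin (m+1) → ℂ) (hZ0 : Z 0 = 1) (hZs : ∀ k : Fin m, Z k.succ = z k)
    (heqf : ∀ k : Fin m, ∀ t ∈ U k.castSucc,
      (f k t)^2 = (Z k.castSucc - Z k.succ) * a 0
        + (a ⟨k.val + 1, by omega⟩ - Z k.castSucc * a 0) * (Complex.sin t)^2)
    (heqg : ∀ k : Fin m, ∀ t ∈ U k.castSucc,
      (deriv (f k) t)^2 + (f k t)^2 * (deriv (g k) t)^2
        = a ⟨k.val + 1, by omega⟩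
          - (a ⟨k.val + 1, by omega⟩ - Z k.castSucc * a 0) * (Complex.sin t)^2)
    (heqh : ∀ t ∈ U (Fin.last m),
      (deriv h t)^2 = a (Fin.last (m+1))
        - (a (Fin.last (m+1)) - Z (Fin.last m) * a 0) * (Complex.sin t)^2) :
    ∀ u : Fin (m+1) → ℂ, (∀ k, u k ∈ U k) →
      ∀ v w : Fin (m+1) → ℂ,
        cdot (fderiv ℂ (sphX (m+1) b) u v) (fderiv ℂ (sphX (m+1) b) u w)
          = cdot (fderiv ℂ (petY m f g h) u v) (fderiv ℂ (petY m f g h) u w) := by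
  intro u hu v w
  have hfd : ∀ k : Fin m, DifferentiableAt ℂ (f k) (u k.castSucc) := fun k =>
    (hf k).differentiableAt ((hU k.castSucc).mem_nhds (hu k.castSucc))
  have hgd : ∀ k : Fin m, DifferentiableAt ℂ (g k) (u k.castSucc) := fun k =>
    (hg k).differentiableAt ((hU k.castSucc).mem_nhds (hu k.castSucc))
  have hhd : DifferentiableAt ℂ h (u (Fin.last m)) :=
    hh.differentiableAt ((hU (Fin.last m)).mem_nhds (hu (Fin.last m)))
  -- X coordinate functions
  have hXfun0 : (fun x => sphX (m+1) b x 0) = fun x => b 0 * Cprod (m+1) 0 x := by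
    funext x; simp [sphX]
  have hXfunS : ∀ k : Fin (m+1), (fun x => sphX (m+1) b x k.succ)
      = fun x => b k.succ * Cprod (m+1) (k.val+1) x * Complex.sin (x k) := by
    intro k; funext x; simp [sphX]
  have hXd : ∀ i : Fin (m+2), DifferentiableAt ℂ (fun x => sphX (m+1) b x i) u := by
    intro i
    refine Fin.cases ?_ ?_ i
    · rw [hXfun0]
      exact ((hasFDerivAt_Cprod m 0 u).const_mul (b 0)).differentiableAt
    · intro k
      rw [hXfunS k]
      exact diffAt_bCP (b k.succ) (k.val+1) u k (Complex.hasDerivAt_sin (u k))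
  have hXapp : ∀ r : Fin (m+1) → ℂ, ∀ i : Fin (m+2),
      fderiv ℂ (sphX (m+1) b) u r i = fderiv ℂ (fun x => sphX (m+1) b x i) u r := by
    intro r i
    rw [show fderiv ℂ (sphX (m+1) b) u
        = ContinuousLinearMap.pi (fun i => fderiv ℂ (fun x => sphX (m+1) b x i) u)
        from fderiv_pi hXd, ContinuousLinearMap.pi_apply]
  -- Y coordinates
  have hYd : ∀ i : Fin (2*m+1), DifferentiableAt ℂ (fun x => petY m f g h x i) u := by
    intro i
    rw [petY_eq_petQ]
    rcases fin_tricho m i with ⟨k, hk⟩ | ⟨k, hk⟩ | hk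
    · rw [hk, petQ_even]
      exact diffAt_CP (k.val+1) u k.castSucc (hasDerivAt_FcosG (hfd k) (hgd k))
    · rw [hk, petQ_odd]
      exact diffAt_CP (k.val+1) u k.castSucc (hasDerivAt_FsinG (hfd k) (hgd k))
    · rw [hk, petQ_last]
      exact (hasFDerivAt_eval_comp u (Fin.last m) hhd.hasDerivAt).differentiableAt
  have hYapp : ∀ r : Fin (m+1) → ℂ, ∀ i : Fin (2*m+1),
      fderiv ℂ (petY m f g h) u r i = fderiv ℂ (petQ m f g h (i:ℕ)) u r := by
    intro r i
    rw [show fderiv ℂ (petY m f g h) u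
        = ContinuousLinearMap.pi (fun i => fderiv ℂ (fun x => petY m f g h x i) u)
        from fderiv_pi hYd, ContinuousLinearMap.pi_apply, petY_eq_petQ]
  -- coordinate derivative values
  have hX0v : ∀ r, fderiv ℂ (fun x => sphX (m+1) b x 0) u r = b 0 * dC m 0 u r := by
    intro r; rw [hXfun0]; exact fderiv_bC0 (b 0) u r
  have hXSv : ∀ r, ∀ k : Fin (m+1),
      fderiv ℂ (fun x => sphX (m+1) b x k.succ) u r = XT m b u r k := by
    intro r k; rw [hXfunS k]
    exact fderiv_bCP (b k.succ) (k.val+1) u r k (Complex.hasDerivAt_sin (u k))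
  have hEV : ∀ r, ∀ k : Fin m, fderiv ℂ (petQ m f g h (2*(k:ℕ))) u r
      = Cprod (m+1) (k.val+1) u *
          ((deriv (f k) (u k.castSucc) * Complex.cos (g k (u k.castSucc))
            + f k (u k.castSucc) * (-Complex.sin (g k (u k.castSucc)) * deriv (g k) (u k.castSucc)))
           * r k.castSucc)
        + f k (u k.castSucc) * Complex.cos (g k (u k.castSucc)) * dC m (k.val+1) u r := by
    intro r k
    rw [petQ_even m f g h k]
    exact fderiv_CP (k.val+1) u r k.castSucc (hasDerivAt_FcosG (hfd k) (hgd k))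
  have hOV : ∀ r, ∀ k : Fin m, fderiv ℂ (petQ m f g h (2*(k:ℕ)+1)) u r
      = Cprod (m+1) (k.val+1) u *
          ((deriv (f k) (u k.castSucc) * Complex.sin (g k (u k.castSucc))
            + f k (u k.castSucc) * (Complex.cos (g k (u k.castSucc)) * deriv (g k) (u k.castSucc)))
           * r k.castSucc)
        + f k (u k.castSucc) * Complex.sin (g k (u k.castSucc)) * dC m (k.val+1) u r := by
    intro r k
    rw [petQ_odd m f g h k]
    exact fderiv_CP (k.val+1) u r k.castSucc (hasDerivAt_FsinG (hfd k) (hgd k))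
  have hLV : ∀ r, fderiv ℂ (petQ m f g h (2*m)) u r
      = deriv h (u (Fin.last m)) * r (Fin.last m) := by
    intro r; rw [petQ_last]
    exact fderiv_eval_comp u r (Fin.last m) hhd
  -- X side total
  have hX : ∑ i : Fin (m+2), fderiv ℂ (sphX (m+1) b) u v i * fderiv ℂ (sphX (m+1) b) u w i
      = (b 0 * dC m 0 u v) * (b 0 * dC m 0 u w)
        + ∑ k : Fin (m+1), XT m b u v k * XT m b u w k := by
    rw [Fin.sum_univ_succ]
    congr 1
    · rw [hXapp v 0, hXapp w 0, hX0v v, hX0v w]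
    · exact Finset.sum_congr rfl fun k _ => by
        rw [hXapp v k.succ, hXapp w k.succ, hXSv v k, hXSv w k]
  -- Y side to range sum
  set FN : ℕ → ℂ := fun j => fderiv ℂ (petQ m f g h j) u v * fderiv ℂ (petQ m f g h j) u w
    with hFN
  have hY : ∑ i : Fin (2*m+1), fderiv ℂ (petY m f g h) u v i * fderiv ℂ (petY m f g h) u w i
      = ∑ i ∈ Finset.range (2*m+1), FN i := by
    rw [← Fin.sum_univ_eq_sum_range FN (2*m+1)]
    exact Finset.sum_congr rfl fun i _ => by
      rw [hYapp v i, hYapp w i, hFN]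
  -- per-index identities
  have hterm : ∀ k : Fin m, FN (2*(k:ℕ)) + FN (2*(k:ℕ)+1)
      = XT m b u v k.castSucc * XT m b u w k.castSucc
        + (Tel m Z (a 0) u v w (k:ℕ) - Tel m Z (a 0) u v w ((k:ℕ)+1)) := by
    intro k
    have hkm1 : ((k:ℕ)) < m+1 := by omega
    have hkm2 : ((k:ℕ))+1 < m+1 := by omega
    have hmk : (⟨(k:ℕ), hkm1⟩ : Fin (m+1)) = k.castSucc := by
      apply Fin.ext; simp
    have hmk2 : (⟨(k:ℕ)+1, hkm2⟩ : Fin (m+1)) = k.succ := by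
      apply Fin.ext; simp
    have hB' : b k.castSucc.succ ^ 2 = a ⟨(k:ℕ)+1, by omega⟩ := by
      rw [hb]; congr 1
    have hff' : f k (u k.castSucc) * deriv (f k) (u k.castSucc)
        = (a ⟨(k:ℕ)+1, by omega⟩ - Z k.castSucc * a 0)
          * (Complex.sin (u k.castSucc) * Complex.cos (u k.castSucc)) := by
      have h1 : HasDerivAt (fun t => (f k t)^2)
          ((2:ℂ) * f k (u k.castSucc) ^ 1 * deriv (f k) (u k.castSucc)) (u k.castSucc) :=
        (hfd k).hasDerivAt.pow 2
      have h2 : HasDerivAt (fun t => (Z k.castSucc - Z k.succ) * a 0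
            + (a ⟨(k:ℕ)+1, by omega⟩ - Z k.castSucc * a 0) * Complex.sin t ^ 2)
          ((a ⟨(k:ℕ)+1, by omega⟩ - Z k.castSucc * a 0)
            * ((2:ℂ) * Complex.sin (u k.castSucc) ^ 1 * Complex.cos (u k.castSucc)))
          (u k.castSucc) :=
        HasDerivAt.const_add _
          (HasDerivAt.const_mul _ ((Complex.hasDerivAt_sin (u k.castSucc)).pow 2))
      have h3 : (fun t => (f k t)^2) =ᶠ[nhds (u k.castSucc)]
          (fun t => (Z k.castSucc - Z k.succ) * a 0
            + (a ⟨(k:ℕ)+1, by omega⟩ - Z k.castSucc * a 0) * Complex.sin t ^ 2) :=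
        Filter.eventuallyEq_of_mem ((hU k.castSucc).mem_nhds (hu k.castSucc)) (heqf k)
      have h4 := (h1.congr_of_eventuallyEq h3.symm).unique h2
      linear_combination h4 / 2
    have hTk : Tel m Z (a 0) u v w (k:ℕ)
        = Z k.castSucc * a 0 * (dC m (k:ℕ) u v * dC m (k:ℕ) u w) := by
      rw [Tel, dif_pos hkm1, hmk]
    have hTk1 : Tel m Z (a 0) u v w ((k:ℕ)+1)
        = Z k.succ * a 0 * (dC m ((k:ℕ)+1) u v * dC m ((k:ℕ)+1) u w) := by
      rw [Tel, dif_pos hkm2, hmk2]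
    rw [hFN]
    simp only []
    rw [hEV v k, hEV w k, hOV v k, hOV w k, hTk, hTk1,
      dC_rec m (k:ℕ) u v hkm1, dC_rec m (k:ℕ) u w hkm1, hmk]
    simp only [XT, Fin.coe_castSucc]
    linear_combination keyalg (Cprod (m+1) ((k:ℕ)+1) u) (dC m ((k:ℕ)+1) u v) (dC m ((k:ℕ)+1) u w)
      (v k.castSucc) (w k.castSucc) (f k (u k.castSucc)) (deriv (f k) (u k.castSucc))
      (deriv (g k) (u k.castSucc)) (Complex.cos (g k (u k.castSucc)))
      (Complex.sin (g k (u k.castSucc))) (Complex.sin (u k.castSucc)) (Complex.cos (u k.castSucc))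
      (a ⟨(k:ℕ)+1, by omega⟩) (b k.castSucc.succ) (Z k.castSucc) (Z k.succ) (a 0)
      (heqf k (u k.castSucc) (hu k.castSucc)) hff' (heqg k (u k.castSucc) (hu k.castSucc))
      hB' (Complex.sin_sq_add_cos_sq (u k.castSucc)) (Complex.sin_sq_add_cos_sq (g k (u k.castSucc)))
  have hlast : FN (2*m)
      = XT m b u v (Fin.last m) * XT m b u w (Fin.last m)
        + (Tel m Z (a 0) u v w m - Tel m Z (a 0) u v w (m+1)) := by
    have hBL : b (Fin.last m).succ ^ 2 = a (Fin.last (m+1)) := by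
      rw [hb, Fin.succ_last]
    have hmm : m < m + 1 := by omega
    have hml : (⟨m, hmm⟩ : Fin (m+1)) = Fin.last m := rfl
    have hTm : Tel m Z (a 0) u v w m
        = Z (Fin.last m) * a 0 * ((- (Complex.sin (u (Fin.last m)) * v (Fin.last m)))
            * (- (Complex.sin (u (Fin.last m)) * w (Fin.last m)))) := by
      rw [Tel, dif_pos hmm, hml, dC_rec m m u v hmm, dC_rec m m u w hmm, hml,
        dC_top m u v, dC_top m u w, Cprod_top]
      ring
    have hTm1 : Tel m Z (a 0) u v w (m+1) = 0 := by
      rw [Tel, dC_top]; ring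
    rw [hFN]
    simp only []
    rw [hLV v, hLV w, hTm, hTm1]
    simp only [XT, Fin.val_last]
    rw [Cprod_top, dC_top, dC_top]
    linear_combination keyalg2 (deriv h (u (Fin.last m))) (v (Fin.last m)) (w (Fin.last m))
      (b (Fin.last m).succ) (a (Fin.last (m+1))) (Z (Fin.last m)) (a 0)
      (Complex.sin (u (Fin.last m))) (Complex.cos (u (Fin.last m)))
      (heqh (u (Fin.last m)) (hu (Fin.last m))) hBL (Complex.sin_sq_add_cos_sq (u (Fin.last m)))
  -- assemble Y side
  have hYtotal : ∑ i ∈ Finset.range (2*m+1), FN i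
      = (∑ k : Fin m, (XT m b u v k.castSucc * XT m b u w k.castSucc
          + (Tel m Z (a 0) u v w (k:ℕ) - Tel m Z (a 0) u v w ((k:ℕ)+1))))
        + (XT m b u v (Fin.last m) * XT m b u w (Fin.last m)
          + (Tel m Z (a 0) u v w m - Tel m Z (a 0) u v w (m+1))) := by
    rw [Finset.sum_range_succ, sum_range_even_odd m FN]
    exact congrArg₂ (· + ·)
      ((Fin.sum_univ_eq_sum_range (fun k => FN (2*k) + FN (2*k+1)) m).symm.trans
        (Finset.sum_congr rfl fun k _ => hterm k)) hlast
  have htel : ∑ k : Fin m, (Tel m Z (a 0) u v w (k:ℕ) - Tel m Z (a 0) u v w ((k:ℕ)+1))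
      = Tel m Z (a 0) u v w 0 - Tel m Z (a 0) u v w m :=
    (Fin.sum_univ_eq_sum_range
        (fun j => Tel m Z (a 0) u v w j - Tel m Z (a 0) u v w (j+1)) m).trans
      (Finset.sum_range_sub' (fun j => Tel m Z (a 0) u v w j) m)
  have hTel0 : Tel m Z (a 0) u v w 0 = (b 0 * dC m 0 u v) * (b 0 * dC m 0 u w) := by
    rw [Tel, dif_pos (by omega : 0 < m+1), Fin.mk_zero, hZ0]
    linear_combination (-(dC m 0 u v * dC m 0 u w)) * hb 0
  have hTm1 : Tel m Z (a 0) u v w (m+1) = 0 := by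
    rw [Tel, dC_top]; ring
  unfold cdot
  rw [hX, hY, hYtotal, Finset.sum_add_distrib, htel, hTel0, hTm1, Fin.sum_univ_castSucc
    (f := fun k : Fin (m+1) => XT m b u v k * XT m b u w k)]
  ring
end
end

section
/- Let a₀, a₁, a₂ be nonzero complex numbers, bⱼ ∈ ℂ with bⱼ² = aⱼ, and z ∈ ℂ. Let U₁, U₂ ⊆ ℂ be open and let f, g : U₁ → ℂ and h : U₂ → ℂ be differentiable with f(t)² = (1−z)a₀ + (a₁−a₀)sin²(t), f′(t)² + f(t)²g′(t)² = a₁ − (a₁−a₀)sin²(t) for t ∈ U₁, and h′(t)² = a₂ − (a₂ − z a₀)sin²(t) for t ∈ U₂. Define X : ℂ² → ℂ³ by X(u¹,u²) := (b₀cos(u²)cos(u¹), b₁cos(u²)sin(u¹), b₂sin(u²)) and Y : U₁×U₂ → ℂ³ by Y(u¹,u²) := (cos(u²)f(u¹)cos(g(u¹)), cos(u²)f(u¹)sin(g(u¹)), h(u²)). Then X and Y have the same first fundamental form: for every u ∈ U₁×U₂ and all v, w ∈ ℂ², ⟨DX(u)v, DX(u)w⟩ = ⟨DY(u)v, DY(u)w⟩.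 -/
noncomputable section

open Complex Finset

/-- A linear map `(Fin 2 → ℂ) → ℂ` given by coefficients. -/
noncomputable def lin2 (a b : ℂ) : (Fin 2 → ℂ) →L[ℂ] ℂ :=
  a • ContinuousLinearMap.proj 0 + b • ContinuousLinearMap.proj 1

@[simp] lemma lin2_apply (a b : ℂ) (v : Fin 2 → ℂ) : lin2 a b v = a * v 0 + b * v 1 := by
  simp [lin2, smul_eq_mul]

lemma hasFDerivAt_sep {A B : ℂ → ℂ} {a' b' : ℂ} {x : Fin 2 → ℂ}
    (hA : HasDerivAt A a' (x 0)) (hB : HasDerivAt B b' (x 1)) :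
    HasFDerivAt (fun u : Fin 2 → ℂ => A (u 0) * B (u 1))
      (lin2 (a' * B (x 1)) (A (x 0) * b')) x := by
  have h0 : HasFDerivAt (fun u : Fin 2 → ℂ => u 0)
      (ContinuousLinearMap.proj (R := ℂ) (φ := fun _ : Fin 2 => ℂ) 0) x :=
    (ContinuousLinearMap.proj (R := ℂ) (φ := fun _ : Fin 2 => ℂ) (0 : Fin 2)).hasFDerivAt
  have h1 : HasFDerivAt (fun u : Fin 2 → ℂ => u 1)
      (ContinuousLinearMap.proj (R := ℂ) (φ := fun _ : Fin 2 => ℂ) 1) x :=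
    (ContinuousLinearMap.proj (R := ℂ) (φ := fun _ : Fin 2 => ℂ) (1 : Fin 2)).hasFDerivAt
  have hm := (hA.comp_hasFDerivAt x h0).fun_mul (hB.comp_hasFDerivAt x h1)
  refine hm.congr_fderiv ?_
  ext v
  simp [lin2, smul_eq_mul]
  ring

/-- Peterson's one-parameter family of deformations of the 2-dimensional
quadric `∑_{j=0}^{2} xⱼ²/aⱼ = 1`: `X` and `Y` have the same first fundamental form. -/
theorem stmt1 (a₀ a₁ a₂ b₀ b₁ b₂ : ℂ) (ha₀ : a₀ ≠ 0) (ha₁ : a₁ ≠ 0) (ha₂ : a₂ ≠ 0)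
    (hb₀ : b₀^2 = a₀) (hb₁ : b₁^2 = a₁) (hb₂ : b₂^2 = a₂) (z : ℂ)
    (U₁ U₂ : Set ℂ) (hU₁ : IsOpen U₁) (hU₂ : IsOpen U₂)
    (f g h : ℂ → ℂ)
    (hf : DifferentiableOn ℂ f U₁) (hg : DifferentiableOn ℂ g U₁)
    (hh : DifferentiableOn ℂ h U₂)
    (heqf : ∀ t ∈ U₁, (f t)^2 = (1 - z) * a₀ + (a₁ - a₀) * (Complex.sin t)^2)
    (heqg : ∀ t ∈ U₁, (deriv f t)^2 + (f t)^2 * (deriv g t)^2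
      = a₁ - (a₁ - a₀) * (Complex.sin t)^2)
    (heqh : ∀ t ∈ U₂, (deriv h t)^2 = a₂ - (a₂ - z * a₀) * (Complex.sin t)^2)
    (X Y : (Fin 2 → ℂ) → (Fin 3 → ℂ))
    (hX : X = fun u => ![b₀ * Complex.cos (u 1) * Complex.cos (u 0),
      b₁ * Complex.cos (u 1) * Complex.sin (u 0), b₂ * Complex.sin (u 1)])
    (hY : Y = fun u => ![Complex.cos (u 1) * f (u 0) * Complex.cos (g (u 0)),
      Complex.cos (u 1) * f (u 0) * Complex.sin (g (u 0)), h (u 1)]) :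
    ∀ u : Fin 2 → ℂ, u 0 ∈ U₁ → u 1 ∈ U₂ →
      ∀ v w : Fin 2 → ℂ,
        cdot (fderiv ℂ X u v) (fderiv ℂ X u w) = cdot (fderiv ℂ Y u v) (fderiv ℂ Y u w) := by
  intro u hu0 hu1 v w
  subst hX hY
  have hfd : HasDerivAt f (deriv f (u 0)) (u 0) :=
    (hf.differentiableAt (hU₁.mem_nhds hu0)).hasDerivAt
  have hgd : HasDerivAt g (deriv g (u 0)) (u 0) :=
    (hg.differentiableAt (hU₁.mem_nhds hu0)).hasDerivAt
  have hhd : HasDerivAt h (deriv h (u 1)) (u 1) :=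
    (hh.differentiableAt (hU₂.mem_nhds hu1)).hasDerivAt
  -- key identity: f f' = (a₁ - a₀) sin cos
  have hff : f (u 0) * deriv f (u 0) = (a₁ - a₀) * Complex.sin (u 0) * Complex.cos (u 0) := by
    have hde : deriv (fun s => (f s)^2) (u 0)
        = deriv (fun s => (1 - z) * a₀ + (a₁ - a₀) * (Complex.sin s)^2) (u 0) := by
      apply Filter.EventuallyEq.deriv_eq
      filter_upwards [hU₁.mem_nhds hu0] with s hs using heqf s hs
    have h1 : deriv (fun s => (f s)^2) (u 0)
        = 2 * f (u 0) * deriv f (u 0) := by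
      have := (hfd.fun_pow 2).deriv
      simpa using this
    have h2 : deriv (fun s => (1 - z) * a₀ + (a₁ - a₀) * (Complex.sin s)^2) (u 0)
        = (a₁ - a₀) * (2 * Complex.sin (u 0) * Complex.cos (u 0)) := by
      have hs : HasDerivAt (fun s => (1 - z) * a₀ + (a₁ - a₀) * (Complex.sin s)^2)
          ((a₁ - a₀) * (2 * Complex.sin (u 0) ^ 1 * Complex.cos (u 0))) (u 0) :=
        (((Complex.hasDerivAt_sin (u 0)).pow 2).const_mul (a₁ - a₀)).const_add _
      simpa using hs.deriv
    rw [h1, h2] at hde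
    linear_combination hde / 2
  -- derivatives of components of X
  have hX0 : HasFDerivAt (fun u : Fin 2 → ℂ => (b₀ * Complex.cos (u 0)) * Complex.cos (u 1))
      (lin2 ((b₀ * (-Complex.sin (u 0))) * Complex.cos (u 1))
        ((b₀ * Complex.cos (u 0)) * (-Complex.sin (u 1)))) u :=
    hasFDerivAt_sep ((Complex.hasDerivAt_cos (u 0)).const_mul b₀) (Complex.hasDerivAt_cos (u 1))
  have hX1 : HasFDerivAt (fun u : Fin 2 → ℂ => (b₁ * Complex.sin (u 0)) * Complex.cos (u 1))
      (lin2 ((b₁ * Complex.cos (u 0)) * Complex.cos (u 1))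
        ((b₁ * Complex.sin (u 0)) * (-Complex.sin (u 1)))) u :=
    hasFDerivAt_sep ((Complex.hasDerivAt_sin (u 0)).const_mul b₁) (Complex.hasDerivAt_cos (u 1))
  have hX2 : HasFDerivAt (fun u : Fin 2 → ℂ => (1 : ℂ) * (b₂ * Complex.sin (u 1)))
      (lin2 (0 * (b₂ * Complex.sin (u 1))) (1 * (b₂ * Complex.cos (u 1)))) u :=
    hasFDerivAt_sep (hasDerivAt_const (u 0) 1) ((Complex.hasDerivAt_sin (u 1)).const_mul b₂)
  -- derivatives of components of Y
  have hA0 : HasDerivAt (fun t => f t * Complex.cos (g t))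
      (deriv f (u 0) * Complex.cos (g (u 0))
        + f (u 0) * (-Complex.sin (g (u 0)) * deriv g (u 0))) (u 0) :=
    hfd.mul ((Complex.hasDerivAt_cos (g (u 0))).comp (u 0) hgd)
  have hA1 : HasDerivAt (fun t => f t * Complex.sin (g t))
      (deriv f (u 0) * Complex.sin (g (u 0))
        + f (u 0) * (Complex.cos (g (u 0)) * deriv g (u 0))) (u 0) :=
    hfd.mul ((Complex.hasDerivAt_sin (g (u 0))).comp (u 0) hgd)
  have hY0 : HasFDerivAt (fun u : Fin 2 → ℂ => (f (u 0) * Complex.cos (g (u 0))) * Complex.cos (u 1))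
      (lin2 ((deriv f (u 0) * Complex.cos (g (u 0))
          + f (u 0) * (-Complex.sin (g (u 0)) * deriv g (u 0))) * Complex.cos (u 1))
        ((f (u 0) * Complex.cos (g (u 0))) * (-Complex.sin (u 1)))) u :=
    hasFDerivAt_sep hA0 (Complex.hasDerivAt_cos (u 1))
  have hY1 : HasFDerivAt (fun u : Fin 2 → ℂ => (f (u 0) * Complex.sin (g (u 0))) * Complex.cos (u 1))
      (lin2 ((deriv f (u 0) * Complex.sin (g (u 0))
          + f (u 0) * (Complex.cos (g (u 0)) * deriv g (u 0))) * Complex.cos (u 1))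
        ((f (u 0) * Complex.sin (g (u 0))) * (-Complex.sin (u 1)))) u :=
    hasFDerivAt_sep hA1 (Complex.hasDerivAt_cos (u 1))
  have hY2 : HasFDerivAt (fun u : Fin 2 → ℂ => (1 : ℂ) * h (u 1))
      (lin2 (0 * h (u 1)) (1 * deriv h (u 1))) u :=
    hasFDerivAt_sep (hasDerivAt_const (u 0) 1) hhd
  -- assemble full derivatives
  have hXF : HasFDerivAt (fun u : Fin 2 → ℂ =>
      (![b₀ * Complex.cos (u 1) * Complex.cos (u 0),
        b₁ * Complex.cos (u 1) * Complex.sin (u 0), b₂ * Complex.sin (u 1)] : Fin 3 → ℂ))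
      (ContinuousLinearMap.pi
        ![lin2 ((b₀ * (-Complex.sin (u 0))) * Complex.cos (u 1))
            ((b₀ * Complex.cos (u 0)) * (-Complex.sin (u 1))),
          lin2 ((b₁ * Complex.cos (u 0)) * Complex.cos (u 1))
            ((b₁ * Complex.sin (u 0)) * (-Complex.sin (u 1))),
          lin2 (0 * (b₂ * Complex.sin (u 1))) (1 * (b₂ * Complex.cos (u 1)))]) u := by
    apply hasFDerivAt_pi''
    intro i
    fin_cases i <;> simp only [ContinuousLinearMap.proj_pi, Matrix.cons_val_zero,
      Matrix.cons_val_one, Matrix.head_cons, Matrix.cons_val_fin_one, Fin.isValue,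
      Fin.zero_eta, Fin.mk_one, Matrix.cons_val_two, Matrix.tail_cons, Fin.reduceFinMk]
    · have : (fun u : Fin 2 → ℂ => b₀ * Complex.cos (u 1) * Complex.cos (u 0))
          = fun u : Fin 2 → ℂ => (b₀ * Complex.cos (u 0)) * Complex.cos (u 1) := by
        funext x; ring
      rw [this]; exact hX0
    · have : (fun u : Fin 2 → ℂ => b₁ * Complex.cos (u 1) * Complex.sin (u 0))
          = fun u : Fin 2 → ℂ => (b₁ * Complex.sin (u 0)) * Complex.cos (u 1) := by
        funext x; ring
      rw [this]; exact hX1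
    · have : (fun u : Fin 2 → ℂ => b₂ * Complex.sin (u 1))
          = fun u : Fin 2 → ℂ => (1 : ℂ) * (b₂ * Complex.sin (u 1)) := by
        funext x; ring
      rw [this]; exact hX2
  have hYF : HasFDerivAt (fun u : Fin 2 → ℂ =>
      (![Complex.cos (u 1) * f (u 0) * Complex.cos (g (u 0)),
        Complex.cos (u 1) * f (u 0) * Complex.sin (g (u 0)), h (u 1)] : Fin 3 → ℂ))
      (ContinuousLinearMap.pi
        ![lin2 ((deriv f (u 0) * Complex.cos (g (u 0))
              + f (u 0) * (-Complex.sin (g (u 0)) * deriv g (u 0))) * Complex.cos (u 1))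
            ((f (u 0) * Complex.cos (g (u 0))) * (-Complex.sin (u 1))),
          lin2 ((deriv f (u 0) * Complex.sin (g (u 0))
              + f (u 0) * (Complex.cos (g (u 0)) * deriv g (u 0))) * Complex.cos (u 1))
            ((f (u 0) * Complex.sin (g (u 0))) * (-Complex.sin (u 1))),
          lin2 (0 * h (u 1)) (1 * deriv h (u 1))]) u := by
    apply hasFDerivAt_pi''
    intro i
    fin_cases i <;> simp only [ContinuousLinearMap.proj_pi, Matrix.cons_val_zero,
      Matrix.cons_val_one, Matrix.head_cons, Matrix.cons_val_fin_one, Fin.isValue,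
      Fin.zero_eta, Fin.mk_one, Matrix.cons_val_two, Matrix.tail_cons, Fin.reduceFinMk]
    · have : (fun u : Fin 2 → ℂ => Complex.cos (u 1) * f (u 0) * Complex.cos (g (u 0)))
          = fun u : Fin 2 → ℂ => (f (u 0) * Complex.cos (g (u 0))) * Complex.cos (u 1) := by
        funext x; ring
      rw [this]; exact hY0
    · have : (fun u : Fin 2 → ℂ => Complex.cos (u 1) * f (u 0) * Complex.sin (g (u 0)))
          = fun u : Fin 2 → ℂ => (f (u 0) * Complex.sin (g (u 0))) * Complex.cos (u 1) := by
        funext x; ring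
      rw [this]; exact hY1
    · have : (fun u : Fin 2 → ℂ => h (u 1))
          = fun u : Fin 2 → ℂ => (1 : ℂ) * h (u 1) := by
        funext x; ring
      rw [this]; exact hY2
  rw [hXF.fderiv, hYF.fderiv]
  simp only [cdot, Fin.sum_univ_three, ContinuousLinearMap.pi_apply, Matrix.cons_val_zero,
    Matrix.cons_val_one, Matrix.head_cons, lin2_apply, Fin.isValue, Matrix.cons_val_two,
    Matrix.tail_cons]
  have P0 := Complex.sin_sq_add_cos_sq (u 0)
  have P1 := Complex.sin_sq_add_cos_sq (u 1)
  have Pg := Complex.sin_sq_add_cos_sq (g (u 0))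
  have Hf := heqf (u 0) hu0
  have Hg := heqg (u 0) hu0
  have Hh := heqh (u 1) hu1
  set s0 := Complex.sin (u 0)
  set c0 := Complex.cos (u 0)
  set s1 := Complex.sin (u 1)
  set c1 := Complex.cos (u 1)
  set sg := Complex.sin (g (u 0))
  set cg := Complex.cos (g (u 0))
  linear_combination
    (c1^2 * s0^2 * (v 0 * w 0) + s0*c0*s1*c1 * (v 0 * w 1 + v 1 * w 0)
      + c0^2 * s1^2 * (v 1 * w 1)) * hb₀
    + (c1^2 * c0^2 * (v 0 * w 0) - s0*c0*s1*c1 * (v 0 * w 1 + v 1 * w 0)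
      + s0^2 * s1^2 * (v 1 * w 1)) * hb₁
    + (c1^2 * (v 1 * w 1)) * hb₂
    + (-(c1^2) * ((deriv f (u 0))^2 + (f (u 0))^2 * (deriv g (u 0))^2) * (v 0 * w 0)
      + c1*s1*(f (u 0) * deriv f (u 0)) * (v 0 * w 1 + v 1 * w 0)
      - (f (u 0))^2 * s1^2 * (v 1 * w 1)) * Pg
    + (-(c1^2) * (v 0 * w 0)) * Hg
    + (c1 * s1 * (v 0 * w 1 + v 1 * w 0)) * hff
    + (-(s1^2) * (v 1 * w 1)) * Hf
    + (-(v 1 * w 1)) * Hh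
    + (a₁ * c1^2 * (v 0 * w 0) + a₀ * s1^2 * (v 1 * w 1)) * P0
    + (a₂ * (v 1 * w 1)) * P1
end
end

section
/- Let a₀, a₁ be nonzero complex numbers and b₀, b₁ ∈ ℂ with b₀² = a₀, b₁² = a₁. Let U ⊆ ℂ be an open connected set containing 0 and let f, g : U → ℂ be differentiable with f nonvanishing, f(t)² = a₀cos²(t) + a₁sin²(t), f(t)²g′(t) = b₀b₁ for all t ∈ U, and f(0) = b₀, g(0) = 0. Then for all t ∈ U: f(t)cos(g(t)) = b₀cos(t) and f(t)sin(g(t)) = b₁sin(t). -/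
noncomputable section

open Complex

/-- A holomorphic function with zero derivative on an open connected set containing `0`
is constant there. -/
lemma const_of_hasDerivAt_zero (U : Set ℂ) (hU : IsOpen U) (hconn : IsConnected U)
    (h0U : (0 : ℂ) ∈ U) (φ : ℂ → ℂ) (hφ : ∀ t ∈ U, HasDerivAt φ 0 t) :
    ∀ t ∈ U, φ t = φ 0 := by
  have hdiff : DifferentiableOn ℂ φ U := fun t ht =>
    ((hφ t ht).differentiableAt).differentiableWithinAt
  have han : AnalyticOnNhd ℂ φ U := hdiff.analyticOnNhd hU
  obtain ⟨ε, hε, hball⟩ := Metric.isOpen_iff.1 hU 0 h0U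
  have hloc : ∀ x ∈ Metric.ball (0:ℂ) ε, φ x = φ 0 := by
    intro x hx
    have hconv : Convex ℝ (Metric.ball (0:ℂ) ε) := convex_ball 0 ε
    refine hconv.is_const_of_fderivWithin_eq_zero
      (fun y hy => ((hφ y (hball hy)).differentiableAt).differentiableWithinAt)
      (fun y hy => ?_) hx (Metric.mem_ball_self hε)
    rw [fderivWithin_of_isOpen Metric.isOpen_ball hy]
    refine ContinuousLinearMap.ext fun z => ?_
    rw [ContinuousLinearMap.zero_apply, fderiv_eq_smul_deriv, (hφ y (hball hy)).deriv,
      smul_zero]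
  have hev : φ =ᶠ[nhds (0:ℂ)] (fun _ => φ 0) := by
    filter_upwards [Metric.ball_mem_nhds (0:ℂ) hε] with x hx using hloc x hx
  intro t ht
  exact han.eqOn_of_preconnected_of_eventuallyEq analyticOnNhd_const
    hconn.isPreconnected h0U hev ht

/-- Uniqueness for the linear ODE `y' = q y` on an open connected set containing `0`. -/
lemma ode_unique (U : Set ℂ) (hU : IsOpen U) (hconn : IsConnected U)
    (h0U : (0 : ℂ) ∈ U) (q u w : ℂ → ℂ)
    (hu : ∀ t ∈ U, HasDerivAt u (q t * u t) t)
    (hw : ∀ t ∈ U, HasDerivAt w (q t * w t) t)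
    (hune : ∀ t ∈ U, u t ≠ 0) (h0 : w 0 = u 0) :
    ∀ t ∈ U, w t = u t := by
  have hφ : ∀ t ∈ U, HasDerivAt (fun s => w s / u s) 0 t := by
    intro t ht
    have h : HasDerivAt (fun s => w s / u s)
        ((q t * w t * u t - w t * (q t * u t)) / u t ^ 2) t := (hw t ht).fun_div (hu t ht) (hune t ht)
    convert h using 1
    rw [eq_comm, div_eq_zero_iff]
    left; ring
  have hc := const_of_hasDerivAt_zero U hU hconn h0U _ hφ
  intro t ht
  have h1 : w t / u t = w 0 / u 0 := hc t ht
  rw [h0, div_self (hune 0 h0U)] at h1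
  exact (div_eq_one_iff_eq (hune t ht)).mp h1

/-- the `z = 0` specialization identity in Peterson's family:
`(f cos g, f sin g)` recovers the spherical-coordinate parametrization `(b₀ cos, b₁ sin)`
of the ellipse `x₀²/a₀ + x₁²/a₁ = 1`. -/
theorem stmt3 (a₀ a₁ b₀ b₁ : ℂ) (ha₀ : a₀ ≠ 0) (ha₁ : a₁ ≠ 0)
    (hb₀ : b₀^2 = a₀) (hb₁ : b₁^2 = a₁)
    (U : Set ℂ) (hU : IsOpen U) (hconn : IsConnected U) (h0U : (0 : ℂ) ∈ U)
    (f g : ℂ → ℂ) (hf : DifferentiableOn ℂ f U) (hg : DifferentiableOn ℂ g U)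
    (hfne : ∀ t ∈ U, f t ≠ 0)
    (heqf : ∀ t ∈ U, (f t)^2 = a₀ * (Complex.cos t)^2 + a₁ * (Complex.sin t)^2)
    (heqg : ∀ t ∈ U, (f t)^2 * deriv g t = b₀ * b₁)
    (hf0 : f 0 = b₀) (hg0 : g 0 = 0) :
    ∀ t ∈ U, f t * Complex.cos (g t) = b₀ * Complex.cos t ∧
      f t * Complex.sin (g t) = b₁ * Complex.sin t := by
  subst hb₀
  subst hb₁
  -- derivatives of f and g at points of U
  have hfd : ∀ t ∈ U, HasDerivAt f (deriv f t) t := fun t ht =>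
    ((hf t ht).differentiableAt (hU.mem_nhds ht)).hasDerivAt
  have hgd : ∀ t ∈ U, HasDerivAt g (deriv g t) t := fun t ht =>
    ((hg t ht).differentiableAt (hU.mem_nhds ht)).hasDerivAt
  -- the identity f f' = (b₁² - b₀²) sin cos
  have hff' : ∀ t ∈ U, f t * deriv f t =
      (b₁^2 - b₀^2) * Complex.sin t * Complex.cos t := by
    intro t ht
    have h1 : HasDerivAt (fun s => (f s)^2) (2 * f t * deriv f t) t := by
      have := (hfd t ht).fun_pow 2
      simpa using this
    have h2 : HasDerivAt (fun s => b₀^2 * (Complex.cos s)^2 + b₁^2 * (Complex.sin s)^2)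
        (b₀^2 * (2 * Complex.cos t * (-Complex.sin t)) +
         b₁^2 * (2 * Complex.sin t * Complex.cos t)) t := by
      have hc := ((Complex.hasDerivAt_cos t).pow 2).const_mul (b₀^2)
      have hs := ((Complex.hasDerivAt_sin t).pow 2).const_mul (b₁^2)
      simpa [mul_comm, mul_assoc, mul_left_comm] using hc.fun_add hs
    have h3 : HasDerivAt (fun s => (f s)^2)
        (b₀^2 * (2 * Complex.cos t * (-Complex.sin t)) +
         b₁^2 * (2 * Complex.sin t * Complex.cos t)) t := by
      refine h2.congr_of_eventuallyEq ?_
      filter_upwards [hU.mem_nhds ht] with s hs using heqf s hs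
    have h4 := h1.unique h3
    linear_combination h4 / 2
  -- the two ODE coefficient functions
  set q₁ : ℂ → ℂ := fun t => (f t * deriv f t + I * (b₀ * b₁)) / (f t)^2 with hq₁
  set q₂ : ℂ → ℂ := fun t => (f t * deriv f t - I * (b₀ * b₁)) / (f t)^2 with hq₂
  -- solutions
  set u : ℂ → ℂ := fun t => f t * Complex.exp (g t * I) with hud
  set v : ℂ → ℂ := fun t => f t * Complex.exp (-g t * I) with hvd
  set u₀ : ℂ → ℂ := fun t => b₀ * Complex.cos t + b₁ * Complex.sin t * I with hu₀d
  set v₀ : ℂ → ℂ := fun t => b₀ * Complex.cos t - b₁ * Complex.sin t * I with hv₀d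
  have hune : ∀ t ∈ U, u t ≠ 0 := fun t ht =>
    mul_ne_zero (hfne t ht) (Complex.exp_ne_zero _)
  have hvne : ∀ t ∈ U, v t ≠ 0 := fun t ht =>
    mul_ne_zero (hfne t ht) (Complex.exp_ne_zero _)
  have hu : ∀ t ∈ U, HasDerivAt u (q₁ t * u t) t := by
    intro t ht
    have he : HasDerivAt (fun s => Complex.exp (g s * I))
        (Complex.exp (g t * I) * (deriv g t * I)) t := ((hgd t ht).mul_const I).cexp
    have h : HasDerivAt (fun s => f s * Complex.exp (g s * I))
        (deriv f t * Complex.exp (g t * I) + f t * (Complex.exp (g t * I) * (deriv g t * I))) t :=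
      (hfd t ht).fun_mul he
    convert h using 1
    simp only [hq₁, hud]
    rw [div_mul_eq_mul_div, div_eq_iff (pow_ne_zero 2 (hfne t ht))]
    linear_combination (-(f t * Complex.exp (g t * I) * I)) * heqg t ht
  have hv : ∀ t ∈ U, HasDerivAt v (q₂ t * v t) t := by
    intro t ht
    have he : HasDerivAt (fun s => Complex.exp (-g s * I))
        (Complex.exp (-g t * I) * (-deriv g t * I)) t :=
      (((hgd t ht).neg).mul_const I).cexp
    have h : HasDerivAt (fun s => f s * Complex.exp (-g s * I))
        (deriv f t * Complex.exp (-g t * I) + f t * (Complex.exp (-g t * I) * (-deriv g t * I))) t :=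
      (hfd t ht).fun_mul he
    convert h using 1
    simp only [hq₂, hvd]
    rw [div_mul_eq_mul_div, div_eq_iff (pow_ne_zero 2 (hfne t ht))]
    linear_combination (f t * Complex.exp (-g t * I) * I) * heqg t ht
  have hu₀ : ∀ t ∈ U, HasDerivAt u₀ (q₁ t * u₀ t) t := by
    intro t ht
    have hc := (Complex.hasDerivAt_cos t).const_mul b₀
    have hs := ((Complex.hasDerivAt_sin t).const_mul b₁).mul_const I
    have h1 : HasDerivAt u₀ (b₀ * (-Complex.sin t) + b₁ * Complex.cos t * I) t :=
      hc.add hs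
    convert h1 using 1
    simp only [hq₁, hu₀d]
    rw [div_mul_eq_mul_div, div_eq_iff (pow_ne_zero 2 (hfne t ht))]
    linear_combination (b₀ * Complex.cos t + b₁ * Complex.sin t * I) * hff' t ht
      + (b₀ * Complex.sin t - b₁ * Complex.cos t * I) * heqf t ht
      + (b₀ * b₁^2 * Complex.sin t) * Complex.I_sq
      + (b₀ * b₁^2 * Complex.sin t - I * b₁ * b₀^2 * Complex.cos t) *
          Complex.sin_sq_add_cos_sq t
  have hv₀ : ∀ t ∈ U, HasDerivAt v₀ (q₂ t * v₀ t) t := by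
    intro t ht
    have hc := (Complex.hasDerivAt_cos t).const_mul b₀
    have hs := ((Complex.hasDerivAt_sin t).const_mul b₁).mul_const I
    have h1 : HasDerivAt v₀ (b₀ * (-Complex.sin t) - b₁ * Complex.cos t * I) t :=
      hc.sub hs
    convert h1 using 1
    simp only [hq₂, hv₀d]
    rw [div_mul_eq_mul_div, div_eq_iff (pow_ne_zero 2 (hfne t ht))]
    linear_combination (b₀ * Complex.cos t - b₁ * Complex.sin t * I) * hff' t ht
      + (b₀ * Complex.sin t + b₁ * Complex.cos t * I) * heqf t ht
      + (b₀ * b₁^2 * Complex.sin t) * Complex.I_sq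
      + (b₀ * b₁^2 * Complex.sin t + I * b₁ * b₀^2 * Complex.cos t) *
          Complex.sin_sq_add_cos_sq t
  have hu0 : u₀ 0 = u 0 := by simp [hud, hu₀d, hf0, hg0]
  have hv0 : v₀ 0 = v 0 := by simp [hvd, hv₀d, hf0, hg0]
  have hequ := ode_unique U hU hconn h0U q₁ u u₀ hu hu₀ hune hu0
  have heqv := ode_unique U hU hconn h0U q₂ v v₀ hv hv₀ hvne hv0
  intro t ht
  have h1 : b₀ * Complex.cos t + b₁ * Complex.sin t * I
      = f t * (Complex.cos (g t) + Complex.sin (g t) * I) := by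
    have h := hequ t ht
    simp only [hud, hu₀d] at h
    rwa [Complex.exp_mul_I] at h
  have h2 : b₀ * Complex.cos t - b₁ * Complex.sin t * I
      = f t * (Complex.cos (g t) - Complex.sin (g t) * I) := by
    have h := heqv t ht
    simp only [hvd, hv₀d] at h
    have h3 : Complex.exp (-g t * I) = Complex.cos (g t) - Complex.sin (g t) * I := by
      rw [Complex.exp_mul_I, Complex.cos_neg, Complex.sin_neg]; ring
    rwa [h3] at h
  constructor
  · linear_combination - (h1 + h2) / 2
  · linear_combination (I / 2) * (h1 - h2) +
      (f t * Complex.sin (g t) - b₁ * Complex.sin t) * Complex.I_sq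
end
end

section
/- Let n ≥ 2, let U₁,…,Uₙ ⊆ ℂ be open, and let f₁,…,f_{n-1}, g₁,…,g_{n-1} : Uₖ → ℂ and h : Uₙ → ℂ be twice differentiable functions. Then for the map Y, the coordinates (u¹,…,uⁿ) form a conjugate system: for all 1 ≤ k < j ≤ n and all u ∈ U₁×⋯×Uₙ with cos(uʲ) ≠ 0, ∂ₖ∂ⱼY(u) = −tan(uʲ)·∂ₖY(u), where ∂ⱼ denotes the directional derivative along the j-th standard basis vector of ℂⁿ. -/
noncomputable section

open Complex Finset

/-- Directional (partial) derivative along the j-th standard basis vector of ℂⁿ. -/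
def pd {n m : ℕ} (j : Fin n) (F : (Fin n → ℂ) → (Fin m → ℂ)) :
    (Fin n → ℂ) → (Fin m → ℂ) :=
  fun u => fderiv ℂ F u (Pi.single j 1)

namespace Stmt5Aux

variable {n : ℕ}

/-- separated product of one-variable functions -/
def sep (φ : Fin n → ℂ → ℂ) (u : Fin n → ℂ) : ℂ := ∏ l, φ l (u l)

/-- replace the j-th factor by its derivative -/
def Dop (j : Fin n) (φ : Fin n → ℂ → ℂ) : Fin n → ℂ → ℂ :=
  Function.update φ j (deriv (φ j))

lemma sep_pick (φ : Fin n → ℂ → ℂ) (j : Fin n) (u : Fin n → ℂ) :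
    sep φ u = φ j (u j) * ∏ l ∈ Finset.univ.erase j, φ l (u l) :=
  (Finset.mul_prod_erase _ _ (Finset.mem_univ j)).symm

lemma sep_update (φ : Fin n → ℂ → ℂ) (j : Fin n) (ψ : ℂ → ℂ) (u : Fin n → ℂ) :
    sep (Function.update φ j ψ) u = ψ (u j) * ∏ l ∈ Finset.univ.erase j, φ l (u l) := by
  rw [sep_pick _ j, Function.update_self]
  congr 1
  exact Finset.prod_congr rfl fun l hl => by
    rw [Function.update_of_ne (Finset.ne_of_mem_erase hl)]

lemma sep_Dop (φ : Fin n → ℂ → ℂ) (j : Fin n) (u : Fin n → ℂ) :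
    sep (Dop j φ) u = deriv (φ j) (u j) * ∏ l ∈ Finset.univ.erase j, φ l (u l) :=
  sep_update φ j _ u

/-- the full derivative of `sep φ` at `u` -/
def sepL (φ : Fin n → ℂ → ℂ) (u : Fin n → ℂ) : (Fin n → ℂ) →L[ℂ] ℂ :=
  ∑ l, sep (Dop l φ) u • (ContinuousLinearMap.proj l : (Fin n → ℂ) →L[ℂ] ℂ)

lemma sepL_single (φ : Fin n → ℂ → ℂ) (u : Fin n → ℂ) (j : Fin n) :
    sepL φ u (Pi.single j 1) = sep (Dop j φ) u := by
  simp only [sepL, ContinuousLinearMap.sum_apply, ContinuousLinearMap.smul_apply,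
    ContinuousLinearMap.proj_apply, Pi.single_apply, smul_eq_mul, mul_ite, mul_one, mul_zero]
  rw [Finset.sum_ite_eq' Finset.univ j fun l => sep (Dop l φ) u]
  simp

lemma hasFDerivAt_sep (φ : Fin n → ℂ → ℂ) (u : Fin n → ℂ)
    (hd : ∀ l, DifferentiableAt ℂ (φ l) (u l)) :
    HasFDerivAt (sep φ) (sepL φ u) u := by
  have h1 : ∀ l : Fin n, HasFDerivAt (fun v : Fin n → ℂ => φ l (v l))
      ((deriv (φ l) (u l)) • (ContinuousLinearMap.proj l : (Fin n → ℂ) →L[ℂ] ℂ)) u := by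
    intro l
    have hp : HasFDerivAt (fun v : Fin n → ℂ => v l)
        (ContinuousLinearMap.proj l : (Fin n → ℂ) →L[ℂ] ℂ) u :=
      hasFDerivAt_apply (𝕜 := ℂ) l u
    have := ((hd l).hasDerivAt.hasFDerivAt).comp u hp
    refine this.congr_fderiv ?_
    ext v
    simp [mul_comm]
  have H := HasFDerivAt.finset_prod (u := Finset.univ) (fun l _ => h1 l)
  have he : sepL φ u = ∑ l ∈ Finset.univ,
      (∏ l' ∈ Finset.univ.erase l, φ l' (u l')) •
        ((deriv (φ l) (u l)) • (ContinuousLinearMap.proj l : (Fin n → ℂ) →L[ℂ] ℂ)) := by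
    unfold sepL
    refine Finset.sum_congr rfl fun l _ => ?_
    rw [smul_smul, sep_Dop, mul_comm]
  rw [he]
  exact H


/-- first derivative of a finite family of sums of separated products -/
lemma pd_sum_sep {p q : ℕ} (ξ : Fin p → Fin q → Fin n → ℂ → ℂ) (u : Fin n → ℂ)
    (hd : ∀ i t l, DifferentiableAt ℂ (ξ i t l) (u l)) (j : Fin n) :
    pd j (fun v i => ∑ t, sep (ξ i t) v) u = fun i => ∑ t, sep (Dop j (ξ i t)) u := by
  have H : HasFDerivAt (fun v (i : Fin p) => ∑ t, sep (ξ i t) v)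
      (ContinuousLinearMap.pi fun i => ∑ t, sepL (ξ i t) u) u := by
    rw [hasFDerivAt_pi]
    intro i
    exact HasFDerivAt.fun_sum fun t _ => hasFDerivAt_sep (ξ i t) u (fun l => hd i t l)
  unfold pd
  rw [H.fderiv]
  funext i
  simp only [ContinuousLinearMap.pi_apply, ContinuousLinearMap.sum_apply]
  exact Finset.sum_congr rfl fun t _ => sepL_single _ _ _

/-- second derivative version -/
lemma pd_pd_sum_sep {p q : ℕ} (ξ : Fin p → Fin q → Fin n → ℂ → ℂ)
    (O : Fin n → Set ℂ) (hO : ∀ l, IsOpen (O l))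
    (hd : ∀ i t l, DifferentiableOn ℂ (ξ i t l) (O l))
    (hd' : ∀ i t l, DifferentiableOn ℂ (deriv (ξ i t l)) (O l))
    (u : Fin n → ℂ) (hu : ∀ l, u l ∈ O l) (j k : Fin n) :
    pd k (pd j (fun v i => ∑ t, sep (ξ i t) v)) u
      = fun i => ∑ t, sep (Dop k (Dop j (ξ i t))) u := by
  set V : Set (Fin n → ℂ) := Set.pi Set.univ O with hV
  have hVo : IsOpen V := isOpen_set_pi Set.finite_univ fun l _ => hO l
  have huV : u ∈ V := fun l _ => hu l
  have hdAt : ∀ v ∈ V, ∀ (i : Fin p) (t : Fin q) (l : Fin n),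
      DifferentiableAt ℂ (ξ i t l) (v l) := fun v hv i t l =>
    (hd i t l).differentiableAt ((hO l).mem_nhds (hv l (Set.mem_univ l)))
  have heq : pd j (fun v (i : Fin p) => ∑ t, sep (ξ i t) v)
      =ᶠ[nhds u] (fun v i => ∑ t, sep (Dop j (ξ i t)) v) :=
    Filter.eventuallyEq_of_mem (hVo.mem_nhds huV)
      (fun v hv => pd_sum_sep ξ v (hdAt v hv) j)
  have hstep : pd k (pd j (fun v (i : Fin p) => ∑ t, sep (ξ i t) v)) u
      = pd k (fun v i => ∑ t, sep (Dop j (ξ i t)) v) u := by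
    show (fderiv ℂ (pd j fun v (i : Fin p) => ∑ t, sep (ξ i t) v) u) (Pi.single k 1)
      = (fderiv ℂ (fun v (i : Fin p) => ∑ t, sep (Dop j (ξ i t)) v) u) (Pi.single k 1)
    rw [heq.fderiv_eq]
  rw [hstep]
  refine pd_sum_sep _ u (fun i t l => ?_) k
  rcases eq_or_ne l j with rfl | hne
  · have : Dop l (ξ i t) l = deriv (ξ i t l) := Function.update_self _ _ _
    rw [this]
    exact (hd' i t l).differentiableAt ((hO l).mem_nhds (hu l))
  · have : Dop j (ξ i t) l = ξ i t l := Function.update_of_ne hne _ _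
    rw [this]
    exact (hd i t l).differentiableAt ((hO l).mem_nhds (hu l))

lemma sep_Dop_Dop_eq (φ : Fin n → ℂ → ℂ) (u : Fin n → ℂ) {j k : Fin n} (hkj : k ≠ j)
    (c : ℂ) (hc : deriv (φ j) (u j) = c * φ j (u j)) :
    sep (Dop k (Dop j φ)) u = c * sep (Dop k φ) u := by
  have h1 : Dop k (Dop j φ) = Function.update (Dop k φ) j (deriv (φ j)) := by
    unfold Dop
    rw [Function.update_of_ne hkj, Function.update_comm hkj]
  have h2 : (Dop k φ) j = φ j := Function.update_of_ne (Ne.symm hkj) _ _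
  rw [h1, sep_update, hc, sep_pick (Dop k φ) j, h2]
  ring

lemma sep_Dop_zero (φ : Fin n → ℂ → ℂ) (u : Fin n → ℂ) (k : Fin n)
    (hk : φ k = fun _ => (1 : ℂ)) : sep (Dop k φ) u = 0 := by
  rw [sep_Dop, hk]
  simp


/-- differentiable with differentiable derivative on `s` -/
def D2 (φ : ℂ → ℂ) (s : Set ℂ) : Prop :=
  DifferentiableOn ℂ φ s ∧ DifferentiableOn ℂ (deriv φ) s

lemma D2.const (c : ℂ) (s : Set ℂ) : D2 (fun _ => c) s := by
  refine ⟨differentiableOn_const c, ?_⟩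
  rw [deriv_const']
  exact differentiableOn_const 0

lemma D2.mul {φ ψ : ℂ → ℂ} {s : Set ℂ} (hs : IsOpen s) (hφ : D2 φ s) (hψ : D2 ψ s) :
    D2 (fun x => φ x * ψ x) s := by
  have dAt : ∀ x ∈ s, DifferentiableAt ℂ φ x ∧ DifferentiableAt ℂ ψ x := fun x hx =>
    ⟨hφ.1.differentiableAt (hs.mem_nhds hx), hψ.1.differentiableAt (hs.mem_nhds hx)⟩
  refine ⟨hφ.1.mul hψ.1, ?_⟩
  refine DifferentiableOn.congr
    (f := fun x => deriv φ x * ψ x + φ x * deriv ψ x) ?_ ?_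
  · exact (hφ.2.mul hψ.1).add (hφ.1.mul hψ.2)
  · intro x hx
    exact deriv_mul (dAt x hx).1 (dAt x hx).2

lemma D2.add {φ ψ : ℂ → ℂ} {s : Set ℂ} (hs : IsOpen s) (hφ : D2 φ s) (hψ : D2 ψ s) :
    D2 (fun x => φ x + ψ x) s := by
  refine ⟨hφ.1.add hψ.1, ?_⟩
  refine DifferentiableOn.congr (f := fun x => deriv φ x + deriv ψ x)
    (hφ.2.add hψ.2) ?_
  intro x hx
  exact deriv_add (hφ.1.differentiableAt (hs.mem_nhds hx))
    (hψ.1.differentiableAt (hs.mem_nhds hx))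

lemma D2.ccos {ψ : ℂ → ℂ} {s : Set ℂ} (hs : IsOpen s) (hψ : D2 ψ s) :
    D2 (fun x => Complex.cos (ψ x)) s := by
  refine ⟨Complex.differentiable_cos.comp_differentiableOn hψ.1, ?_⟩
  refine DifferentiableOn.congr (f := fun x => -Complex.sin (ψ x) * deriv ψ x) ?_ ?_
  · exact ((Complex.differentiable_sin.comp_differentiableOn hψ.1).neg).mul hψ.2
  · intro x hx
    exact (HasDerivAt.ccos ((hψ.1.differentiableAt (hs.mem_nhds hx)).hasDerivAt)).deriv

lemma D2.csin {ψ : ℂ → ℂ} {s : Set ℂ} (hs : IsOpen s) (hψ : D2 ψ s) :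
    D2 (fun x => Complex.sin (ψ x)) s := by
  refine ⟨Complex.differentiable_sin.comp_differentiableOn hψ.1, ?_⟩
  refine DifferentiableOn.congr (f := fun x => Complex.cos (ψ x) * deriv ψ x) ?_ ?_
  · exact (Complex.differentiable_cos.comp_differentiableOn hψ.1).mul hψ.2
  · intro x hx
    exact (HasDerivAt.csin ((hψ.1.differentiableAt (hs.mem_nhds hx)).hasDerivAt)).deriv

lemma D2.cos (s : Set ℂ) : D2 Complex.cos s := by
  refine ⟨Complex.differentiable_cos.differentiableOn, ?_⟩
  rw [Complex.deriv_cos']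
  exact (Complex.differentiable_sin.neg).differentiableOn

end Stmt5Aux

namespace Stmt5Aux

def Phi (m : ℕ) (f g : Fin m → ℂ → ℂ) (h : ℂ → ℂ) (i : Fin (2*m+1)) (t : Fin (m+1)) :
    Fin (m+1) → ℂ → ℂ :=
  fun l =>
    if l.val < t.val then (fun _ => 1)
    else if l.val = t.val then
      (if ht : t.val < m then
        (fun x => f ⟨t.val, ht⟩ x *
          ((if (i : ℕ) = 2*t.val then 1 else 0) * Complex.cos (g ⟨t.val, ht⟩ x) +
           (if (i : ℕ) = 2*t.val+1 then 1 else 0) * Complex.sin (g ⟨t.val, ht⟩ x)))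
      else (fun x => (if (i : ℕ) = 2*m then 1 else 0) * h x))
    else Complex.cos

variable {m : ℕ} {f g : Fin m → ℂ → ℂ} {h : ℂ → ℂ} {i : Fin (2*m+1)}

lemma Phi_of_lt {t l : Fin (m+1)} (hl : l.val < t.val) :
    Phi m f g h i t l = fun _ => 1 := by
  unfold Phi
  rw [if_pos hl]

lemma Phi_of_gt {t l : Fin (m+1)} (hl : t.val < l.val) :
    Phi m f g h i t l = Complex.cos := by
  unfold Phi
  rw [if_neg (by omega), if_neg (by omega)]

lemma Phi_castSucc (k : Fin m) :
    Phi m f g h i (Fin.castSucc k) (Fin.castSucc k) =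
      fun x => f k x *
        ((if (i : ℕ) = 2*k.val then 1 else 0) * Complex.cos (g k x) +
         (if (i : ℕ) = 2*k.val+1 then 1 else 0) * Complex.sin (g k x)) := by
  unfold Phi
  rw [if_neg (lt_irrefl _), if_pos rfl, dif_pos (by simpa using k.isLt)]
  rfl

lemma Phi_last :
    Phi m f g h i (Fin.last m) (Fin.last m) =
      fun x => (if (i : ℕ) = 2*m then 1 else 0) * h x := by
  unfold Phi
  rw [if_neg (lt_irrefl _), if_pos rfl, dif_neg (by simp)]

lemma petY_eq : petY m f g h = fun u i => ∑ t : Fin (m+1), sep (Phi m f g h i t) u := by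
  funext u i
  rw [petY, Fin.sum_univ_castSucc (f := fun t => sep (Phi m f g h i t) u)]
  congr 1
  · refine Finset.sum_congr rfl fun k _ => ?_
    rw [sep_pick _ (Fin.castSucc k), Phi_castSucc]
    have hprod : ∏ l ∈ Finset.univ.erase (Fin.castSucc k),
        Phi m f g h i (Fin.castSucc k) l (u l) = Cprod (m+1) (k.val + 1) u := by
      have h1 : ∀ l ∈ Finset.univ.erase (Fin.castSucc k),
          Phi m f g h i (Fin.castSucc k) l (u l)
            = if k.val + 1 ≤ l.val then Complex.cos (u l) else 1 := by
        intro l hl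
        have hne : l ≠ Fin.castSucc k := Finset.ne_of_mem_erase hl
        rcases lt_trichotomy l.val k.val with hc | hc | hc
        · rw [Phi_of_lt hc, if_neg (by omega)]
        · exact absurd (Fin.ext hc) hne
        · rw [Phi_of_gt hc, if_pos (by omega)]
      rw [Finset.prod_congr rfl h1, ← Finset.prod_filter]
      rw [Cprod]
      congr 1
      rw [Finset.filter_erase]
      refine Finset.erase_eq_of_notMem ?_
      simp
    rw [hprod]
    ring
  · rw [sep_pick _ (Fin.last m), Phi_last]
    have : ∏ l ∈ Finset.univ.erase (Fin.last m),
        Phi m f g h i (Fin.last m) l (u l) = 1 := by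
      refine Finset.prod_eq_one fun l hl => ?_
      rw [Phi_of_lt (Fin.val_lt_last (Finset.ne_of_mem_erase hl))]
    rw [this, mul_one]

lemma Phi_D2 (U : Fin (m+1) → Set ℂ) (hU : ∀ k, IsOpen (U k))
    (hf : ∀ k : Fin m, DifferentiableOn ℂ (f k) (U k.castSucc))
    (hf' : ∀ k : Fin m, DifferentiableOn ℂ (deriv (f k)) (U k.castSucc))
    (hg : ∀ k : Fin m, DifferentiableOn ℂ (g k) (U k.castSucc))
    (hg' : ∀ k : Fin m, DifferentiableOn ℂ (deriv (g k)) (U k.castSucc))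
    (hh : DifferentiableOn ℂ h (U (Fin.last m)))
    (hh' : DifferentiableOn ℂ (deriv h) (U (Fin.last m))) :
    ∀ (i : Fin (2*m+1)) (t l : Fin (m+1)), D2 (Phi m f g h i t l) (U l) := by
  intro i t l
  rcases lt_trichotomy l.val t.val with hl | hl | hl
  · rw [Phi_of_lt hl]
    exact D2.const 1 _
  · have hlt : l = t := Fin.ext hl
    subst hlt
    by_cases ht : l.val < m
    · have hrep : l = Fin.castSucc ⟨l.val, ht⟩ := Fin.ext rfl
      rw [hrep, Phi_castSucc]
      exact D2.mul (hU _) ⟨hf _, hf' _⟩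
        (D2.add (hU _)
          (D2.mul (hU _) (D2.const _ _) (D2.ccos (hU _) ⟨hg _, hg' _⟩))
          (D2.mul (hU _) (D2.const _ _) (D2.csin (hU _) ⟨hg _, hg' _⟩)))
    · have hrep : l = Fin.last m := Fin.ext (by simp only [Fin.val_last]; omega)
      rw [hrep, Phi_last]
      exact D2.mul (hU _) (D2.const _ _) ⟨hh, hh'⟩
  · rw [Phi_of_gt hl]
    exact D2.cos _

end Stmt5Aux

/-- `(u¹,…,uⁿ)` is a conjugate system on `Y` (here `n = m+1 ≥ 2`):
`∂ₖ∂ⱼY(u) = −tan(uʲ)·∂ₖY(u)` for `k < j` wherever `cos(uʲ) ≠ 0`. -/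
theorem stmt5 (m : ℕ) (hm : 1 ≤ m)
    (U : Fin (m+1) → Set ℂ) (hU : ∀ k, IsOpen (U k))
    (f g : Fin m → ℂ → ℂ) (h : ℂ → ℂ)
    (hf : ∀ k : Fin m, DifferentiableOn ℂ (f k) (U k.castSucc))
    (hf' : ∀ k : Fin m, DifferentiableOn ℂ (deriv (f k)) (U k.castSucc))
    (hg : ∀ k : Fin m, DifferentiableOn ℂ (g k) (U k.castSucc))
    (hg' : ∀ k : Fin m, DifferentiableOn ℂ (deriv (g k)) (U k.castSucc))
    (hh : DifferentiableOn ℂ h (U (Fin.last m)))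
    (hh' : DifferentiableOn ℂ (deriv h) (U (Fin.last m))) :
    ∀ j k : Fin (m+1), k < j → ∀ u : Fin (m+1) → ℂ, (∀ l, u l ∈ U l) →
      Complex.cos (u j) ≠ 0 →
      pd k (pd j (petY m f g h)) u = (-Complex.tan (u j)) • pd k (petY m f g h) u := by
  intro j k hkj u hu hcos
  have hD2 := Stmt5Aux.Phi_D2 U hU hf hf' hg hg' hh hh'
  rw [Stmt5Aux.petY_eq]
  rw [Stmt5Aux.pd_pd_sum_sep (Stmt5Aux.Phi m f g h) U hU (fun i t l => (hD2 i t l).1)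
        (fun i t l => (hD2 i t l).2) u hu j k,
      Stmt5Aux.pd_sum_sep (Stmt5Aux.Phi m f g h) u
        (fun i t l => ((hD2 i t l).1).differentiableAt ((hU l).mem_nhds (hu l))) k]
  funext i
  simp only [Pi.smul_apply, smul_eq_mul, Finset.mul_sum]
  refine Finset.sum_congr rfl fun t _ => ?_
  have hkj' : k ≠ j := ne_of_lt hkj
  by_cases hjt : t.val < j.val
  · refine Stmt5Aux.sep_Dop_Dop_eq _ _ hkj' _ ?_
    rw [Stmt5Aux.Phi_of_gt hjt, Complex.deriv_cos', neg_mul, Complex.tan_mul_cos hcos]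
  · have hjt' : j.val ≤ t.val := le_of_not_gt hjt
    have hk1 : Stmt5Aux.Phi m f g h i t k = fun _ => 1 :=
      Stmt5Aux.Phi_of_lt ((Fin.lt_def.mp hkj).trans_le hjt')
    have hz1 : (Stmt5Aux.Dop j (Stmt5Aux.Phi m f g h i t)) k = fun _ => (1:ℂ) := by
      show Function.update (Stmt5Aux.Phi m f g h i t) j
        (deriv (Stmt5Aux.Phi m f g h i t j)) k = fun _ => (1:ℂ)
      rw [Function.update_of_ne hkj']
      exact hk1
    rw [Stmt5Aux.sep_Dop_zero _ u k hz1, Stmt5Aux.sep_Dop_zero _ u k hk1, mul_zero]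
end
end

section
/- Let n ≥ 2, let a₀,…,aₙ be nonzero complex numbers, bⱼ ∈ ℂ with bⱼ² = aⱼ, and let X be the spherical-coordinate parametrization of the quadric. Define N : ℂⁿ → ℂⁿ⁺¹ by N(u) := (b₀⁻¹C₀(u), b₁⁻¹C₁(u)sin(u¹), …, bₙ⁻¹Cₙ(u)sin(uⁿ)). Then N is a normal field of X whose second fundamental form is diagonal with entries −Cₖ²: for all u ∈ ℂⁿ and all 1 ≤ j, k ≤ n, ⟨N(u), ∂ⱼX(u)⟩ = 0 and ⟨N(u), ∂ⱼ∂ₖX(u)⟩ = −δ_{jk}·Cₖ(u)², where ∂ⱼ denotes the directional derivative along the j-th standard basis vector of ℂⁿ. -/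
noncomputable section

open Complex Finset

/-- The normal field `N(u) = (b₀⁻¹C₀(u), b₁⁻¹C₁(u)sin u¹, …, bₙ⁻¹Cₙ(u)sin uⁿ)`. -/
def sphN (n : ℕ) (b : Fin (n+1) → ℂ) (u : Fin n → ℂ) : Fin (n+1) → ℂ :=
  Fin.cons ((b 0)⁻¹ * Cprod n 0 u)
    (fun k : Fin n => (b k.succ)⁻¹ * Cprod n (k.val + 1) u * Complex.sin (u k))

def pprod {n : ℕ} (g : Fin n → ℂ → ℂ) (u : Fin n → ℂ) : ℂ := ∏ l, g l (u l)

lemma apply_diff {n : ℕ} (l : Fin n) : Differentiable ℂ (fun v : Fin n → ℂ => v l) :=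
  (ContinuousLinearMap.proj l : (Fin n → ℂ) →L[ℂ] ℂ).differentiable

lemma pprod_eq {n : ℕ} (g : Fin n → ℂ → ℂ) :
    pprod g = (∏ l : Fin n, (fun v : Fin n → ℂ => g l (v l)) ·) := by
  funext v; simp [pprod]

lemma pprod_diff {n : ℕ} (g : Fin n → ℂ → ℂ) (hg : ∀ l, Differentiable ℂ (g l)) :
    Differentiable ℂ (pprod g) := by
  intro u
  have h := HasFDerivAt.finset_prod (u := Finset.univ) (x := u)
    (g := fun (l : Fin n) (v : Fin n → ℂ) => g l (v l))
    (g' := fun l => (fderiv ℂ (g l) (u l)).comp (ContinuousLinearMap.proj l))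
    (fun l _ => ((hg l (u l)).hasFDerivAt).comp u (hasFDerivAt_apply l u))
  rw [pprod_eq]
  exact h.differentiableAt

lemma pprod_update {n : ℕ} (g : Fin n → ℂ → ℂ) (j : Fin n) (d : ℂ → ℂ) (u : Fin n → ℂ) :
    pprod (Function.update g j d) u = d (u j) * ∏ l ∈ univ.erase j, g l (u l) := by
  unfold pprod
  rw [← Finset.mul_prod_erase univ _ (mem_univ j)]
  congr 1
  · simp
  · exact Finset.prod_congr rfl (fun l hl => by
      simp at hl; simp [Function.update, hl])

lemma spd_pprod {n : ℕ} (g : Fin n → ℂ → ℂ) (hg : ∀ l, Differentiable ℂ (g l))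
    (u : Fin n → ℂ) (j : Fin n) :
    fderiv ℂ (pprod g) u (Pi.single j 1) = pprod (Function.update g j (deriv (g j))) u := by
  have hd : ∀ l : Fin n, DifferentiableAt ℂ (fun v : Fin n → ℂ => g l (v l)) u :=
    fun l => ((hg l).comp (apply_diff l)).differentiableAt
  have h0 : pprod g = (∏ l : Fin n, (fun v : Fin n → ℂ => g l (v l)) ·) := by
    funext v; simp [pprod]
  rw [h0, fderiv_finset_prod (fun l _ => hd l)]
  have h1 : ∀ l : Fin n, fderiv ℂ (fun v : Fin n → ℂ => g l (v l)) u (Pi.single j 1)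
      = if l = j then deriv (g l) (u l) else 0 := by
    intro l
    have hc : (fun v : Fin n → ℂ => g l (v l)) = (g l) ∘ (fun v : Fin n → ℂ => v l) := rfl
    rw [hc, fderiv_comp u ((hg l).differentiableAt) ((apply_diff l).differentiableAt)]
    have hal : fderiv ℂ (fun v : Fin n → ℂ => v l) u = ContinuousLinearMap.proj l :=
      (ContinuousLinearMap.proj l : (Fin n → ℂ) →L[ℂ] ℂ).fderiv
    simp only [ContinuousLinearMap.coe_comp', Function.comp_apply, hal]
    by_cases h : l = j
    · subst h; simp [fderiv_apply_one_eq_deriv]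
    · simp [Pi.single_apply, h]
  simp only [ContinuousLinearMap.coe_sum', Finset.sum_apply, ContinuousLinearMap.coe_smul',
    Pi.smul_apply, h1, smul_eq_mul]
  rw [Finset.sum_eq_single j]
  · rw [pprod_update, mul_comm]; simp
  · intro l _ hlj; simp [hlj]
  · simp

/-- vector-level derivative formula -/
lemma pd_repr {n m : ℕ} (e : Fin m → ℂ) (G : Fin m → Fin n → ℂ → ℂ)
    (hG : ∀ i l, Differentiable ℂ (G i l)) (j : Fin n) :
    pd j (fun u i => e i * pprod (G i) u)
      = fun u i => e i * pprod (Function.update (G i) j (deriv (G i j))) u := by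
  funext u i
  unfold pd
  rw [fderiv_pi (fun i => ((pprod_diff (G i) (hG i)).const_mul (e i)).differentiableAt)]
  simp only [ContinuousLinearMap.pi_apply]
  rw [fderiv_const_mul ((pprod_diff (G i) (hG i)).differentiableAt) (e i)]
  simp [spd_pprod (G i) (hG i) u j]


def QE {n : ℕ} (u : Fin n → ℂ) (E : Finset ℕ) (m : ℕ) : ℂ :=
  ∏ l : Fin n, if m ≤ (l:ℕ) ∧ (l:ℕ) ∉ E then Complex.cos (u l) else 1

def SE {n : ℕ} (u : Fin n → ℂ) (m : ℕ) : ℂ :=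
  ∏ l : Fin n, if (l:ℕ) = m then Complex.sin (u l) else 1

def CO {n : ℕ} (u : Fin n → ℂ) (m : ℕ) : ℂ :=
  ∏ l : Fin n, if (l:ℕ) = m then Complex.cos (u l) else 1

lemma SE_eq {n : ℕ} (u : Fin n → ℂ) (m : ℕ) (h : m < n) :
    SE u m = Complex.sin (u ⟨m, h⟩) := by
  unfold SE
  rw [Finset.prod_congr rfl (fun l _ => show _ = if l = ⟨m,h⟩ then Complex.sin (u l) else 1 by
    congr 1; simp [Fin.ext_iff])]
  simp

lemma CO_eq {n : ℕ} (u : Fin n → ℂ) (m : ℕ) (h : m < n) :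
    CO u m = Complex.cos (u ⟨m, h⟩) := by
  unfold CO
  rw [Finset.prod_congr rfl (fun l _ => show _ = if l = ⟨m,h⟩ then Complex.cos (u l) else 1 by
    congr 1; simp [Fin.ext_iff])]
  simp

lemma QE_skip {n : ℕ} (u : Fin n → ℂ) {E : Finset ℕ} {m : ℕ} (h : m ∈ E) :
    QE u E m = QE u E (m+1) := by
  unfold QE
  refine Finset.prod_congr rfl (fun l _ => ?_)
  congr 1
  simp only [eq_iff_iff]
  constructor
  · rintro ⟨h1, h2⟩
    refine ⟨?_, h2⟩
    rcases Nat.eq_or_lt_of_le h1 with h3 | h3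
    · exact absurd (h3 ▸ h) h2
    · exact h3
  · rintro ⟨h1, h2⟩; exact ⟨by omega, h2⟩

lemma QE_step {n : ℕ} (u : Fin n → ℂ) {E : Finset ℕ} {m : ℕ} (hE : m ∉ E) :
    QE u E m = CO u m * QE u E (m+1) := by
  unfold QE CO
  rw [← Finset.prod_mul_distrib]
  refine Finset.prod_congr rfl (fun l _ => ?_)
  by_cases h : (l:ℕ) = m
  · simp [h, hE]
  · by_cases h2 : m ≤ (l:ℕ)
    · have : m+1 ≤ (l:ℕ) := by omega
      simp [h, h2, this]
    · have : ¬ (m+1 ≤ (l:ℕ)) := by omega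
      simp [h, h2, this]

lemma SCsq {n : ℕ} (u : Fin n → ℂ) {m : ℕ} (h : m < n) :
    (SE u m)^2 + (CO u m)^2 = 1 := by
  rw [SE_eq u m h, CO_eq u m h]; exact Complex.sin_sq_add_cos_sq _

lemma tele {n : ℕ} (u : Fin n → ℂ) (E : Finset ℕ) (p : ℕ) (hp : p ≤ n)
    (hbelow : ∀ m, m < p → m ∉ E) :
    ∑ m ∈ Finset.range p, (SE u m)^2 * (QE u E (m+1))^2
      = (QE u E p)^2 - (QE u E 0)^2 := by
  induction p with
  | zero => simp
  | succ p IH =>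
    rw [Finset.sum_range_succ, IH (by omega) (fun m hm => hbelow m (by omega))]
    have h1 : QE u E p = CO u p * QE u E (p+1) := QE_step u (hbelow p (by omega))
    have h2 : (SE u p)^2 + (CO u p)^2 = 1 := SCsq u (by omega)
    rw [h1]
    linear_combination (QE u E (p+1))^2 * h2


def gX (n : ℕ) (i : Fin (n+1)) : Fin n → ℂ → ℂ :=
  fun l => if (i:ℕ) = (l:ℕ)+1 then Complex.sin
    else if (i:ℕ) ≤ (l:ℕ) then Complex.cos else fun _ => 1

lemma gX_diff (n : ℕ) (i : Fin (n+1)) (l : Fin n) : Differentiable ℂ (gX n i l) := by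
  unfold gX
  split_ifs
  · exact Complex.differentiable_sin
  · exact Complex.differentiable_cos
  · exact differentiable_const 1

lemma gX_deriv (n : ℕ) (i : Fin (n+1)) (l : Fin n) :
    deriv (gX n i l) = fun x => if (i:ℕ) = (l:ℕ)+1 then Complex.cos x
      else if (i:ℕ) ≤ (l:ℕ) then -Complex.sin x else 0 := by
  unfold gX
  split_ifs
  · exact Complex.deriv_sin
  · exact Complex.deriv_cos'
  · funext x; simp

lemma gX_dderiv (n : ℕ) (i : Fin (n+1)) (l : Fin n) :
    deriv (deriv (gX n i l)) = fun x => if (i:ℕ) = (l:ℕ)+1 then -Complex.sin x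
      else if (i:ℕ) ≤ (l:ℕ) then -Complex.cos x else 0 := by
  rw [gX_deriv]
  split_ifs
  · exact Complex.deriv_cos'
  · funext x
    rw [show (fun x => -Complex.sin x) = fun x => -(Complex.sin x) from rfl]
    rw [deriv.fun_neg, Complex.deriv_sin]
  · funext x; simp

lemma gX_deriv_diff (n : ℕ) (i : Fin (n+1)) (l : Fin n) :
    Differentiable ℂ (deriv (gX n i l)) := by
  rw [gX_deriv]
  split_ifs
  · exact Complex.differentiable_cos
  · exact Complex.differentiable_sin.neg
  · exact differentiable_const 0

lemma pprod_gX (n : ℕ) (u : Fin n → ℂ) (i : Fin (n+1)) :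
    pprod (gX n i) u = (Fin.cons (Cprod n 0 u)
      (fun k : Fin n => Cprod n ((k:ℕ)+1) u * Complex.sin (u k)) : Fin (n+1) → ℂ) i := by
  induction i using Fin.cases with
  | zero =>
    rw [Fin.cons_zero]
    unfold pprod gX Cprod
    rw [Finset.filter_true_of_mem (fun l _ => Nat.zero_le _)]
    exact Finset.prod_congr rfl (fun l _ => by rw [if_neg (show ¬ ((0 : Fin (n+1)) : ℕ) = (l:ℕ)+1 by show ¬ (0:ℕ) = _; omega),
      if_pos (show ((0 : Fin (n+1)) : ℕ) ≤ (l:ℕ) from Nat.zero_le _)])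
  | succ k =>
    rw [Fin.cons_succ]
    unfold pprod gX
    simp only [Fin.val_succ]
    rw [← Finset.mul_prod_erase univ _ (mem_univ k), mul_comm (Cprod n ((k:ℕ)+1) u)]
    congr 1
    · have h1 : ¬ ((k:ℕ)+1 ≤ (k:ℕ)) := by omega
      simp [h1]
    · have h2 : Cprod n ((k:ℕ)+1) u
          = ∏ l : Fin n, if (k:ℕ)+1 ≤ (l:ℕ) then Complex.cos (u l) else 1 := by
        unfold Cprod; rw [Finset.prod_filter]
      rw [h2, ← Finset.mul_prod_erase univ _ (mem_univ k)]
      have h3 : ¬ ((k:ℕ)+1 ≤ (k:ℕ)) := by omega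
      rw [if_neg h3, one_mul]
      refine Finset.prod_congr rfl (fun l hl => ?_)
      have hlk : l ≠ k := (Finset.mem_erase.1 hl).1
      have h4 : ¬ ((k:ℕ)+1 = (l:ℕ)+1) := by
        simp only [Nat.add_right_cancel_iff]
        exact fun h => hlk (Fin.ext h.symm)
      simp only [h4, if_false]
      by_cases h5 : (k:ℕ)+1 ≤ (l:ℕ) <;> simp [h5]

lemma prod_neg_at {n : ℕ} (A B : Fin n → ℂ) (j : Fin n) (h1 : A j = -B j)
    (h2 : ∀ l, l ≠ j → A l = B l) : ∏ l, A l = -∏ l, B l := by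
  rw [← Finset.mul_prod_erase univ A (mem_univ j), ← Finset.mul_prod_erase univ B (mem_univ j),
    h1, Finset.prod_congr rfl (fun l hl => h2 l (Finset.mem_erase.1 hl).1)]
  ring

lemma QE_sq {n : ℕ} (u : Fin n → ℂ) (E : Finset ℕ) (m : ℕ) :
    (QE u E m)^2 = ∏ l : Fin n,
      if m ≤ (l:ℕ) ∧ (l:ℕ) ∉ E then (Complex.cos (u l))^2 else 1 := by
  unfold QE
  rw [← Finset.prod_pow]
  exact Finset.prod_congr rfl (fun l _ => by split_ifs <;> simp)

lemma SE_sq {n : ℕ} (u : Fin n → ℂ) (m : ℕ) :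
    (SE u m)^2 = ∏ l : Fin n, if (l:ℕ) = m then (Complex.sin (u l))^2 else 1 := by
  unfold SE
  rw [← Finset.prod_pow]
  exact Finset.prod_congr rfl (fun l _ => by split_ifs <;> simp)

lemma CO_sq {n : ℕ} (u : Fin n → ℂ) (m : ℕ) :
    (CO u m)^2 = ∏ l : Fin n, if (l:ℕ) = m then (Complex.cos (u l))^2 else 1 := by
  unfold CO
  rw [← Finset.prod_pow]
  exact Finset.prod_congr rfl (fun l _ => by split_ifs <;> simp)

-- first-order term, i = 0
lemma term1_zero {n : ℕ} (u : Fin n → ℂ) (j : Fin n) :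
    pprod (gX n 0) u * pprod (Function.update (gX n 0) j (deriv (gX n 0 j))) u
      = -(SE u (j:ℕ) * CO u (j:ℕ) * (QE u {(j:ℕ)} 0)^2) := by
  have hrhs : SE u (j:ℕ) * CO u (j:ℕ) * (QE u {(j:ℕ)} 0)^2
      = ∏ l : Fin n, ((if (l:ℕ) = (j:ℕ) then Complex.sin (u l) else 1)
        * (if (l:ℕ) = (j:ℕ) then Complex.cos (u l) else 1)
        * (if 0 ≤ (l:ℕ) ∧ (l:ℕ) ∉ ({(j:ℕ)} : Finset ℕ) then (Complex.cos (u l))^2 else 1)) := by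
    rw [QE_sq]; unfold SE CO
    rw [← Finset.prod_mul_distrib, ← Finset.prod_mul_distrib]
  rw [hrhs]
  unfold pprod
  rw [← Finset.prod_mul_distrib]
  refine prod_neg_at _ _ j ?_ ?_
  · simp only [Function.update_self, gX_deriv, gX, Fin.val_zero]
    simp
    ring
  · intro l hl
    have hl' : (l:ℕ) ≠ (j:ℕ) := fun h => hl (Fin.ext h)
    simp only [Function.update_apply, if_neg hl, gX, Fin.val_zero]
    simp [hl']
    ring

lemma term1_succ {n : ℕ} (u : Fin n → ℂ) (j i' : Fin n) :
    pprod (gX n i'.succ) u * pprod (Function.update (gX n i'.succ) j (deriv (gX n i'.succ j))) u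
      = if (i':ℕ) = (j:ℕ) then SE u (j:ℕ) * CO u (j:ℕ) * (QE u {(j:ℕ)} ((j:ℕ)+1))^2
        else if (i':ℕ) < (j:ℕ) then
          -(SE u (j:ℕ) * CO u (j:ℕ)) * ((SE u (i':ℕ))^2 * (QE u {(j:ℕ)} ((i':ℕ)+1))^2)
        else 0 := by
  unfold pprod
  rw [← Finset.prod_mul_distrib]
  rcases lt_trichotomy ((i':ℕ)) ((j:ℕ)) with hlt | heq | hgt
  · rw [if_neg (by omega), if_pos hlt]
    have hrhs : SE u (j:ℕ) * CO u (j:ℕ) * ((SE u (i':ℕ))^2 * (QE u {(j:ℕ)} ((i':ℕ)+1))^2)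
        = ∏ l : Fin n, ((if (l:ℕ) = (j:ℕ) then Complex.sin (u l) else 1)
          * (if (l:ℕ) = (j:ℕ) then Complex.cos (u l) else 1)
          * (if (l:ℕ) = (i':ℕ) then (Complex.sin (u l))^2 else 1)
          * (if (i':ℕ)+1 ≤ (l:ℕ) ∧ (l:ℕ) ∉ ({(j:ℕ)} : Finset ℕ)
              then (Complex.cos (u l))^2 else 1)) := by
      rw [QE_sq, SE_sq]; unfold SE CO
      rw [← Finset.prod_mul_distrib, ← Finset.prod_mul_distrib, ← Finset.prod_mul_distrib]
      ring
    have h2 : -(SE u (j:ℕ) * CO u (j:ℕ)) * ((SE u (i':ℕ))^2 * (QE u {(j:ℕ)} ((i':ℕ)+1))^2)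
        = -(SE u (j:ℕ) * CO u (j:ℕ) * ((SE u (i':ℕ))^2 * (QE u {(j:ℕ)} ((i':ℕ)+1))^2)) := by
      ring
    rw [h2, hrhs]
    refine prod_neg_at _ _ j ?_ ?_
    · simp only [Function.update_self, gX_deriv, gX, Fin.val_succ, ite_apply,
        Finset.mem_singleton, eq_self_iff_true, not_true, and_false, and_true, if_true, if_false]
      (try split_ifs) <;>
        first
          | (exfalso; omega)
          | (simp only [Complex.deriv_sin, Complex.deriv_cos', deriv_const']; try ring1) <;>
              (try simp) <;> ring1
          | ring1
          | simp
    · intro l hl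
      have hl' : (l:ℕ) ≠ (j:ℕ) := fun h => hl (Fin.ext h)
      simp only [Function.update_apply, if_neg hl, gX, Fin.val_succ, ite_apply,
        Finset.mem_singleton, eq_self_iff_true, not_true, and_false, and_true, if_true, if_false]
      (try split_ifs) <;>
        first
          | (exfalso; omega)
          | (simp only [Complex.deriv_sin, Complex.deriv_cos', deriv_const']; try ring1) <;>
              (try simp) <;> ring1
          | ring1
          | simp
  · rw [if_pos heq]
    have hi : i' = j := Fin.ext heq
    subst hi
    have hrhs : SE u (i':ℕ) * CO u (i':ℕ) * (QE u {(i':ℕ)} ((i':ℕ)+1))^2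
        = ∏ l : Fin n, ((if (l:ℕ) = (i':ℕ) then Complex.sin (u l) else 1)
          * (if (l:ℕ) = (i':ℕ) then Complex.cos (u l) else 1)
          * (if (i':ℕ)+1 ≤ (l:ℕ) ∧ (l:ℕ) ∉ ({(i':ℕ)} : Finset ℕ)
              then (Complex.cos (u l))^2 else 1)) := by
      rw [QE_sq]; unfold SE CO
      rw [← Finset.prod_mul_distrib, ← Finset.prod_mul_distrib]
    rw [hrhs]
    refine Finset.prod_congr rfl (fun l _ => ?_)
    by_cases hl : l = i'
    · subst hl
      simp only [Function.update_self, gX_deriv, gX, Fin.val_succ, ite_apply,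
        Finset.mem_singleton, eq_self_iff_true, not_true, and_false, and_true, if_true, if_false]
      (try split_ifs) <;>
        first
          | (exfalso; omega)
          | (simp only [Complex.deriv_sin, Complex.deriv_cos', deriv_const']; try ring1) <;>
              (try simp) <;> ring1
          | ring1
          | simp
    · have hl' : (l:ℕ) ≠ (i':ℕ) := fun h => hl (Fin.ext h)
      simp only [Function.update_apply, if_neg hl, gX, Fin.val_succ, ite_apply,
        Finset.mem_singleton, eq_self_iff_true, not_true, and_false, and_true, if_true, if_false]
      (try split_ifs) <;>
        first
          | (exfalso; omega)
          | (simp only [Complex.deriv_sin, Complex.deriv_cos', deriv_const']; try ring1) <;>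
              (try simp) <;> ring1
          | ring1
          | simp
  · rw [if_neg (by omega), if_neg (by omega)]
    refine Finset.prod_eq_zero (mem_univ j) ?_
    have e1 : ¬ ((i':ℕ)+1 = (j:ℕ)+1) := by omega
    have e2 : ¬ ((i':ℕ)+1 ≤ (j:ℕ)) := by omega
    simp only [Function.update_self, gX_deriv, Fin.val_succ]
    simp [e1, e2]
    exact fun h => absurd h (by omega)

lemma case1 {n : ℕ} (u : Fin n → ℂ) (j : Fin n) :
    ∑ i : Fin (n+1), pprod (gX n i) u
      * pprod (Function.update (gX n i) j (deriv (gX n i j))) u = 0 := by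
  rw [Fin.sum_univ_succ, term1_zero]
  rw [Finset.sum_congr rfl (fun i' _ => term1_succ u j i')]
  rw [Fin.sum_univ_eq_sum_range (fun m =>
    if m = (j:ℕ) then SE u (j:ℕ) * CO u (j:ℕ) * (QE u {(j:ℕ)} ((j:ℕ)+1))^2
    else if m < (j:ℕ) then
      -(SE u (j:ℕ) * CO u (j:ℕ)) * ((SE u m)^2 * (QE u {(j:ℕ)} (m+1))^2)
    else 0) n]
  rw [show (∑ m ∈ Finset.range n,
      if m = (j:ℕ) then SE u (j:ℕ) * CO u (j:ℕ) * (QE u {(j:ℕ)} ((j:ℕ)+1))^2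
      else if m < (j:ℕ) then
        -(SE u (j:ℕ) * CO u (j:ℕ)) * ((SE u m)^2 * (QE u {(j:ℕ)} (m+1))^2)
      else 0)
    = ∑ m ∈ Finset.range ((j:ℕ)+1),
      (if m = (j:ℕ) then SE u (j:ℕ) * CO u (j:ℕ) * (QE u {(j:ℕ)} ((j:ℕ)+1))^2
      else if m < (j:ℕ) then
        -(SE u (j:ℕ) * CO u (j:ℕ)) * ((SE u m)^2 * (QE u {(j:ℕ)} (m+1))^2)
      else 0) from (Finset.sum_subset
        (Finset.range_subset_range.mpr (by have := j.isLt; omega))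
        (fun m _ hm => by
          rw [Finset.mem_range, not_lt] at hm
          rw [if_neg (by omega), if_neg (by omega)])).symm]
  rw [Finset.sum_range_succ, if_pos rfl]
  have hstep : (∑ m ∈ Finset.range (j:ℕ),
      if m = (j:ℕ) then SE u (j:ℕ) * CO u (j:ℕ) * (QE u {(j:ℕ)} ((j:ℕ)+1))^2
      else if m < (j:ℕ) then
        -(SE u (j:ℕ) * CO u (j:ℕ)) * ((SE u m)^2 * (QE u {(j:ℕ)} (m+1))^2)
      else 0)
      = ∑ m ∈ Finset.range (j:ℕ),
        -(SE u (j:ℕ) * CO u (j:ℕ)) * ((SE u m)^2 * (QE u {(j:ℕ)} (m+1))^2) :=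
    Finset.sum_congr rfl (fun m hm => by
      rw [Finset.mem_range] at hm
      rw [if_neg (by omega), if_pos hm])
  rw [hstep, ← Finset.mul_sum,
    tele u {(j:ℕ)} (j:ℕ) (le_of_lt j.isLt) (fun m hm => by simp; omega)]
  have hQ : QE u {(j:ℕ)} (j:ℕ) = QE u {(j:ℕ)} ((j:ℕ)+1) :=
    QE_skip u (Finset.mem_singleton_self _)
  rw [← hQ]
  ring

lemma Cprod_eq_QE {n : ℕ} (u : Fin n → ℂ) (m : ℕ) (E : Finset ℕ)
    (hE : ∀ x ∈ E, x < m) : Cprod n m u = QE u E m := by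
  unfold Cprod QE
  rw [Finset.prod_filter]
  refine Finset.prod_congr rfl (fun l _ => ?_)
  by_cases h : m ≤ (l:ℕ)
  · have h2 : (l:ℕ) ∉ E := fun hx => by have := hE _ hx; omega
    simp [h, h2]
  · simp [h]

lemma prod_neg_at₂ {n : ℕ} (A B : Fin n → ℂ) (j k : Fin n) (hjk : j ≠ k)
    (h1 : A j = -B j) (h2 : A k = -B k)
    (h3 : ∀ l, l ≠ j → l ≠ k → A l = B l) : ∏ l, A l = ∏ l, B l := by
  have hkj : k ∈ univ.erase j := Finset.mem_erase.2 ⟨fun h => hjk h.symm, mem_univ k⟩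
  rw [← Finset.mul_prod_erase univ A (mem_univ j), ← Finset.mul_prod_erase univ B (mem_univ j),
    ← Finset.mul_prod_erase _ A hkj, ← Finset.mul_prod_erase _ B hkj, h1, h2,
    Finset.prod_congr rfl (fun l hl => h3 l (Finset.mem_erase.1 (Finset.mem_erase.1 hl).2).1
      (Finset.mem_erase.1 hl).1)]
  ring

lemma sphX_repr {n : ℕ} (b : Fin (n+1) → ℂ) :
    sphX n b = fun u i => b i * pprod (gX n i) u := by
  funext u i
  rw [pprod_gX]
  unfold sphX
  induction i using Fin.cases with
  | zero => rw [Fin.cons_zero, Fin.cons_zero]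
  | succ k => rw [Fin.cons_succ, Fin.cons_succ]; ring

lemma sphN_apply {n : ℕ} (b : Fin (n+1) → ℂ) (u : Fin n → ℂ) (i : Fin (n+1)) :
    sphN n b u i = (b i)⁻¹ * pprod (gX n i) u := by
  rw [pprod_gX]
  unfold sphN
  induction i using Fin.cases with
  | zero => rw [Fin.cons_zero, Fin.cons_zero]
  | succ k => rw [Fin.cons_succ, Fin.cons_succ]; ring

lemma cdot_red {n : ℕ} (b : Fin (n+1) → ℂ) (hb0 : ∀ i, b i ≠ 0) (u : Fin n → ℂ)
    (G : Fin (n+1) → Fin n → ℂ → ℂ) :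
    cdot (sphN n b u) (fun i => b i * pprod (G i) u)
      = ∑ i, pprod (gX n i) u * pprod (G i) u := by
  unfold cdot
  refine Finset.sum_congr rfl (fun i _ => ?_)
  rw [sphN_apply]
  rw [show (b i)⁻¹ * pprod (gX n i) u * (b i * pprod (G i) u)
    = ((b i)⁻¹ * b i) * (pprod (gX n i) u * pprod (G i) u) from by ring,
    inv_mul_cancel₀ (hb0 i), one_mul]

lemma term2d_zero {n : ℕ} (u : Fin n → ℂ) (k : Fin n) :
    pprod (gX n 0) u * pprod (Function.update (gX n 0) k (deriv (deriv (gX n 0 k)))) u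
      = -((CO u (k:ℕ))^2 * (QE u {(k:ℕ)} 0)^2) := by
  have hrhs : (CO u (k:ℕ))^2 * (QE u {(k:ℕ)} 0)^2
      = ∏ l : Fin n, ((if (l:ℕ) = (k:ℕ) then (Complex.cos (u l))^2 else 1)
        * (if 0 ≤ (l:ℕ) ∧ (l:ℕ) ∉ ({(k:ℕ)} : Finset ℕ) then (Complex.cos (u l))^2 else 1)) := by
    rw [QE_sq, CO_sq, ← Finset.prod_mul_distrib]
  rw [hrhs]
  unfold pprod
  rw [← Finset.prod_mul_distrib]
  refine prod_neg_at _ _ k ?_ ?_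
  · simp only [Function.update_self, gX_dderiv]
    simp only [gX, Fin.val_zero, ite_apply,
      Finset.mem_singleton, eq_self_iff_true, not_true, and_false, and_true, if_true, if_false]
    (try split_ifs) <;>
      first
        | contradiction
        | (exfalso; omega)
        | (simp only [Complex.deriv_sin, Complex.deriv_cos', deriv_const']; ring1)
        | ring1
        | (simp <;> ring1)
  · intro l hl
    have hl' : (l:ℕ) ≠ (k:ℕ) := fun h => hl (Fin.ext h)
    simp only [Function.update_apply, if_neg hl, gX, Fin.val_zero, ite_apply,
      Finset.mem_singleton, eq_self_iff_true, not_true, and_false, and_true, if_true, if_false]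
    (try split_ifs) <;>
      first
        | contradiction
        | (exfalso; omega)
        | (simp only [Complex.deriv_sin, Complex.deriv_cos', deriv_const']; ring1)
        | ring1
        | (simp [hl'] <;> ring1)

lemma term2d_succ {n : ℕ} (u : Fin n → ℂ) (k i' : Fin n) :
    pprod (gX n i'.succ) u
      * pprod (Function.update (gX n i'.succ) k (deriv (deriv (gX n i'.succ k)))) u
      = if (i':ℕ) = (k:ℕ) then -((SE u (k:ℕ))^2 * (QE u {(k:ℕ)} ((k:ℕ)+1))^2)
        else if (i':ℕ) < (k:ℕ) then
          -((CO u (k:ℕ))^2) * ((SE u (i':ℕ))^2 * (QE u {(k:ℕ)} ((i':ℕ)+1))^2)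
        else 0 := by
  unfold pprod
  rw [← Finset.prod_mul_distrib]
  rcases lt_trichotomy ((i':ℕ)) ((k:ℕ)) with hlt | heq | hgt
  · rw [if_neg (by omega), if_pos hlt]
    have hrhs : (CO u (k:ℕ))^2 * ((SE u (i':ℕ))^2 * (QE u {(k:ℕ)} ((i':ℕ)+1))^2)
        = ∏ l : Fin n, ((if (l:ℕ) = (k:ℕ) then (Complex.cos (u l))^2 else 1)
          * (if (l:ℕ) = (i':ℕ) then (Complex.sin (u l))^2 else 1)
          * (if (i':ℕ)+1 ≤ (l:ℕ) ∧ (l:ℕ) ∉ ({(k:ℕ)} : Finset ℕ)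
              then (Complex.cos (u l))^2 else 1)) := by
      rw [QE_sq, SE_sq, CO_sq, ← Finset.prod_mul_distrib, ← Finset.prod_mul_distrib]
      ring
    have h2 : -((CO u (k:ℕ))^2) * ((SE u (i':ℕ))^2 * (QE u {(k:ℕ)} ((i':ℕ)+1))^2)
        = -((CO u (k:ℕ))^2 * ((SE u (i':ℕ))^2 * (QE u {(k:ℕ)} ((i':ℕ)+1))^2)) := by ring
    rw [h2, hrhs]
    refine prod_neg_at _ _ k ?_ ?_
    · simp only [Function.update_self, gX_dderiv]
      simp only [gX, Fin.val_succ, ite_apply,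
        Finset.mem_singleton, eq_self_iff_true, not_true, and_false, and_true, if_true, if_false]
      (try split_ifs) <;>
        first
          | contradiction
          | (exfalso; omega)
          | (simp only [Complex.deriv_sin, Complex.deriv_cos', deriv_const']; ring1)
          | ring1
          | (simp <;> ring1)
    · intro l hl
      have hl' : (l:ℕ) ≠ (k:ℕ) := fun h => hl (Fin.ext h)
      simp only [Function.update_apply, if_neg hl, gX, Fin.val_succ, ite_apply,
        Finset.mem_singleton, eq_self_iff_true, not_true, and_false, and_true, if_true, if_false]
      (try split_ifs) <;>
        first
          | contradiction
          | (exfalso; omega)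
          | (simp only [Complex.deriv_sin, Complex.deriv_cos', deriv_const']; ring1)
          | ring1
          | simp [hl']
  · rw [if_pos heq]
    have hi : i' = k := Fin.ext heq
    subst hi
    have hrhs : (SE u (i':ℕ))^2 * (QE u {(i':ℕ)} ((i':ℕ)+1))^2
        = ∏ l : Fin n, ((if (l:ℕ) = (i':ℕ) then (Complex.sin (u l))^2 else 1)
          * (if (i':ℕ)+1 ≤ (l:ℕ) ∧ (l:ℕ) ∉ ({(i':ℕ)} : Finset ℕ)
              then (Complex.cos (u l))^2 else 1)) := by
      rw [QE_sq, SE_sq, ← Finset.prod_mul_distrib]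
    rw [hrhs]
    refine prod_neg_at _ _ i' ?_ ?_
    · simp only [Function.update_self, gX_dderiv]
      simp only [gX, Fin.val_succ, ite_apply,
        Finset.mem_singleton, eq_self_iff_true, not_true, and_false, and_true, if_true, if_false]
      (try split_ifs) <;>
        first
          | contradiction
          | (exfalso; omega)
          | (simp only [Complex.deriv_sin, Complex.deriv_cos', deriv_const']; ring1)
          | ring1
          | (simp <;> ring1)
    · intro l hl
      have hl' : (l:ℕ) ≠ (i':ℕ) := fun h => hl (Fin.ext h)
      simp only [Function.update_apply, if_neg hl, gX, Fin.val_succ, ite_apply,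
        Finset.mem_singleton, eq_self_iff_true, not_true, and_false, and_true, if_true, if_false]
      (try split_ifs) <;>
        first
          | contradiction
          | (exfalso; omega)
          | (simp only [Complex.deriv_sin, Complex.deriv_cos', deriv_const']; ring1)
          | ring1
          | simp [hl']
  · rw [if_neg (by omega), if_neg (by omega)]
    refine Finset.prod_eq_zero (mem_univ k) ?_
    have e1 : ¬ ((i':ℕ)+1 = (k:ℕ)+1) := by omega
    have e2 : ¬ ((i':ℕ)+1 ≤ (k:ℕ)) := by omega
    simp only [Function.update_self, gX_dderiv, Fin.val_succ]
    simp [e1, e2, gX]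
    exact fun h => absurd h (by omega)

lemma case2d {n : ℕ} (u : Fin n → ℂ) (k : Fin n) :
    ∑ i : Fin (n+1), pprod (gX n i) u
      * pprod (Function.update (gX n i) k (deriv (deriv (gX n i k)))) u
      = -(QE u {(k:ℕ)} ((k:ℕ)+1))^2 := by
  rw [Fin.sum_univ_succ, term2d_zero]
  rw [Finset.sum_congr rfl (fun i' _ => term2d_succ u k i')]
  rw [Fin.sum_univ_eq_sum_range (fun m =>
    if m = (k:ℕ) then -((SE u (k:ℕ))^2 * (QE u {(k:ℕ)} ((k:ℕ)+1))^2)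
    else if m < (k:ℕ) then
      -((CO u (k:ℕ))^2) * ((SE u m)^2 * (QE u {(k:ℕ)} (m+1))^2)
    else 0) n]
  rw [show (∑ m ∈ Finset.range n,
      if m = (k:ℕ) then -((SE u (k:ℕ))^2 * (QE u {(k:ℕ)} ((k:ℕ)+1))^2)
      else if m < (k:ℕ) then
        -((CO u (k:ℕ))^2) * ((SE u m)^2 * (QE u {(k:ℕ)} (m+1))^2)
      else 0)
    = ∑ m ∈ Finset.range ((k:ℕ)+1),
      (if m = (k:ℕ) then -((SE u (k:ℕ))^2 * (QE u {(k:ℕ)} ((k:ℕ)+1))^2)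
      else if m < (k:ℕ) then
        -((CO u (k:ℕ))^2) * ((SE u m)^2 * (QE u {(k:ℕ)} (m+1))^2)
      else 0) from (Finset.sum_subset
        (Finset.range_subset_range.mpr (by have := k.isLt; omega))
        (fun m _ hm => by
          rw [Finset.mem_range, not_lt] at hm
          rw [if_neg (by omega), if_neg (by omega)])).symm]
  rw [Finset.sum_range_succ, if_pos rfl]
  have hstep : (∑ m ∈ Finset.range (k:ℕ),
      if m = (k:ℕ) then -((SE u (k:ℕ))^2 * (QE u {(k:ℕ)} ((k:ℕ)+1))^2)
      else if m < (k:ℕ) then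
        -((CO u (k:ℕ))^2) * ((SE u m)^2 * (QE u {(k:ℕ)} (m+1))^2)
      else 0)
      = ∑ m ∈ Finset.range (k:ℕ),
        -((CO u (k:ℕ))^2) * ((SE u m)^2 * (QE u {(k:ℕ)} (m+1))^2) :=
    Finset.sum_congr rfl (fun m hm => by
      rw [Finset.mem_range] at hm
      rw [if_neg (by omega), if_pos hm])
  rw [hstep, ← Finset.mul_sum,
    tele u {(k:ℕ)} (k:ℕ) (le_of_lt k.isLt) (fun m hm => by simp; omega)]
  have hQ : QE u {(k:ℕ)} (k:ℕ) = QE u {(k:ℕ)} ((k:ℕ)+1) :=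
    QE_skip u (Finset.mem_singleton_self _)
  have hsc : (SE u (k:ℕ))^2 + (CO u (k:ℕ))^2 = 1 := SCsq u k.isLt
  rw [← hQ]
  linear_combination -(QE u {(k:ℕ)} (k:ℕ))^2 * hsc

lemma term2o_zero {n : ℕ} (u : Fin n → ℂ) (j k : Fin n) (hjk : (j:ℕ) < (k:ℕ)) :
    pprod (gX n 0) u * pprod (Function.update (Function.update (gX n 0) k
        (deriv (gX n 0 k))) j (deriv (gX n 0 j))) u
      = SE u (j:ℕ) * SE u (k:ℕ) * CO u (j:ℕ) * CO u (k:ℕ)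
        * (QE u {(j:ℕ), (k:ℕ)} 0)^2 := by
  have hkj : k ≠ j := fun h => by simp [h] at hjk
  have hrhs : SE u (j:ℕ) * SE u (k:ℕ) * CO u (j:ℕ) * CO u (k:ℕ)
        * (QE u {(j:ℕ), (k:ℕ)} 0)^2
      = ∏ l : Fin n, ((if (l:ℕ) = (j:ℕ) then Complex.sin (u l) else 1)
        * (if (l:ℕ) = (k:ℕ) then Complex.sin (u l) else 1)
        * (if (l:ℕ) = (j:ℕ) then Complex.cos (u l) else 1)
        * (if (l:ℕ) = (k:ℕ) then Complex.cos (u l) else 1)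
        * (if 0 ≤ (l:ℕ) ∧ (l:ℕ) ∉ ({(j:ℕ), (k:ℕ)} : Finset ℕ)
            then (Complex.cos (u l))^2 else 1)) := by
    rw [QE_sq]; unfold SE CO
    rw [← Finset.prod_mul_distrib, ← Finset.prod_mul_distrib, ← Finset.prod_mul_distrib,
      ← Finset.prod_mul_distrib]
  rw [hrhs]
  unfold pprod
  rw [← Finset.prod_mul_distrib]
  refine prod_neg_at₂ _ _ j k (fun h => hkj h.symm) ?_ ?_ ?_
  · simp only [Function.update_self, gX_deriv]
    simp only [gX, Fin.val_zero, ite_apply, Finset.mem_insert,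
      Finset.mem_singleton, eq_self_iff_true, not_true, and_false, and_true, if_true, if_false, true_or, or_true, false_or, or_false]
    (try split_ifs) <;>
      first
        | contradiction
        | (exfalso; omega)
        | ring1
        | (simp [hjk.ne, hjk.ne'] <;> ring1)
  · rw [Function.update_of_ne hkj, Function.update_self, gX_deriv]
    simp only [gX, Fin.val_zero, ite_apply, Finset.mem_insert,
      Finset.mem_singleton, eq_self_iff_true, not_true, and_false, and_true, if_true, if_false, true_or, or_true, false_or, or_false]
    (try split_ifs) <;>
      first
        | contradiction
        | (exfalso; omega)
        | ring1
        | (simp [hjk.ne, hjk.ne'] <;> ring1)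
  · intro l hlj hlk
    have hlj' : (l:ℕ) ≠ (j:ℕ) := fun h => hlj (Fin.ext h)
    have hlk' : (l:ℕ) ≠ (k:ℕ) := fun h => hlk (Fin.ext h)
    rw [Function.update_of_ne hlj, Function.update_of_ne hlk]
    simp only [gX, Fin.val_zero, ite_apply, Finset.mem_insert,
      Finset.mem_singleton, eq_self_iff_true, not_true, and_false, and_true, if_true, if_false, true_or, or_true, false_or, or_false]
    (try split_ifs) <;>
      first
        | contradiction
        | (exfalso; omega)
        | ring1
        | (simp [hlj', hlk'] <;> ring1)

lemma term2o_succ {n : ℕ} (u : Fin n → ℂ) (j k i' : Fin n) (hjk : (j:ℕ) < (k:ℕ)) :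
    pprod (gX n i'.succ) u * pprod (Function.update (Function.update (gX n i'.succ) k
        (deriv (gX n i'.succ k))) j (deriv (gX n i'.succ j))) u
      = if (i':ℕ) = (j:ℕ) then
          -(SE u (j:ℕ) * SE u (k:ℕ) * CO u (j:ℕ) * CO u (k:ℕ))
            * (QE u {(j:ℕ), (k:ℕ)} ((j:ℕ)+1))^2
        else if (i':ℕ) < (j:ℕ) then
          (SE u (j:ℕ) * SE u (k:ℕ) * CO u (j:ℕ) * CO u (k:ℕ))
            * ((SE u (i':ℕ))^2 * (QE u {(j:ℕ), (k:ℕ)} ((i':ℕ)+1))^2)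
        else 0 := by
  have hkj : k ≠ j := fun h => by simp [h] at hjk
  unfold pprod
  rw [← Finset.prod_mul_distrib]
  rcases lt_trichotomy ((i':ℕ)) ((j:ℕ)) with hlt | heq | hgt
  · rw [if_neg (by omega), if_pos hlt]
    have hrhs : SE u (j:ℕ) * SE u (k:ℕ) * CO u (j:ℕ) * CO u (k:ℕ)
          * ((SE u (i':ℕ))^2 * (QE u {(j:ℕ), (k:ℕ)} ((i':ℕ)+1))^2)
        = ∏ l : Fin n, ((if (l:ℕ) = (j:ℕ) then Complex.sin (u l) else 1)
          * (if (l:ℕ) = (k:ℕ) then Complex.sin (u l) else 1)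
          * (if (l:ℕ) = (j:ℕ) then Complex.cos (u l) else 1)
          * (if (l:ℕ) = (k:ℕ) then Complex.cos (u l) else 1)
          * (if (l:ℕ) = (i':ℕ) then (Complex.sin (u l))^2 else 1)
          * (if (i':ℕ)+1 ≤ (l:ℕ) ∧ (l:ℕ) ∉ ({(j:ℕ), (k:ℕ)} : Finset ℕ)
              then (Complex.cos (u l))^2 else 1)) := by
      rw [QE_sq, SE_sq]; unfold SE CO
      rw [← Finset.prod_mul_distrib, ← Finset.prod_mul_distrib, ← Finset.prod_mul_distrib,
        ← Finset.prod_mul_distrib, ← Finset.prod_mul_distrib]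
      ring
    rw [hrhs]
    refine prod_neg_at₂ _ _ j k (fun h => hkj h.symm) ?_ ?_ ?_
    · simp only [Function.update_self, gX_deriv]
      simp only [gX, Fin.val_succ, ite_apply, Finset.mem_insert,
        Finset.mem_singleton, eq_self_iff_true, not_true, and_false, and_true, if_true, if_false, true_or, or_true, false_or, or_false]
      (try split_ifs) <;>
        first
          | contradiction
          | (exfalso; omega)
          | ring1
          | simp
    · rw [Function.update_of_ne hkj, Function.update_self, gX_deriv]
      simp only [gX, Fin.val_succ, ite_apply, Finset.mem_insert,
        Finset.mem_singleton, eq_self_iff_true, not_true, and_false, and_true, if_true, if_false, true_or, or_true, false_or, or_false]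
      (try split_ifs) <;>
        first
          | contradiction
          | (exfalso; omega)
          | ring1
          | simp
    · intro l hlj hlk
      have hlj' : (l:ℕ) ≠ (j:ℕ) := fun h => hlj (Fin.ext h)
      have hlk' : (l:ℕ) ≠ (k:ℕ) := fun h => hlk (Fin.ext h)
      rw [Function.update_of_ne hlj, Function.update_of_ne hlk]
      simp only [gX, Fin.val_succ, ite_apply, Finset.mem_insert,
        Finset.mem_singleton, eq_self_iff_true, not_true, and_false, and_true, if_true, if_false, true_or, or_true, false_or, or_false]
      (try split_ifs) <;>
        first
          | contradiction
          | (exfalso; omega)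
          | ring1
          | simp [hlj', hlk']
  · rw [if_pos heq]
    have hi : i' = j := Fin.ext heq
    subst hi
    have hrhs : SE u (i':ℕ) * SE u (k:ℕ) * CO u (i':ℕ) * CO u (k:ℕ)
          * (QE u {(i':ℕ), (k:ℕ)} ((i':ℕ)+1))^2
        = ∏ l : Fin n, ((if (l:ℕ) = (i':ℕ) then Complex.sin (u l) else 1)
          * (if (l:ℕ) = (k:ℕ) then Complex.sin (u l) else 1)
          * (if (l:ℕ) = (i':ℕ) then Complex.cos (u l) else 1)
          * (if (l:ℕ) = (k:ℕ) then Complex.cos (u l) else 1)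
          * (if (i':ℕ)+1 ≤ (l:ℕ) ∧ (l:ℕ) ∉ ({(i':ℕ), (k:ℕ)} : Finset ℕ)
              then (Complex.cos (u l))^2 else 1)) := by
      rw [QE_sq]; unfold SE CO
      rw [← Finset.prod_mul_distrib, ← Finset.prod_mul_distrib, ← Finset.prod_mul_distrib,
        ← Finset.prod_mul_distrib]
    have hsgn : -(SE u (i':ℕ) * SE u (k:ℕ) * CO u (i':ℕ) * CO u (k:ℕ))
          * (QE u {(i':ℕ), (k:ℕ)} ((i':ℕ)+1))^2
        = -(SE u (i':ℕ) * SE u (k:ℕ) * CO u (i':ℕ) * CO u (k:ℕ)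
          * (QE u {(i':ℕ), (k:ℕ)} ((i':ℕ)+1))^2) := by ring
    rw [hsgn, hrhs]
    refine prod_neg_at _ _ k ?_ ?_
    · rw [Function.update_of_ne hkj, Function.update_self, gX_deriv]
      simp only [gX, Fin.val_succ, ite_apply, Finset.mem_insert,
        Finset.mem_singleton, eq_self_iff_true, not_true, and_false, and_true, if_true, if_false, true_or, or_true, false_or, or_false]
      (try split_ifs) <;>
        first
          | contradiction
          | (exfalso; omega)
          | ring1
          | simp
    · intro l hlk
      have hlk' : (l:ℕ) ≠ (k:ℕ) := fun h => hlk (Fin.ext h)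
      rcases eq_or_ne l i' with hli | hli
      · subst hli
        rw [Function.update_self, gX_deriv]
        simp only [gX, Fin.val_succ, ite_apply, Finset.mem_insert,
          Finset.mem_singleton, eq_self_iff_true, not_true, and_false, and_true, if_true, if_false, true_or, or_true, false_or, or_false]
        (try split_ifs) <;>
          first
            | contradiction
            | (exfalso; omega)
            | ring1
            | simp
      · have hli' : (l:ℕ) ≠ (i':ℕ) := fun h => hli (Fin.ext h)
        rw [Function.update_of_ne hli, Function.update_of_ne hlk]
        simp only [gX, Fin.val_succ, ite_apply, Finset.mem_insert,
          Finset.mem_singleton, eq_self_iff_true, not_true, and_false, and_true, if_true, if_false, true_or, or_true, false_or, or_false]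
        (try split_ifs) <;>
          first
            | contradiction
            | (exfalso; omega)
            | ring1
            | simp [hli', hlk']
  · rw [if_neg (by omega), if_neg (by omega)]
    refine Finset.prod_eq_zero (mem_univ j) ?_
    have e1 : ¬ ((i':ℕ)+1 = (j:ℕ)+1) := by omega
    have e2 : ¬ ((i':ℕ)+1 ≤ (j:ℕ)) := by omega
    rw [Function.update_self, gX_deriv]
    simp [e1, e2, Fin.val_succ]
    exact fun h => absurd h (by omega)

lemma case2o {n : ℕ} (u : Fin n → ℂ) (j k : Fin n) (hjk : (j:ℕ) < (k:ℕ)) :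
    ∑ i : Fin (n+1), pprod (gX n i) u
      * pprod (Function.update (Function.update (gX n i) k
          (deriv (gX n i k))) j (deriv (gX n i j))) u = 0 := by
  rw [Fin.sum_univ_succ, term2o_zero u j k hjk]
  rw [Finset.sum_congr rfl (fun i' _ => term2o_succ u j k i' hjk)]
  rw [Fin.sum_univ_eq_sum_range (fun m =>
    if m = (j:ℕ) then
      -(SE u (j:ℕ) * SE u (k:ℕ) * CO u (j:ℕ) * CO u (k:ℕ))
        * (QE u {(j:ℕ), (k:ℕ)} ((j:ℕ)+1))^2
    else if m < (j:ℕ) then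
      (SE u (j:ℕ) * SE u (k:ℕ) * CO u (j:ℕ) * CO u (k:ℕ))
        * ((SE u m)^2 * (QE u {(j:ℕ), (k:ℕ)} (m+1))^2)
    else 0) n]
  rw [show (∑ m ∈ Finset.range n,
      if m = (j:ℕ) then
        -(SE u (j:ℕ) * SE u (k:ℕ) * CO u (j:ℕ) * CO u (k:ℕ))
          * (QE u {(j:ℕ), (k:ℕ)} ((j:ℕ)+1))^2
      else if m < (j:ℕ) then
        (SE u (j:ℕ) * SE u (k:ℕ) * CO u (j:ℕ) * CO u (k:ℕ))
          * ((SE u m)^2 * (QE u {(j:ℕ), (k:ℕ)} (m+1))^2)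
      else 0)
    = ∑ m ∈ Finset.range ((j:ℕ)+1),
      (if m = (j:ℕ) then
        -(SE u (j:ℕ) * SE u (k:ℕ) * CO u (j:ℕ) * CO u (k:ℕ))
          * (QE u {(j:ℕ), (k:ℕ)} ((j:ℕ)+1))^2
      else if m < (j:ℕ) then
        (SE u (j:ℕ) * SE u (k:ℕ) * CO u (j:ℕ) * CO u (k:ℕ))
          * ((SE u m)^2 * (QE u {(j:ℕ), (k:ℕ)} (m+1))^2)
      else 0) from (Finset.sum_subset
        (Finset.range_subset_range.mpr (by have := j.isLt; omega))
        (fun m _ hm => by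
          rw [Finset.mem_range, not_lt] at hm
          rw [if_neg (by omega), if_neg (by omega)])).symm]
  rw [Finset.sum_range_succ, if_pos rfl]
  have hstep : (∑ m ∈ Finset.range (j:ℕ),
      if m = (j:ℕ) then
        -(SE u (j:ℕ) * SE u (k:ℕ) * CO u (j:ℕ) * CO u (k:ℕ))
          * (QE u {(j:ℕ), (k:ℕ)} ((j:ℕ)+1))^2
      else if m < (j:ℕ) then
        (SE u (j:ℕ) * SE u (k:ℕ) * CO u (j:ℕ) * CO u (k:ℕ))
          * ((SE u m)^2 * (QE u {(j:ℕ), (k:ℕ)} (m+1))^2)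
      else 0)
      = ∑ m ∈ Finset.range (j:ℕ),
        (SE u (j:ℕ) * SE u (k:ℕ) * CO u (j:ℕ) * CO u (k:ℕ))
          * ((SE u m)^2 * (QE u {(j:ℕ), (k:ℕ)} (m+1))^2) :=
    Finset.sum_congr rfl (fun m hm => by
      rw [Finset.mem_range] at hm
      rw [if_neg (by omega), if_pos hm])
  rw [hstep, ← Finset.mul_sum,
    tele u {(j:ℕ), (k:ℕ)} (j:ℕ) (le_of_lt j.isLt) (fun m hm => by simp; omega)]
  have hQ : QE u {(j:ℕ), (k:ℕ)} (j:ℕ) = QE u {(j:ℕ), (k:ℕ)} ((j:ℕ)+1) :=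
    QE_skip u (Finset.mem_insert_self _ _)
  rw [← hQ]
  ring

lemma G1_diff {n : ℕ} (k : Fin n) : ∀ (i : Fin (n+1)) (l : Fin n), Differentiable ℂ
    (Function.update (gX n i) k (deriv (gX n i k)) l) := fun i l => by
  rcases eq_or_ne l k with h | h
  · rw [h, Function.update_self]; exact gX_deriv_diff n i k
  · rw [Function.update_of_ne h]; exact gX_diff n i l

/-- `N` is a normal field of the quadric `X` whose second fundamental
form is diagonal with entries `−Cₖ²`:
`⟨N, ∂ⱼX⟩ = 0` and `⟨N, ∂ⱼ∂ₖX⟩ = −δ_{jk} Cₖ(u)²`. -/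
theorem stmt6 (n : ℕ) (hn : 2 ≤ n) (a b : Fin (n+1) → ℂ)
    (ha : ∀ j, a j ≠ 0) (hb : ∀ j, (b j)^2 = a j) :
    ∀ u : Fin n → ℂ,
      (∀ j : Fin n, cdot (sphN n b u) (pd j (sphX n b) u) = 0) ∧
      (∀ j k : Fin n, cdot (sphN n b u) (pd j (pd k (sphX n b)) u)
        = -(if j = k then (Cprod n (k.val + 1) u)^2 else 0)) := by
  have hb0 : ∀ i, b i ≠ 0 := fun i h => ha i (by rw [← hb i, h]; ring)
  intro u
  constructor
  · intro j
    rw [sphX_repr b, pd_repr b (gX n) (fun i l => gX_diff n i l) j]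
    exact (cdot_red b hb0 u _).trans (case1 u j)
  · intro j k
    rw [sphX_repr b, pd_repr b (gX n) (fun i l => gX_diff n i l) k,
      pd_repr b (fun i => Function.update (gX n i) k (deriv (gX n i k))) (G1_diff k) j]
    rcases eq_or_ne j k with hjk | hjk
    · subst hjk
      rw [if_pos rfl]
      refine (cdot_red b hb0 u _).trans ?_
      have hG : ∀ i : Fin (n+1),
          Function.update (Function.update (gX n i) j (deriv (gX n i j))) j
            (deriv (Function.update (gX n i) j (deriv (gX n i j)) j))
          = Function.update (gX n i) j (deriv (deriv (gX n i j))) := by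
        intro i
        rw [Function.update_self, Function.update_idem]
      rw [Finset.sum_congr rfl (fun i _ => by rw [hG i])]
      rw [case2d u j, Cprod_eq_QE u ((j:ℕ)+1) {(j:ℕ)} (by simp)]
    · rw [if_neg hjk, neg_zero]
      refine (cdot_red b hb0 u _).trans ?_
      have hd : ∀ i : Fin (n+1),
          deriv (Function.update (gX n i) k (deriv (gX n i k)) j) = deriv (gX n i j) := by
        intro i
        rw [Function.update_of_ne hjk]
      rcases lt_or_gt_of_ne (fun h : (j:ℕ) = (k:ℕ) => hjk (Fin.ext h)) with h | h
      · rw [Finset.sum_congr rfl (fun i _ => by rw [hd i])]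
        exact case2o u j k h
      · have hkj : k ≠ j := fun hh => hjk (hh.symm)
        rw [Finset.sum_congr rfl (fun i _ => by
          rw [hd i, Function.update_comm hkj])]
        exact case2o u k j h
end
end

section
/- Let n ≥ 2, let U₁,…,Uₙ ⊆ ℂ be open, let fₖ, gₖ : Uₖ → ℂ (k = 1,…,n−1) and h : Uₙ → ℂ be differentiable, let z₀ := 0 and z₁,…,z_{n-1} ∈ ℂ, and let Fₖ, Gₖ : Uₖ → ℂ and H : Uₙ → ℂ be differentiable functions satisfying, for all t in their domains: Fₖ(t)² = zₖ + fₖ(t)² − z_{k-1}cos²(t); Fₖ′(t)² + Fₖ(t)²Gₖ′(t)² = fₖ′(t)² + fₖ(t)²gₖ′(t)² − z_{k-1}sin²(t); H′(t)² = h′(t)² − z_{n-1}sin²(t). Let Y be the map built from (f₁,…,f_{n-1}, g₁,…,g_{n-1}, h) and Ỹ the map built from (F₁,…,F_{n-1}, G₁,…,G_{n-1}, H). Then Y and Ỹ have the same first fundamental form: for every u ∈ U₁×⋯×Uₙ and all v, w ∈ ℂⁿ, ⟨DY(u)v, DY(u)w⟩ = ⟨DỸ(u)v, DỸ(u)w⟩.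 -/
noncomputable section

open Complex Finset

/-- `Cex m k p u = ∏_{j ≥ k, j ≠ p} cos (u j)`. -/
def Cex (m k : ℕ) (p : Fin (m+1)) (u : Fin (m+1) → ℂ) : ℂ :=
  ∏ j ∈ (Finset.univ.filter (fun j : Fin (m+1) => k ≤ (j : ℕ))).erase p,
    Complex.cos (u j)

def pcA (m : ℕ) (f g : Fin m → ℂ → ℂ) (u : Fin (m+1) → ℂ) (p : Fin (m+1)) (k : Fin m) : ℂ :=
  (if (p:ℕ) = (k:ℕ) then
    Cprod (m+1) ((k:ℕ)+1) u *
      (deriv (f k) (u k.castSucc) * Complex.cos (g k (u k.castSucc))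
        - f k (u k.castSucc) * deriv (g k) (u k.castSucc) * Complex.sin (g k (u k.castSucc)))
   else 0)
  + (if (k:ℕ)+1 ≤ (p:ℕ) then
      -Complex.sin (u p) * Cex m ((k:ℕ)+1) p u * f k (u k.castSucc)
        * Complex.cos (g k (u k.castSucc))
     else 0)

def pcB (m : ℕ) (f g : Fin m → ℂ → ℂ) (u : Fin (m+1) → ℂ) (p : Fin (m+1)) (k : Fin m) : ℂ :=
  (if (p:ℕ) = (k:ℕ) then
    Cprod (m+1) ((k:ℕ)+1) u *
      (deriv (f k) (u k.castSucc) * Complex.sin (g k (u k.castSucc))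
        + f k (u k.castSucc) * deriv (g k) (u k.castSucc) * Complex.cos (g k (u k.castSucc)))
   else 0)
  + (if (k:ℕ)+1 ≤ (p:ℕ) then
      -Complex.sin (u p) * Cex m ((k:ℕ)+1) p u * f k (u k.castSucc)
        * Complex.sin (g k (u k.castSucc))
     else 0)

def pcC (m : ℕ) (h : ℂ → ℂ) (u : Fin (m+1) → ℂ) (p : Fin (m+1)) : ℂ :=
  if (p:ℕ) = m then deriv h (u p) else 0

def Pmat (m : ℕ) (f g : Fin m → ℂ → ℂ) (h : ℂ → ℂ) (u : Fin (m+1) → ℂ)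
    (p : Fin (m+1)) : Fin (2*m+1) → ℂ :=
  fun i =>
    (∑ k : Fin m, ((if (i:ℕ) = 2*(k:ℕ) then 1 else 0) * pcA m f g u p k
        + (if (i:ℕ) = 2*(k:ℕ)+1 then 1 else 0) * pcB m f g u p k))
    + (if (i:ℕ) = 2*m then 1 else 0) * pcC m h u p

def petL (m : ℕ) (f g : Fin m → ℂ → ℂ) (h : ℂ → ℂ) (u : Fin (m+1) → ℂ) :
    (Fin (m+1) → ℂ) →L[ℂ] (Fin (2*m+1) → ℂ) :=
  ContinuousLinearMap.pi fun i =>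
    ∑ p : Fin (m+1), Pmat m f g h u p i • ContinuousLinearMap.proj p

lemma sum_ite_val {m : ℕ} (k : Fin m) (c : Fin (m+1) → ℂ) :
    ∑ p : Fin (m+1), (if (p:ℕ) = (k:ℕ) then c p else 0) = c k.castSucc := by
  rw [Finset.sum_eq_single k.castSucc]
  · simp
  · intro p _ hp
    rw [if_neg]
    intro hc
    exact hp (Fin.ext (by simpa using hc))
  · simp

lemma sum_ite_last {m : ℕ} (c : Fin (m+1) → ℂ) :
    ∑ p : Fin (m+1), (if (p:ℕ) = m then c p else 0) = c (Fin.last m) := by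
  rw [Finset.sum_eq_single (Fin.last m)]
  · simp
  · intro p _ hp
    rw [if_neg]
    intro hc
    exact hp (Fin.ext (by simpa using hc))
  · simp

lemma petY_hasFDerivAt (m : ℕ) (f g : Fin m → ℂ → ℂ) (h : ℂ → ℂ) (u : Fin (m+1) → ℂ)
    (hfd : ∀ k : Fin m, DifferentiableAt ℂ (f k) (u k.castSucc))
    (hgd : ∀ k : Fin m, DifferentiableAt ℂ (g k) (u k.castSucc))
    (hhd : DifferentiableAt ℂ h (u (Fin.last m))) :
    HasFDerivAt (petY m f g h) (petL m f g h u) u := by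
  have hproj : ∀ p : Fin (m+1), HasFDerivAt (fun v : Fin (m+1) → ℂ => v p)
      ((ContinuousLinearMap.proj p : (Fin (m+1) → ℂ) →L[ℂ] ℂ)) u := fun p => hasFDerivAt_apply p u
  unfold petL
  refine hasFDerivAt_pi.2 fun i => ?_
  have hC : ∀ k : Fin m, HasFDerivAt (fun v : Fin (m+1) → ℂ => Cprod (m+1) ((k:ℕ)+1) v)
      (∑ j ∈ Finset.univ.filter (fun j : Fin (m+1) => (k:ℕ)+1 ≤ (j:ℕ)),
        (∏ l ∈ (Finset.univ.filter (fun j : Fin (m+1) => (k:ℕ)+1 ≤ (j:ℕ))).erase j,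
            Complex.cos (u l)) • ((-Complex.sin (u j)) • (ContinuousLinearMap.proj j : (Fin (m+1) → ℂ) →L[ℂ] ℂ))) u := by
    intro k
    exact HasFDerivAt.finset_prod
      (fun j _ => by have := (Complex.hasDerivAt_cos (u j)).comp_hasFDerivAt u (hproj j); exact this)
  have hf' : ∀ k : Fin m, HasFDerivAt (fun v : Fin (m+1) → ℂ => f k (v k.castSucc))
      (deriv (f k) (u k.castSucc) • (ContinuousLinearMap.proj k.castSucc : (Fin (m+1) → ℂ) →L[ℂ] ℂ)) u :=
    fun k => ((hfd k).hasDerivAt).comp_hasFDerivAt u (hproj k.castSucc)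
  have htrig : ∀ k : Fin m, ∀ ca cb : ℂ,
      HasFDerivAt (fun v : Fin (m+1) → ℂ =>
          ca * Complex.cos (g k (v k.castSucc)) + cb * Complex.sin (g k (v k.castSucc)))
        (((ca * (-Complex.sin (g k (u k.castSucc)) * deriv (g k) (u k.castSucc))
          + cb * (Complex.cos (g k (u k.castSucc)) * deriv (g k) (u k.castSucc))))
            • (ContinuousLinearMap.proj k.castSucc : (Fin (m+1) → ℂ) →L[ℂ] ℂ)) u := by
    intro k ca cb
    have hgk : HasDerivAt (g k) (deriv (g k) (u k.castSucc)) (u k.castSucc) := (hgd k).hasDerivAt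
    have hcos := (Complex.hasDerivAt_cos (g k (u k.castSucc))).comp (u k.castSucc) hgk
    have hsin := (Complex.hasDerivAt_sin (g k (u k.castSucc))).comp (u k.castSucc) hgk
    exact ((hcos.const_mul ca).add (hsin.const_mul cb)).comp_hasFDerivAt u (hproj k.castSucc)
  have hterm : ∀ k : Fin m, HasFDerivAt (fun v : Fin (m+1) → ℂ =>
      Cprod (m+1) ((k:ℕ)+1) v * f k (v k.castSucc) *
        ((if (i:ℕ) = 2*(k:ℕ) then 1 else 0) * Complex.cos (g k (v k.castSucc)) +
         (if (i:ℕ) = 2*(k:ℕ)+1 then 1 else 0) * Complex.sin (g k (v k.castSucc))))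
      ((Cprod (m+1) ((k:ℕ)+1) u * f k (u k.castSucc)) •
          ((((if (i:ℕ) = 2*(k:ℕ) then 1 else 0) * (-Complex.sin (g k (u k.castSucc)) * deriv (g k) (u k.castSucc))
            + (if (i:ℕ) = 2*(k:ℕ)+1 then 1 else 0) * (Complex.cos (g k (u k.castSucc)) * deriv (g k) (u k.castSucc))))
              • ContinuousLinearMap.proj k.castSucc)
        + ((if (i:ℕ) = 2*(k:ℕ) then 1 else 0) * Complex.cos (g k (u k.castSucc)) +
           (if (i:ℕ) = 2*(k:ℕ)+1 then 1 else 0) * Complex.sin (g k (u k.castSucc))) •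
          (Cprod (m+1) ((k:ℕ)+1) u • (deriv (f k) (u k.castSucc) • ContinuousLinearMap.proj k.castSucc)
            + f k (u k.castSucc) •
              (∑ j ∈ Finset.univ.filter (fun j : Fin (m+1) => (k:ℕ)+1 ≤ (j:ℕ)),
                (∏ l ∈ (Finset.univ.filter (fun j : Fin (m+1) => (k:ℕ)+1 ≤ (j:ℕ))).erase j,
                    Complex.cos (u l)) • ((-Complex.sin (u j)) • (ContinuousLinearMap.proj j : (Fin (m+1) → ℂ) →L[ℂ] ℂ))))) u :=
    fun k => ((hC k).mul (hf' k)).mul (htrig k _ _)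
  have hhterm : HasFDerivAt (fun v : Fin (m+1) → ℂ =>
      (if (i:ℕ) = 2*m then (1:ℂ) else 0) * h (v (Fin.last m)))
      ((if (i:ℕ) = 2*m then (1:ℂ) else 0) •
        (deriv h (u (Fin.last m)) • ContinuousLinearMap.proj (Fin.last m))) u :=
    ((hhd.hasDerivAt).comp_hasFDerivAt u (hproj (Fin.last m))).const_mul _
  have htot := (HasFDerivAt.fun_sum (fun k (_ : k ∈ Finset.univ) => hterm k)).fun_add hhterm
  refine htot.congr_fderiv ?_
  ext v
  simp only [ContinuousLinearMap.add_apply, ContinuousLinearMap.coe_sum', Finset.sum_apply,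
    ContinuousLinearMap.coe_smul', Pi.smul_apply, ContinuousLinearMap.smul_apply,
    ContinuousLinearMap.proj_apply, smul_eq_mul, ContinuousLinearMap.pi_apply]
  have hAk : ∀ k : Fin m, ∑ p : Fin (m+1), pcA m f g u p k * v p
      = Cprod (m+1) ((k:ℕ)+1) u *
          (deriv (f k) (u k.castSucc) * Complex.cos (g k (u k.castSucc))
            - f k (u k.castSucc) * deriv (g k) (u k.castSucc) * Complex.sin (g k (u k.castSucc)))
          * v k.castSucc
        + ∑ j ∈ Finset.univ.filter (fun j : Fin (m+1) => (k:ℕ)+1 ≤ (j:ℕ)),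
            (-Complex.sin (u j) * Cex m ((k:ℕ)+1) j u * f k (u k.castSucc)
              * Complex.cos (g k (u k.castSucc))) * v j := by
    intro k
    simp only [pcA, add_mul, ite_mul, zero_mul]
    rw [Finset.sum_add_distrib, sum_ite_val k, ← Finset.sum_filter]
  have hBk : ∀ k : Fin m, ∑ p : Fin (m+1), pcB m f g u p k * v p
      = Cprod (m+1) ((k:ℕ)+1) u *
          (deriv (f k) (u k.castSucc) * Complex.sin (g k (u k.castSucc))
            + f k (u k.castSucc) * deriv (g k) (u k.castSucc) * Complex.cos (g k (u k.castSucc)))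
          * v k.castSucc
        + ∑ j ∈ Finset.univ.filter (fun j : Fin (m+1) => (k:ℕ)+1 ≤ (j:ℕ)),
            (-Complex.sin (u j) * Cex m ((k:ℕ)+1) j u * f k (u k.castSucc)
              * Complex.sin (g k (u k.castSucc))) * v j := by
    intro k
    simp only [pcB, add_mul, ite_mul, zero_mul]
    rw [Finset.sum_add_distrib, sum_ite_val k, ← Finset.sum_filter]
  have hCk : ∑ p : Fin (m+1), pcC m h u p * v p = deriv h (u (Fin.last m)) * v (Fin.last m) := by
    simp only [pcC, ite_mul, zero_mul]
    exact sum_ite_last (fun p => deriv h (u p) * v p)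
  have hexp : ∑ p : Fin (m+1), Pmat m f g h u p i * v p
      = (∑ k : Fin m,
          ((if (i:ℕ) = 2*(k:ℕ) then 1 else 0) * ∑ p : Fin (m+1), pcA m f g u p k * v p
            + (if (i:ℕ) = 2*(k:ℕ)+1 then 1 else 0) * ∑ p : Fin (m+1), pcB m f g u p k * v p))
        + (if (i:ℕ) = 2*m then 1 else 0) * ∑ p : Fin (m+1), pcC m h u p * v p := by
    simp only [Pmat, add_mul, Finset.sum_mul, Finset.sum_add_distrib, Finset.mul_sum,
      mul_assoc]
    congr 1
    congr 1
    · exact Finset.sum_comm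
    · exact Finset.sum_comm
  rw [hexp, hCk]
  congr 1
  refine Finset.sum_congr rfl fun k _ => ?_
  rw [hAk k, hBk k]
  have hsig : ∀ c : ℂ,
      ∑ j ∈ Finset.univ.filter (fun j : Fin (m+1) => (k:ℕ)+1 ≤ (j:ℕ)),
        (-Complex.sin (u j) * Cex m ((k:ℕ)+1) j u * f k (u k.castSucc) * c) * v j
      = c * f k (u k.castSucc) *
          ∑ j ∈ Finset.univ.filter (fun j : Fin (m+1) => (k:ℕ)+1 ≤ (j:ℕ)),
            (∏ l ∈ (Finset.univ.filter (fun j : Fin (m+1) => (k:ℕ)+1 ≤ (j:ℕ))).erase j,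
              Complex.cos (u l)) * (-Complex.sin (u j) * v j) := by
    intro c
    rw [Finset.mul_sum]
    refine Finset.sum_congr rfl fun j _ => ?_
    rw [Cex]
    ring
  rw [hsig, hsig]
  ring

lemma sum_range_two_mul (n : ℕ) (f : ℕ → ℂ) :
    ∑ i ∈ Finset.range (2*n), f i = ∑ i ∈ Finset.range n, (f (2*i) + f (2*i+1)) := by
  induction n with
  | zero => simp
  | succ n ih =>
    rw [show 2*(n+1) = (2*n+1)+1 by ring, Finset.sum_range_succ, Finset.sum_range_succ,
      Finset.sum_range_succ, ih, add_assoc]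

lemma Pmat_even (m : ℕ) (f g : Fin m → ℂ → ℂ) (h : ℂ → ℂ) (u : Fin (m+1) → ℂ)
    (p : Fin (m+1)) (j : ℕ) (hjm : j < m) (hj : 2*j < 2*m+1) :
    Pmat m f g h u p ⟨2*j, hj⟩ = pcA m f g u p ⟨j, hjm⟩ := by
  simp only [Pmat]
  rw [Finset.sum_eq_single ⟨j, hjm⟩]
  · have h1 : ¬ (2*j = 2*j+1) := by omega
    have h2 : ¬ (2*j = 2*m) := by omega
    simp [h1, h2]
  · intro k _ hk
    have h1 : ¬ (2*j = 2*(k:ℕ)) := by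
      intro hc; exact hk (Fin.ext (by simp; omega))
    have h2 : ¬ (2*j = 2*(k:ℕ)+1) := by omega
    simp [h1, h2]
  · simp

lemma Pmat_odd (m : ℕ) (f g : Fin m → ℂ → ℂ) (h : ℂ → ℂ) (u : Fin (m+1) → ℂ)
    (p : Fin (m+1)) (j : ℕ) (hjm : j < m) (hj : 2*j+1 < 2*m+1) :
    Pmat m f g h u p ⟨2*j+1, hj⟩ = pcB m f g u p ⟨j, hjm⟩ := by
  simp only [Pmat]
  rw [Finset.sum_eq_single ⟨j, hjm⟩]
  · have h1 : ¬ (2*j+1 = 2*j) := by omega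
    have h2 : ¬ (2*j+1 = 2*m) := by omega
    simp [h1, h2]
  · intro k _ hk
    have h1 : ¬ (2*j+1 = 2*(k:ℕ)) := by omega
    have h2 : ¬ (2*j+1 = 2*(k:ℕ)+1) := by
      intro hc; exact hk (Fin.ext (by simp; omega))
    simp [h1, h2]
    intro hc; exact absurd (Fin.ext hc.symm) hk
  · simp

lemma Pmat_last (m : ℕ) (f g : Fin m → ℂ → ℂ) (h : ℂ → ℂ) (u : Fin (m+1) → ℂ)
    (p : Fin (m+1)) (hj : 2*m < 2*m+1) :
    Pmat m f g h u p ⟨2*m, hj⟩ = pcC m h u p := by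
  simp only [Pmat]
  rw [Finset.sum_eq_zero]
  · simp
  · intro k _
    have h1 : ¬ (2*m = 2*(k:ℕ)) := by have := k.isLt; omega
    have h2 : ¬ (2*m = 2*(k:ℕ)+1) := by omega
    simp [h1, h2]

lemma gram_eval (m : ℕ) (f g : Fin m → ℂ → ℂ) (h : ℂ → ℂ)
    (F G : Fin m → ℂ → ℂ) (H : ℂ → ℂ) (u : Fin (m+1) → ℂ) (p q : Fin (m+1)) :
    ∑ i : Fin (2*m+1), Pmat m f g h u p i * Pmat m F G H u q i
      = (∑ k : Fin m, (pcA m f g u p k * pcA m F G u q k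
          + pcB m f g u p k * pcB m F G u q k))
        + pcC m h u p * pcC m H u q := by
  set T : ℕ → ℂ := fun n => if hn : n < 2*m+1 then
      Pmat m f g h u p ⟨n, hn⟩ * Pmat m F G H u q ⟨n, hn⟩ else 0 with hT
  have step1 : ∑ i : Fin (2*m+1), Pmat m f g h u p i * Pmat m F G H u q i
      = ∑ n ∈ Finset.range (2*m+1), T n := by
    rw [← Fin.sum_univ_eq_sum_range T (2*m+1)]
    refine Finset.sum_congr rfl fun i _ => ?_
    rw [hT]
    simp only [i.isLt, dif_pos, Fin.eta]
  rw [step1, Finset.sum_range_succ, sum_range_two_mul]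
  have hTlast : T (2*m) = pcC m h u p * pcC m H u q := by
    have hlt : 2*m < 2*m+1 := by omega
    rw [hT]
    simp only [hlt, dif_pos]
    rw [Pmat_last m f g h u p hlt, Pmat_last m F G H u q hlt]
  have step2 : ∑ n ∈ Finset.range m, (T (2*n) + T (2*n+1))
      = ∑ k : Fin m, (pcA m f g u p k * pcA m F G u q k
          + pcB m f g u p k * pcB m F G u q k) := by
    rw [← Fin.sum_univ_eq_sum_range (fun n => T (2*n) + T (2*n+1)) m]
    refine Finset.sum_congr rfl fun k _ => ?_
    have h1 : 2*(k:ℕ) < 2*m+1 := by have := k.isLt; omega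
    have h2 : 2*(k:ℕ)+1 < 2*m+1 := by have := k.isLt; omega
    rw [hT]
    simp only [h1, h2, dif_pos]
    rw [Pmat_even m f g h u p (k:ℕ) k.isLt h1, Pmat_even m F G H u q (k:ℕ) k.isLt h1,
      Pmat_odd m f g h u p (k:ℕ) k.isLt h2, Pmat_odd m F G H u q (k:ℕ) k.isLt h2,
      Fin.eta]
  rw [hTlast, step2]

lemma Cex_self (m : ℕ) (p : Fin (m+1)) (u : Fin (m+1) → ℂ) :
    Cex m (p:ℕ) p u = Cprod (m+1) ((p:ℕ)+1) u := by
  unfold Cex Cprod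
  congr 1
  ext j
  simp only [Finset.mem_erase, Finset.mem_filter, Finset.mem_univ, true_and, and_true,
    ne_eq, Fin.ext_iff]
  omega

lemma Cex_succ (m k : ℕ) (p : Fin (m+1)) (u : Fin (m+1) → ℂ) (hk : k < m+1)
    (hne : k ≠ (p:ℕ)) :
    Cex m k p u = Complex.cos (u ⟨k, hk⟩) * Cex m (k+1) p u := by
  unfold Cex
  have hset : (Finset.univ.filter (fun j : Fin (m+1) => k ≤ (j:ℕ))).erase p
      = insert (⟨k, hk⟩ : Fin (m+1))
          ((Finset.univ.filter (fun j : Fin (m+1) => k+1 ≤ (j:ℕ))).erase p) := by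
    ext j
    simp only [Finset.mem_erase, Finset.mem_filter, Finset.mem_univ, true_and, and_true,
      Finset.mem_insert, ne_eq, Fin.ext_iff]
    omega
  rw [hset, Finset.prod_insert]
  simp only [Finset.mem_erase, Finset.mem_filter, Finset.mem_univ, true_and, and_true]
  intro hmem
  omega

lemma sq_deriv_rel {U : Set ℂ} (hUo : IsOpen U) {t : ℂ} (ht : t ∈ U) {Fk fk : ℂ → ℂ}
    (hFd : DifferentiableOn ℂ Fk U) (hfd : DifferentiableOn ℂ fk U) (c Zp : ℂ)
    (heq : ∀ s ∈ U, (Fk s)^2 = c + (fk s)^2 - Zp * (Complex.cos s)^2) :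
    Fk t * deriv Fk t = fk t * deriv fk t + Zp * (Complex.cos t * Complex.sin t) := by
  have hFt : HasDerivAt Fk (deriv Fk t) t :=
    (hFd.differentiableAt (hUo.mem_nhds ht)).hasDerivAt
  have hft : HasDerivAt fk (deriv fk t) t :=
    (hfd.differentiableAt (hUo.mem_nhds ht)).hasDerivAt
  have h1 : HasDerivAt (fun s => (Fk s)^2) (2 * Fk t * deriv Fk t) t := by
    have := hFt.fun_pow 2
    simpa using this
  have h2 : HasDerivAt (fun s => c + (fk s)^2 - Zp * (Complex.cos s)^2)
      (2 * fk t * deriv fk t - Zp * (2 * Complex.cos t * (-Complex.sin t))) t := by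
    have ha := ((hasDerivAt_const t c).fun_add (by simpa using hft.fun_pow 2))
    have hb := ((Complex.hasDerivAt_cos t).fun_pow 2).const_mul Zp
    have := ha.fun_sub hb
    simpa [mul_comm, mul_assoc, mul_left_comm] using this
  have hEv : (fun s => (Fk s)^2) =ᶠ[nhds t] (fun s => c + (fk s)^2 - Zp * (Complex.cos s)^2) :=
    Filter.eventuallyEq_of_mem (hUo.mem_nhds ht) heq
  have h2' : HasDerivAt (fun s => (Fk s)^2)
      (2 * fk t * deriv fk t - Zp * (2 * Complex.cos t * (-Complex.sin t))) t :=
    h2.congr_of_eventuallyEq hEv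
  have := h1.unique h2'
  linear_combination this / 2

lemma cdot_petL (m : ℕ) (f g F G : Fin m → ℂ → ℂ) (h H : ℂ → ℂ)
    (u : Fin (m+1) → ℂ) (v w : Fin (m+1) → ℂ) :
    cdot (petL m f g h u v) (petL m F G H u w)
      = ∑ p : Fin (m+1), ∑ q : Fin (m+1), v p * w q *
          ∑ i : Fin (2*m+1), Pmat m f g h u p i * Pmat m F G H u q i := by
  unfold cdot petL
  simp only [ContinuousLinearMap.pi_apply, ContinuousLinearMap.sum_apply,
    ContinuousLinearMap.smul_apply, ContinuousLinearMap.proj_apply, smul_eq_mul]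
  refine Eq.trans (Finset.sum_congr rfl fun i _ => Finset.sum_mul_sum _ _ _ _) ?_
  rw [Finset.sum_comm]
  refine Finset.sum_congr rfl fun p _ => ?_
  rw [Finset.sum_comm]
  refine Finset.sum_congr rfl fun q _ => ?_
  rw [Finset.mul_sum]
  refine Finset.sum_congr rfl fun i _ => ?_
  ring

/-- the general `(n−1)`-parameter Peterson family (here `n = m+1 ≥ 2`):
with `z₀ := 0` and the stated relations between `(F, G, H)` and `(f, g, h)`,
the maps `Y` and `Ỹ` have the same first fundamental form. -/
theorem stmt7 (m : ℕ) (hm : 1 ≤ m)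
    (U : Fin (m+1) → Set ℂ) (hU : ∀ k, IsOpen (U k))
    (f g F G : Fin m → ℂ → ℂ) (h H : ℂ → ℂ)
    (hf : ∀ k : Fin m, DifferentiableOn ℂ (f k) (U k.castSucc))
    (hg : ∀ k : Fin m, DifferentiableOn ℂ (g k) (U k.castSucc))
    (hh : DifferentiableOn ℂ h (U (Fin.last m)))
    (hF : ∀ k : Fin m, DifferentiableOn ℂ (F k) (U k.castSucc))
    (hG : ∀ k : Fin m, DifferentiableOn ℂ (G k) (U k.castSucc))
    (hH : DifferentiableOn ℂ H (U (Fin.last m)))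
    (z : Fin m → ℂ)
    (Z : Fin (m+1) → ℂ) (hZ0 : Z 0 = 0) (hZs : ∀ k : Fin m, Z k.succ = z k)
    (heqF : ∀ k : Fin m, ∀ t ∈ U k.castSucc,
      (F k t)^2 = Z k.succ + (f k t)^2 - Z k.castSucc * (Complex.cos t)^2)
    (heqG : ∀ k : Fin m, ∀ t ∈ U k.castSucc,
      (deriv (F k) t)^2 + (F k t)^2 * (deriv (G k) t)^2
        = (deriv (f k) t)^2 + (f k t)^2 * (deriv (g k) t)^2
          - Z k.castSucc * (Complex.sin t)^2)
    (heqH : ∀ t ∈ U (Fin.last m),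
      (deriv H t)^2 = (deriv h t)^2 - Z (Fin.last m) * (Complex.sin t)^2) :
    ∀ u : Fin (m+1) → ℂ, (∀ k, u k ∈ U k) →
      ∀ v w : Fin (m+1) → ℂ,
        cdot (fderiv ℂ (petY m f g h) u v) (fderiv ℂ (petY m f g h) u w)
          = cdot (fderiv ℂ (petY m F G H) u v) (fderiv ℂ (petY m F G H) u w) := by
  intro u hu v w
  have hfd : ∀ k : Fin m, DifferentiableAt ℂ (f k) (u k.castSucc) :=
    fun k => (hf k).differentiableAt ((hU k.castSucc).mem_nhds (hu k.castSucc))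
  have hgd : ∀ k : Fin m, DifferentiableAt ℂ (g k) (u k.castSucc) :=
    fun k => (hg k).differentiableAt ((hU k.castSucc).mem_nhds (hu k.castSucc))
  have hhd : DifferentiableAt ℂ h (u (Fin.last m)) :=
    hh.differentiableAt ((hU (Fin.last m)).mem_nhds (hu (Fin.last m)))
  have hFd : ∀ k : Fin m, DifferentiableAt ℂ (F k) (u k.castSucc) :=
    fun k => (hF k).differentiableAt ((hU k.castSucc).mem_nhds (hu k.castSucc))
  have hGd : ∀ k : Fin m, DifferentiableAt ℂ (G k) (u k.castSucc) :=
    fun k => (hG k).differentiableAt ((hU k.castSucc).mem_nhds (hu k.castSucc))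
  have hHd : DifferentiableAt ℂ H (u (Fin.last m)) :=
    hH.differentiableAt ((hU (Fin.last m)).mem_nhds (hu (Fin.last m)))
  rw [(petY_hasFDerivAt m f g h u hfd hgd hhd).fderiv,
      (petY_hasFDerivAt m F G H u hFd hGd hHd).fderiv,
      cdot_petL, cdot_petL]
  have hFF' : ∀ k : Fin m,
      F k (u k.castSucc) * deriv (F k) (u k.castSucc)
        = f k (u k.castSucc) * deriv (f k) (u k.castSucc)
          + Z k.castSucc * (Complex.cos (u k.castSucc) * Complex.sin (u k.castSucc)) :=
    fun k => sq_deriv_rel (hU k.castSucc) (hu k.castSucc) (hF k) (hf k)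
      (Z k.succ) (Z k.castSucc) (heqF k)
  have core : ∀ p q : Fin (m+1), (p:ℕ) ≤ (q:ℕ) →
      (∑ k : Fin m, (pcA m f g u p k * pcA m f g u q k
          + pcB m f g u p k * pcB m f g u q k)) + pcC m h u p * pcC m h u q
      = (∑ k : Fin m, (pcA m F G u p k * pcA m F G u q k
          + pcB m F G u p k * pcB m F G u q k)) + pcC m H u p * pcC m H u q := by
    intro p q hpq
    have hqm : (q:ℕ) < m+1 := q.isLt
    have hplt : (p:ℕ) < m+1 := p.isLt
    set W : ℕ → ℂ := fun j => if hj : j < m+1 then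
        Z ⟨j, hj⟩ * (Cex m j p u * Cex m j q u) else 0 with hW
    set d' : ℕ → ℂ := fun n => if n < (p:ℕ) then
        Complex.sin (u p) * Complex.sin (u q) * (W (n+1) - W n)
        else if n = (p:ℕ) then
          -(Complex.sin (u p) * Complex.sin (u q) * W (p:ℕ)) else 0 with hd'
    have hdk : ∀ k : Fin m,
        (pcA m F G u p k * pcA m F G u q k + pcB m F G u p k * pcB m F G u q k)
        - (pcA m f g u p k * pcA m f g u q k + pcB m f g u p k * pcB m f g u q k)
        = d' (k:ℕ) := by
      intro k
      have hk0 : (k:ℕ) < m+1 := by have := k.isLt; omega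
      have hk1 : (k:ℕ)+1 < m+1 := by have := k.isLt; omega
      have t1 : Complex.sin (g k (u k.castSucc))^2 + Complex.cos (g k (u k.castSucc))^2 = 1 :=
        Complex.sin_sq_add_cos_sq _
      have t2 : Complex.sin (G k (u k.castSucc))^2 + Complex.cos (G k (u k.castSucc))^2 = 1 :=
        Complex.sin_sq_add_cos_sq _
      rcases lt_trichotomy ((k:ℕ)) ((p:ℕ)) with hk | hk | hk
      · -- telescoping case
        have h1 : ¬((p:ℕ) = (k:ℕ)) := by omega
        have h2 : (k:ℕ)+1 ≤ (p:ℕ) := hk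
        have h3 : ¬((q:ℕ) = (k:ℕ)) := by omega
        have h4 : (k:ℕ)+1 ≤ (q:ℕ) := by omega
        have hFk := heqF k (u k.castSucc) (hu k.castSucc)
        rw [hd']
        simp only [pcA, pcB, if_pos h2, if_pos h4, if_neg h1, if_neg h3, zero_add, if_pos hk]
        rw [hW]
        simp only [dif_pos hk0, dif_pos hk1]
        rw [Cex_succ m (k:ℕ) p u hk0 (by omega), Cex_succ m (k:ℕ) q u hk0 (by omega)]
        simp only [show (⟨(k:ℕ)+1, hk1⟩ : Fin (m+1)) = k.succ from rfl,
          show (⟨(k:ℕ), hk0⟩ : Fin (m+1)) = k.castSucc from rfl]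
        linear_combination (Complex.sin (u p) * Complex.sin (u q) * Cex m ((k:ℕ)+1) p u
              * Cex m ((k:ℕ)+1) q u) * hFk
          + (Complex.sin (u p) * Complex.sin (u q) * Cex m ((k:ℕ)+1) p u
              * Cex m ((k:ℕ)+1) q u * (F k (u k.castSucc))^2) * t2
          - (Complex.sin (u p) * Complex.sin (u q) * Cex m ((k:ℕ)+1) p u
              * Cex m ((k:ℕ)+1) q u * (f k (u k.castSucc))^2) * t1
      · -- boundary case k = p
        have hp : p = k.castSucc := Fin.ext (by simp [← hk])
        have hnk : ¬((k:ℕ) < (p:ℕ)) := by omega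
        have hup : u p = u k.castSucc := by rw [hp]
        rw [hd']
        simp only [if_neg hnk, if_pos hk]
        rcases lt_or_eq_of_le hpq with hlt | heqpq
        · -- p < q : mixed term
          have h1 : ((p:ℕ) = (k:ℕ)) := hk.symm
          have h2 : ¬((k:ℕ)+1 ≤ (p:ℕ)) := by omega
          have h3 : ¬((q:ℕ) = (k:ℕ)) := by omega
          have h4 : (k:ℕ)+1 ≤ (q:ℕ) := by omega
          simp only [pcA, pcB, if_pos h1, if_pos h4, if_neg h2, if_neg h3, add_zero, zero_add]
          have hWp : W (p:ℕ) = Z k.castSucc * (Cprod (m+1) ((k:ℕ)+1) u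
              * (Complex.cos (u k.castSucc) * Cex m ((k:ℕ)+1) q u)) := by
            rw [hW]
            simp only [dif_pos hplt]
            rw [Cex_self m p u, Cex_succ m (p:ℕ) q u hplt (by omega)]
            simp only [show (⟨(p:ℕ), hplt⟩ : Fin (m+1)) = p from rfl, hp, Fin.coe_castSucc]
            rfl
          rw [hWp, hup]
          have hff := hFF' k
          linear_combination
            (-(Complex.sin (u q) * Cprod (m+1) ((k:ℕ)+1) u * Cex m ((k:ℕ)+1) q u)) * hff
            + (-(Complex.sin (u q) * Cprod (m+1) ((k:ℕ)+1) u * Cex m ((k:ℕ)+1) q u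
                * F k (u k.castSucc) * deriv (F k) (u k.castSucc))) * t2
            + (Complex.sin (u q) * Cprod (m+1) ((k:ℕ)+1) u * Cex m ((k:ℕ)+1) q u
                * f k (u k.castSucc) * deriv (f k) (u k.castSucc)) * t1
        · -- p = q = k : diagonal
          have hq : q = k.castSucc := Fin.ext (by omega)
          have huq : u q = u k.castSucc := by rw [hq]
          have h1 : ((p:ℕ) = (k:ℕ)) := hk.symm
          have h1q : ((q:ℕ) = (k:ℕ)) := by omega
          have h2 : ¬((k:ℕ)+1 ≤ (p:ℕ)) := by omega
          have h2q : ¬((k:ℕ)+1 ≤ (q:ℕ)) := by omega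
          simp only [pcA, pcB, if_pos h1, if_pos h1q, if_neg h2, if_neg h2q, add_zero]
          have hWp : W (p:ℕ) = Z k.castSucc * (Cprod (m+1) ((k:ℕ)+1) u
              * Cprod (m+1) ((k:ℕ)+1) u) := by
            rw [hW]
            simp only [dif_pos hplt]
            rw [Cex_self m p u]
            have hpq2 : p = q := Fin.ext (by omega)
            rw [show Cex m (p:ℕ) q u = Cprod (m+1) ((p:ℕ)+1) u from by
              rw [hpq2, Cex_self m q u]]
            simp only [show (⟨(p:ℕ), hplt⟩ : Fin (m+1)) = p from rfl, hp, Fin.coe_castSucc]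
            rfl
          rw [hWp, hup, huq]
          have hGk := heqG k (u k.castSucc) (hu k.castSucc)
          linear_combination (Cprod (m+1) ((k:ℕ)+1) u)^2 * hGk
            + ((Cprod (m+1) ((k:ℕ)+1) u)^2 *
              ((deriv (F k) (u k.castSucc))^2
                + (F k (u k.castSucc))^2 * (deriv (G k) (u k.castSucc))^2)) * t2
            - ((Cprod (m+1) ((k:ℕ)+1) u)^2 *
              ((deriv (f k) (u k.castSucc))^2
                + (f k (u k.castSucc))^2 * (deriv (g k) (u k.castSucc))^2)) * t1
      · -- zero case k > p
        have h1 : ¬((p:ℕ) = (k:ℕ)) := by omega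
        have h2 : ¬((k:ℕ)+1 ≤ (p:ℕ)) := by omega
        have hnk : ¬((k:ℕ) < (p:ℕ)) := by omega
        have hne : ¬((k:ℕ) = (p:ℕ)) := by omega
        rw [hd']
        simp only [pcA, pcB, if_neg h1, if_neg h2, if_neg hnk, if_neg hne, add_zero]
        ring
    symm
    rw [← sub_eq_zero]
    have hsplit : ((∑ k : Fin m, (pcA m F G u p k * pcA m F G u q k
          + pcB m F G u p k * pcB m F G u q k)) + pcC m H u p * pcC m H u q)
        - ((∑ k : Fin m, (pcA m f g u p k * pcA m f g u q k
          + pcB m f g u p k * pcB m f g u q k)) + pcC m h u p * pcC m h u q)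
        = (∑ n ∈ Finset.range m, d' n)
          + (pcC m H u p * pcC m H u q - pcC m h u p * pcC m h u q) := by
      have h1 : (∑ k : Fin m, (pcA m F G u p k * pcA m F G u q k
            + pcB m F G u p k * pcB m F G u q k))
          - (∑ k : Fin m, (pcA m f g u p k * pcA m f g u q k
            + pcB m f g u p k * pcB m f g u q k)) = ∑ n ∈ Finset.range m, d' n := by
        rw [← Finset.sum_sub_distrib,
          Finset.sum_congr rfl (fun k _ => hdk k), Fin.sum_univ_eq_sum_range d' m]
      linear_combination h1
    rw [hsplit]
    have hW0 : W 0 = 0 := by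
      rw [hW]
      simp only [dif_pos (by omega : 0 < m+1)]
      rw [show (⟨0, by omega⟩ : Fin (m+1)) = 0 from rfl, hZ0]
      ring
    rcases lt_or_eq_of_le (by omega : (p:ℕ) ≤ m) with hpm | hpm
    · -- p is not the last index
      have hsub : Finset.range ((p:ℕ)+1) ⊆ Finset.range m := by
        intro n hn
        simp only [Finset.mem_range] at *
        omega
      have hzero : ∀ n ∈ Finset.range m, n ∉ Finset.range ((p:ℕ)+1) → d' n = 0 := by
        intro n _ hn
        simp only [Finset.mem_range] at hn
        rw [hd']
        simp only [if_neg (by omega : ¬(n < (p:ℕ))), if_neg (by omega : ¬(n = (p:ℕ)))]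
      rw [← Finset.sum_subset hsub hzero, Finset.sum_range_succ]
      have hdiag : d' (p:ℕ) = -(Complex.sin (u p) * Complex.sin (u q) * W (p:ℕ)) := by
        rw [hd']
        simp
      have hlow1 : ∀ n ∈ Finset.range (p:ℕ), d' n
          = Complex.sin (u p) * Complex.sin (u q) * (W (n+1) - W n) := by
        intro n hn
        simp only [Finset.mem_range] at hn
        rw [hd']
        simp only [if_pos hn]
      have hlow : ∑ n ∈ Finset.range (p:ℕ), d' n
          = Complex.sin (u p) * Complex.sin (u q) * (W (p:ℕ) - W 0) := by
        rw [Finset.sum_congr rfl hlow1, ← Finset.mul_sum, Finset.sum_range_sub W (p:ℕ)]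
      have hC1 : pcC m H u p = 0 := by
        rw [pcC, if_neg (by omega : ¬((p:ℕ) = m))]
      have hC2 : pcC m h u p = 0 := by
        rw [pcC, if_neg (by omega : ¬((p:ℕ) = m))]
      rw [hdiag, hlow, hW0, hC1, hC2]
      ring
    · -- p = q = last
      have hqm : (q:ℕ) = m := by omega
      have hpl : p = Fin.last m := Fin.ext (by simpa using hpm)
      have hql : q = Fin.last m := Fin.ext (by simpa using hqm)
      have hlow1 : ∀ n ∈ Finset.range m, d' n
          = Complex.sin (u p) * Complex.sin (u q) * (W (n+1) - W n) := by
        intro n hn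
        simp only [Finset.mem_range] at hn
        rw [hd']
        simp only [if_pos (by omega : n < (p:ℕ))]
      have hlow : ∑ n ∈ Finset.range m, d' n
          = Complex.sin (u p) * Complex.sin (u q) * (W m - W 0) := by
        rw [Finset.sum_congr rfl hlow1, ← Finset.mul_sum, Finset.sum_range_sub W m]
      have hWm : W m = Z (Fin.last m) := by
        rw [hW]
        simp only [dif_pos (by omega : m < m+1)]
        rw [show (⟨m, by omega⟩ : Fin (m+1)) = Fin.last m from rfl, hpl, hql]
        rw [show Cex m m (Fin.last m) u = Cex m ((Fin.last m : Fin (m+1)):ℕ) (Fin.last m) u from by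
          rw [Fin.val_last], Cex_self m (Fin.last m) u, Fin.val_last, Cprod_top]
        ring
      have hC1 : pcC m H u p = deriv H (u (Fin.last m)) := by
        rw [pcC, if_pos hpm, hpl]
      have hC2 : pcC m h u p = deriv h (u (Fin.last m)) := by
        rw [pcC, if_pos hpm, hpl]
      have hC1q : pcC m H u q = deriv H (u (Fin.last m)) := by
        rw [pcC, if_pos hqm, hql]
      have hC2q : pcC m h u q = deriv h (u (Fin.last m)) := by
        rw [pcC, if_pos hqm, hql]
      have hHt := heqH (u (Fin.last m)) (hu (Fin.last m))
      rw [hlow, hWm, hW0, hC1, hC2, hC1q, hC2q, hpl, hql]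
      linear_combination hHt
  refine Finset.sum_congr rfl fun p _ => Finset.sum_congr rfl fun q _ => ?_
  congr 1
  rw [gram_eval m f g h f g h u p q, gram_eval m F G H F G H u p q]
  have Esymm : ∀ (f₁ g₁ : Fin m → ℂ → ℂ) (h₁ : ℂ → ℂ) (p q : Fin (m+1)),
      (∑ k : Fin m, (pcA m f₁ g₁ u p k * pcA m f₁ g₁ u q k
          + pcB m f₁ g₁ u p k * pcB m f₁ g₁ u q k)) + pcC m h₁ u p * pcC m h₁ u q
      = (∑ k : Fin m, (pcA m f₁ g₁ u q k * pcA m f₁ g₁ u p k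
          + pcB m f₁ g₁ u q k * pcB m f₁ g₁ u p k)) + pcC m h₁ u q * pcC m h₁ u p := by
    intro f₁ g₁ h₁ p q
    refine congrArg₂ (· + ·) (Finset.sum_congr rfl fun k _ => by ring) (by ring)
  rcases le_total ((p:ℕ)) ((q:ℕ)) with hpq | hpq
  · exact core p q hpq
  · rw [Esymm f g h p q, Esymm F G H p q]
    exact core q p hpq
end
end

section
/- Let n ≥ 2. For j = 1,…,n let hⱼ⁰ ∈ ℂ and wⱼ ∈ ℂⁿ⁻¹, and suppose the Gauß equations hold: hⱼ⁰hₖ⁰ = ⟨wⱼ, wₖ⟩ for all j ≠ k. Set hⱼ := (i·hⱼ⁰, wⱼ) ∈ ℂⁿ. Then the vectors hⱼ are pairwise orthogonal for the complex bilinear dot product: ⟨hⱼ, hₖ⟩ = 0 for j ≠ k; and if moreover h₁,…,hₙ are linearly independent, then each hⱼ is non-isotropic: ⟨hⱼ, hⱼ⟩ ≠ 0 for every j. -/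
noncomputable section

open Complex Finset

lemma cdot_cons {m : ℕ} (a b : ℂ) (x y : Fin m → ℂ) :
    cdot (Fin.cons a x) (Fin.cons b y) = a * b + cdot x y := by
  simp [cdot, Fin.sum_univ_succ]

/-- cdot with fixed first arg as a linear map in the second. -/
def cdotL {m : ℕ} (x : Fin m → ℂ) : (Fin m → ℂ) →ₗ[ℂ] ℂ where
  toFun y := cdot x y
  map_add' y z := by simp [cdot, mul_add, Finset.sum_add_distrib]
  map_smul' c y := by simp [cdot, Finset.mul_sum, mul_left_comm]

lemma cdot_single {m : ℕ} (x : Fin m → ℂ) (i : Fin m) :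
    cdot x (Pi.single i 1) = x i := by
  simp [cdot, Pi.single_apply]

/-- with `n = m+2 ≥ 2`, if the Gauß equations `hⱼ⁰hₖ⁰ = ⟨wⱼ, wₖ⟩` hold
for `j ≠ k`, then the joined vectors `hⱼ = (i·hⱼ⁰, wⱼ) ∈ ℂⁿ` are pairwise orthogonal
for the complex bilinear dot product, and if they are moreover linearly independent
then each is non-isotropic. -/
theorem stmt8 (m : ℕ) (h0 : Fin (m+2) → ℂ) (w : Fin (m+2) → Fin (m+1) → ℂ)
    (hGauss : ∀ j k, j ≠ k → h0 j * h0 k = cdot (w j) (w k))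
    (H : Fin (m+2) → Fin (m+2) → ℂ)
    (hH : ∀ j, H j = Fin.cons (Complex.I * h0 j) (w j)) :
    (∀ j k, j ≠ k → cdot (H j) (H k) = 0) ∧
    (LinearIndependent ℂ H → ∀ j, cdot (H j) (H j) ≠ 0) := by
  have horth : ∀ j k, j ≠ k → cdot (H j) (H k) = 0 := by
    intro j k hjk
    rw [hH j, hH k, cdot_cons, ← hGauss j k hjk]
    ring_nf
    rw [Complex.I_sq]
    ring
  refine ⟨horth, ?_⟩
  intro hli j hiso
  -- H is a basis
  have hcard : Fintype.card (Fin (m+2)) = Module.finrank ℂ (Fin (m+2) → ℂ) := by simp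
  let b := basisOfLinearIndependentOfCardEqFinrank hli hcard
  have hb : ∀ k, b k = H k := fun k =>
    coe_basisOfLinearIndependentOfCardEqFinrank hli hcard ▸ rfl
  have hzero : cdotL (H j) = 0 := by
    apply b.ext
    intro k
    rw [hb k]
    by_cases hk : j = k
    · subst hk; exact hiso
    · exact horth j k hk
  have hHj : H j = 0 := by
    funext i
    have := congrFun (congrArg (fun f => f.toFun) hzero) (Pi.single i 1)
    have h2 : cdot (H j) (Pi.single i 1) = 0 := this
    simpa [cdot_single] using h2
  exact hli.ne_zero j hHj
end
end

section
/- Let n ≥ 3, p ≥ 1, let U ⊆ ℂⁿ be open, and let hⱼ^α : U → ℂ (1 ≤ j ≤ n, 1 ≤ α ≤ p), Γˡ_{jk} : U → ℂ and η^α_{βl} : U → ℂ be differentiable functions with η^α_{βl} = −η^β_{αl}. Define R_{jkjk} := ∑_{α=1}^{p} hⱼ^α hₖ^α. Assume the Codazzi–Mainardi–Peterson equations: ∂ₗhⱼ^α = Γʲ_{jl}hⱼ^α − Γˡ_{jj}hₗ^α − ∑_β hⱼ^β η^α_{βl} for all j ≠ l and all α. Then for all distinct j, k, l: ∂ₗR_{jkjk}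 = (Γʲ_{jl} + Γᵏ_{kl})·R_{jkjk} − Γˡ_{kk}·R_{jljl} − Γˡ_{jj}·R_{klkl}, where ∂ₗ denotes the directional derivative along the l-th standard basis vector of ℂⁿ. -/
noncomputable section

open Complex Finset

/-- Directional (partial) derivative of a scalar function on ℂⁿ along the
l-th standard basis vector. -/
def pdS {n : ℕ} (l : Fin n) (F : (Fin n → ℂ) → ℂ) : (Fin n → ℂ) → ℂ :=
  fun u => fderiv ℂ F u (Pi.single l 1)

/-- via the Codazzi–Mainardi–Peterson equations, the derivative of the
Gauß equations `R_{jkjk} = ∑_α hⱼ^α hₖ^α` gives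
`∂ₗR_{jkjk} = (Γʲ_{jl} + Γᵏ_{kl})R_{jkjk} − Γˡ_{kk}R_{jljl} − Γˡ_{jj}R_{klkl}`.
Here `Γ l j k` denotes `Γˡ_{jk}` and `η α β l` denotes `η^α_{βl}`. -/
theorem stmt11 (n p : ℕ) (hn : 3 ≤ n) (hp : 1 ≤ p)
    (U : Set (Fin n → ℂ)) (hU : IsOpen U)
    (h : Fin n → Fin p → (Fin n → ℂ) → ℂ)
    (Γ : Fin n → Fin n → Fin n → (Fin n → ℂ) → ℂ)
    (η : Fin p → Fin p → Fin n → (Fin n → ℂ) → ℂ)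
    (hhdiff : ∀ j α, DifferentiableOn ℂ (h j α) U)
    (hΓdiff : ∀ l j k, DifferentiableOn ℂ (Γ l j k) U)
    (hηdiff : ∀ α β l, DifferentiableOn ℂ (η α β l) U)
    (hηanti : ∀ α β l u, η α β l u = - η β α l u)
    (hCMP : ∀ j l : Fin n, j ≠ l → ∀ α : Fin p, ∀ u ∈ U,
      pdS l (h j α) u = Γ j j l u * h j α u - Γ l j j u * h l α u
        - ∑ β, h j β u * η α β l u)
    (R : Fin n → Fin n → (Fin n → ℂ) → ℂ)
    (hR : ∀ j k u, R j k u = ∑ α, h j α u * h k α u) :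
    ∀ j k l : Fin n, j ≠ k → j ≠ l → k ≠ l → ∀ u ∈ U,
      pdS l (R j k) u = (Γ j j l u + Γ k k l u) * R j k u
        - Γ l k k u * R j l u - Γ l j j u * R k l u := by

  intro j k l hjk hjl hkl u hu
  have hD : ∀ (j : Fin n) (α : Fin p), DifferentiableAt ℂ (h j α) u :=
    fun j α => (hhdiff j α).differentiableAt (hU.mem_nhds hu)
  -- Step 1: product/sum rule
  have step1 : pdS l (R j k) u
      = ∑ α, (h j α u * pdS l (h k α) u + h k α u * pdS l (h j α) u) := by
    have hRf : R j k = fun v => ∑ α, h j α v * h k α v := funext (hR j k)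
    have hF : HasFDerivAt (fun v => ∑ α : Fin p, h j α v * h k α v)
        (∑ α : Fin p, (h j α u • fderiv ℂ (h k α) u + h k α u • fderiv ℂ (h j α) u)) u :=
      HasFDerivAt.fun_sum fun α _ =>
        ((hD j α).hasFDerivAt.mul (hD k α).hasFDerivAt)
    unfold pdS
    rw [hRf, hF.fderiv]
    simp [ContinuousLinearMap.sum_apply, smul_eq_mul]
  rw [step1]
  -- Step 2: substitute the CMP equations
  have step2 : ∑ α, (h j α u * pdS l (h k α) u + h k α u * pdS l (h j α) u)
      = ∑ α, (h j α u * (Γ k k l u * h k α u - Γ l k k u * h l α u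
            - ∑ β, h k β u * η α β l u)
          + h k α u * (Γ j j l u * h j α u - Γ l j j u * h l α u
            - ∑ β, h j β u * η α β l u)) := by
    refine Finset.sum_congr rfl fun α _ => ?_
    rw [hCMP k l hkl α u hu, hCMP j l hjl α u hu]
  rw [step2]
  -- antisymmetry cancellation
  have hS : ∑ α, ∑ β, (h j α u * (h k β u * η α β l u)
        + h k α u * (h j β u * η α β l u)) = 0 := by
    have hc : ∑ α, ∑ β, h k α u * (h j β u * η α β l u)
        = ∑ α, ∑ β, h k β u * (h j α u * η β α l u) :=
      Finset.sum_comm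
    have hd : ∑ α, ∑ β, h k β u * (h j α u * η β α l u)
        = - ∑ α, ∑ β, h j α u * (h k β u * η α β l u) := by
      rw [← Finset.sum_neg_distrib]
      refine Finset.sum_congr rfl fun α _ => ?_
      rw [← Finset.sum_neg_distrib]
      refine Finset.sum_congr rfl fun β _ => ?_
      rw [hηanti β α l u]; ring
    simp only [Finset.sum_add_distrib]
    rw [hc, hd]
    ring
  -- Step 3: algebra
  have step3 : ∀ α : Fin p,
      h j α u * (Γ k k l u * h k α u - Γ l k k u * h l α u - ∑ β, h k β u * η α β l u)
        + h k α u * (Γ j j l u * h j α u - Γ l j j u * h l α u - ∑ β, h j β u * η α β l u)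
      = ((Γ j j l u + Γ k k l u) * (h j α u * h k α u)
          - Γ l k k u * (h j α u * h l α u) - Γ l j j u * (h k α u * h l α u))
        - ∑ β, (h j α u * (h k β u * η α β l u) + h k α u * (h j β u * η α β l u)) := by
    intro α
    rw [Finset.sum_add_distrib, ← Finset.mul_sum, ← Finset.mul_sum]
    ring
  calc ∑ α, (h j α u * (Γ k k l u * h k α u - Γ l k k u * h l α u
            - ∑ β, h k β u * η α β l u)
          + h k α u * (Γ j j l u * h j α u - Γ l j j u * h l α u
            - ∑ β, h j β u * η α β l u))
      = ∑ α, (((Γ j j l u + Γ k k l u) * (h j α u * h k α u)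
          - Γ l k k u * (h j α u * h l α u) - Γ l j j u * (h k α u * h l α u))
        - ∑ β, (h j α u * (h k β u * η α β l u) + h k α u * (h j β u * η α β l u))) :=
        Finset.sum_congr rfl fun α _ => step3 α
    _ = (∑ α, ((Γ j j l u + Γ k k l u) * (h j α u * h k α u)
          - Γ l k k u * (h j α u * h l α u) - Γ l j j u * (h k α u * h l α u)))
        - ∑ α, ∑ β, (h j α u * (h k β u * η α β l u) + h k α u * (h j β u * η α β l u)) :=
        Finset.sum_sub_distrib _ _
    _ = (Γ j j l u + Γ k k l u) * R j k u - Γ l k k u * R j l u - Γ l j j u * R k l u := by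
        rw [hS, sub_zero, hR j k u, hR j l u, hR k l u]
        simp [Finset.sum_sub_distrib, Finset.mul_sum]
end
end

section
/- Let n ≥ 3, let U ⊆ ℂⁿ be open, and let hⱼ⁰ : U → ℂ (1 ≤ j ≤ n) be differentiable nonvanishing functions, Γˡ_{jk} : U → ℂ differentiable, and g^{kl} : U → ℂ functions. Assume: (i) ∂ₗhⱼ⁰ = Γʲ_{jl}hⱼ⁰ − Γˡ_{jj}hₗ⁰ for all j ≠ l; (ii) ∂ₗΓᵏ_{jj} + Γᵏ_{jj}(Γᵏ_{kl} − Γʲ_{jl}) + Γˡ_{jj}Γᵏ_{ll} − g^{kl}hⱼ⁰hₗ⁰ = 0 for all distinct j, k, l. Define γ_{jk} := Γᵏ_{jj}·hₖ⁰/hⱼ⁰ for j ≠ k. Then for all distinct j, k, l: ∂ₗγ_{jk} = γ_{jk}γ_{jl} − γ_{jl}γ_{lk} − γ_{jk}γ_{kl} + g^{kl}hₖ⁰hₗ⁰ on U, where ∂ₗ denotes the directional derivative along the l-th standard basis vector of ℂⁿ. -/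
noncomputable section

open Complex Finset

/-- equation (gaj): from the Codazzi–Mainardi–Peterson equations (i)
of the quadric and the compatibility conditions (ii), the normalized Christoffel
symbols `γ_{jk} := Γᵏ_{jj}hₖ⁰/hⱼ⁰` satisfy
`∂ₗγ_{jk} = γ_{jk}γ_{jl} − γ_{jl}γ_{lk} − γ_{jk}γ_{kl} + g^{kl}hₖ⁰hₗ⁰`.
Here `Γ l j k` denotes `Γˡ_{jk}` and `gm k l` denotes `g^{kl}`. -/
theorem stmt14 (n : ℕ) (hn : 3 ≤ n)
    (U : Set (Fin n → ℂ)) (hU : IsOpen U)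
    (h0 : Fin n → (Fin n → ℂ) → ℂ)
    (Γ : Fin n → Fin n → Fin n → (Fin n → ℂ) → ℂ)
    (gm : Fin n → Fin n → (Fin n → ℂ) → ℂ)
    (hh0diff : ∀ j, DifferentiableOn ℂ (h0 j) U)
    (hh0ne : ∀ j, ∀ u ∈ U, h0 j u ≠ 0)
    (hΓdiff : ∀ l j k, DifferentiableOn ℂ (Γ l j k) U)
    (hCMP : ∀ j l : Fin n, j ≠ l → ∀ u ∈ U,
      pdS l (h0 j) u = Γ j j l u * h0 j u - Γ l j j u * h0 l u)
    (hcomp : ∀ j k l : Fin n, j ≠ k → j ≠ l → k ≠ l → ∀ u ∈ U,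
      pdS l (Γ k j j) u + Γ k j j u * (Γ k k l u - Γ j j l u)
        + Γ l j j u * Γ k l l u - gm k l u * h0 j u * h0 l u = 0)
    (γ : Fin n → Fin n → (Fin n → ℂ) → ℂ)
    (hγ : ∀ j k : Fin n, j ≠ k → ∀ u : Fin n → ℂ,
      γ j k u = Γ k j j u * h0 k u / h0 j u) :
    ∀ j k l : Fin n, j ≠ k → j ≠ l → k ≠ l → ∀ u ∈ U,
      pdS l (γ j k) u = γ j k u * γ j l u - γ j l u * γ l k u
        - γ j k u * γ k l u + gm k l u * h0 k u * h0 l u := by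
  intro j k l hjk hjl hkl u hu
  have hnb : U ∈ nhds u := hU.mem_nhds hu
  have hf : DifferentiableAt ℂ (Γ k j j) u := (hΓdiff k j j).differentiableAt hnb
  have hg : DifferentiableAt ℂ (h0 k) u := (hh0diff k).differentiableAt hnb
  have hp : DifferentiableAt ℂ (h0 j) u := (hh0diff j).differentiableAt hnb
  have hpu : h0 j u ≠ 0 := hh0ne j u hu
  have hku : h0 k u ≠ 0 := hh0ne k u hu
  have hlu : h0 l u ≠ 0 := hh0ne l u hu
  have hγfun : γ j k = fun x => Γ k j j x * h0 k x / h0 j x :=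
    funext fun x => hγ j k hjk x
  have Hmul : HasFDerivAt (fun x => Γ k j j x * h0 k x)
      (Γ k j j u • fderiv ℂ (h0 k) u + h0 k u • fderiv ℂ (Γ k j j) u) u :=
    hf.hasFDerivAt.mul hg.hasFDerivAt
  have Hinv : HasFDerivAt (fun x => (h0 j x)⁻¹)
      ((-(h0 j u ^ 2)⁻¹) • fderiv ℂ (h0 j) u) u :=
    (hasDerivAt_inv hpu).comp_hasFDerivAt u hp.hasFDerivAt
  have hγfun2 : γ j k = fun x => (Γ k j j x * h0 k x) * (h0 j x)⁻¹ :=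
    funext fun x => by rw [hγ j k hjk x, div_eq_mul_inv]
  have hval : pdS l (γ j k) u =
      (1 / h0 j u) * (Γ k j j u * pdS l (h0 k) u + h0 k u * pdS l (Γ k j j) u)
        - (Γ k j j u * h0 k u / h0 j u ^ 2) * pdS l (h0 j) u := by
    rw [hγfun2]
    unfold pdS
    rw [HasFDerivAt.fderiv (f := fun x => Γ k j j x * h0 k x * (h0 j x)⁻¹) (Hmul.mul Hinv)]
    simp only [ContinuousLinearMap.add_apply, ContinuousLinearMap.smul_apply,
      smul_eq_mul, one_div]
    field_simp
    ring
  have eg : pdS l (h0 k) u = Γ k k l u * h0 k u - Γ l k k u * h0 l u := hCMP k l hkl u hu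
  have ep : pdS l (h0 j) u = Γ j j l u * h0 j u - Γ l j j u * h0 l u := hCMP j l hjl u hu
  have ef : pdS l (Γ k j j) u = gm k l u * h0 j u * h0 l u
      - Γ k j j u * (Γ k k l u - Γ j j l u) - Γ l j j u * Γ k l l u := by
    linear_combination hcomp j k l hjk hjl hkl u hu
  rw [hval, eg, ep, ef, hγ j k hjk u, hγ j l hjl u, hγ l k hkl.symm u, hγ k l hkl u]
  field_simp
  ring
end
end
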